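/- arXiv:2210.11868 — 4 statements merged into one kernel-verified Lean document; each statement's English description precedes it below -/
import Mathlib

section
/- Let d ≥ 3, let ψ be a d-monotone Archimedean generator with pseudo-inverse φ, C = C_ψ, μ_C the associated measure, and let F_K^d(t) := μ_C({x ∈ [0,1]^d : C_ψ(x) ≤ t}) denote the Kendall distribution function of C. Then for every t ∈ (0,1): F_K^d(t) = D^−ψ^{(d−2)}(φ(t)) · ((−1)^{d−1}/(d−1)!) · φ(t)^{d−1} + ∑_{k=0}^{d−2} ψ^{(k)}(φ(t)) · ((−1)^k/k!) · φ(t)^k (with ψ^{(0)} := ψ, so the k = 0 summand equals t). Moreover, if ψ is strict then F_K^d(0) = 0, and if ψ is non-strict (φ(0) < ∞) then F_K^d(0) = D^−ψ^{(d−2)}(φ(0)) · ((−1)^{d−1}/(d−1)!) · φ(0)^{d−1}. -/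
open MeasureTheory Set Filter Topology
open scoped ENNReal NNReal Classical

noncomputable section

/-- Extension of a generator `ψ` to `[0,∞]` with the convention `ψ(∞) := 0`. -/
def psiExt (ψ : ℝ → ℝ) (z : ℝ≥0∞) : ℝ := if z = ∞ then 0 else ψ z.toReal

/-- The pseudo-inverse `φ(y) = inf {z ∈ [0,∞] : ψ(z) = y}` of a generator. -/
def pseudoInv (ψ : ℝ → ℝ) (y : ℝ) : ℝ≥0∞ := sInf {z : ℝ≥0∞ | psiExt ψ z = y}

/-- An Archimedean generator: `ψ : [0,∞) → [0,1]` is continuous, non-increasing,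
satisfies `ψ 0 = 1` and `ψ(z) → 0` as `z → ∞`, and is strictly decreasing on
`[0, inf {z ∈ [0,∞] : ψ z = 0}]`. -/
structure IsGenerator (ψ : ℝ → ℝ) : Prop where
  continuousOn : ContinuousOn ψ (Ici 0)
  mem_Icc : ∀ z : ℝ, 0 ≤ z → ψ z ∈ Icc (0 : ℝ) 1
  map_zero : ψ 0 = 1
  tendsto_atTop : Tendsto ψ atTop (𝓝 0)
  antitoneOn : AntitoneOn ψ (Ici 0)
  strictAnti : ∀ ⦃x y : ℝ⦄, 0 ≤ x → x < y → ENNReal.ofReal y ≤ pseudoInv ψ 0 → ψ y < ψ x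

/-- The left-hand derivative `D⁻f`. -/
def leftDeriv (f : ℝ → ℝ) (z : ℝ) : ℝ := derivWithin f (Iio z) z

/-- The right-hand derivative `D⁺f`. -/
def rightDeriv (f : ℝ → ℝ) (z : ℝ) : ℝ := derivWithin f (Ioi z) z

/-- A `d`-monotone Archimedean generator: the derivatives `ψ⁽ᵏ⁾` exist on `(0,∞)` for
`k = 1,…,d-2`, and `(-1)^(d-2) · ψ^(d-2)` is non-negative, non-increasing and convex
on `(0,∞)`. -/
structure IsdMonotoneGenerator (d : ℕ) (ψ : ℝ → ℝ) : Prop where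
  toIsGenerator : IsGenerator ψ
  differentiable : ∀ k : ℕ, k < d - 2 → ∀ z : ℝ, 0 < z → DifferentiableAt ℝ (deriv^[k] ψ) z
  nonneg : ∀ z : ℝ, 0 < z → 0 ≤ (-1 : ℝ) ^ (d - 2) * deriv^[d - 2] ψ z
  antitoneOn : AntitoneOn (fun z => (-1 : ℝ) ^ (d - 2) * deriv^[d - 2] ψ z) (Ioi 0)
  convexOn : ConvexOn ℝ (Ioi 0) (fun z => (-1 : ℝ) ^ (d - 2) * deriv^[d - 2] ψ z)

/-- The `d`-dimensional Archimedean copula generated by `ψ`: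
`C_ψ(x) = ψ(φ(x₁) + ⋯ + φ(x_d))` (with `ψ(∞) := 0`). -/
def archCopula (d : ℕ) (ψ : ℝ → ℝ) (x : Fin d → ℝ) : ℝ :=
  psiExt ψ (∑ i, pseudoInv ψ (x i))

/-- A generator is strict if `ψ(z) > 0` for all `z ≥ 0`. -/
def IsStrictGenerator (ψ : ℝ → ℝ) : Prop := ∀ z : ℝ, 0 ≤ z → 0 < ψ z

/-- The level set `L_t = {x ∈ [0,1]^d : C_ψ(x) = t}`. -/
def levelSet (d : ℕ) (ψ : ℝ → ℝ) (t : ℝ) : Set (Fin d → ℝ) :=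
  {x | (∀ i, x i ∈ Icc (0 : ℝ) 1) ∧ archCopula d ψ x = t}

/-- The Kendall distribution function `F_K^d(t) = μ_C({x ∈ [0,1]^d : C_ψ(x) ≤ t})`. -/
def kendallDF (d : ℕ) (ψ : ℝ → ℝ) (μ : Measure (Fin d → ℝ)) (t : ℝ) : ℝ :=
  (μ {x | (∀ i, x i ∈ Icc (0 : ℝ) 1) ∧ archCopula d ψ x ≤ t}).toReal

namespace KendallAux

variable {ψ : ℝ → ℝ}

theorem psiExt_ofReal (ψ : ℝ → ℝ) {z : ℝ} (hz : 0 ≤ z) :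
    psiExt ψ (ENNReal.ofReal z) = ψ z := by
  rw [psiExt, if_neg ENNReal.ofReal_ne_top, ENNReal.toReal_ofReal hz]

theorem psiExt_nonneg (hg : IsGenerator ψ) (z : ℝ≥0∞) : 0 ≤ psiExt ψ z := by
  rw [psiExt]
  split
  · exact le_refl _
  · exact (hg.mem_Icc _ ENNReal.toReal_nonneg).1

theorem continuous_psiExt (hg : IsGenerator ψ) : Continuous (psiExt ψ) := by
  rw [continuous_iff_continuousAt]
  intro x
  rcases eq_or_ne x ∞ with rfl | hx
  · -- at infinity
    have h0 : psiExt ψ ∞ = 0 := by simp [psiExt]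
    rw [ContinuousAt, h0]
    rw [Metric.tendsto_nhds]
    intro ε hε
    have := (hg.tendsto_atTop.eventually (Metric.ball_mem_nhds (0:ℝ) hε)).exists_forall_of_atTop
    obtain ⟨W, hW⟩ := this
    have hmem : Ioi (ENNReal.ofReal (max W 0)) ∈ 𝓝 (∞ : ℝ≥0∞) :=
      Ioi_mem_nhds (by simp [ENNReal.ofReal_lt_top])
    filter_upwards [hmem] with z hz
    rcases eq_or_ne z ∞ with rfl | hz'
    · simpa [psiExt] using hε
    · have hzR : max W 0 ≤ z.toReal := by
        rw [← ENNReal.ofReal_le_iff_le_toReal hz']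
        exact le_of_lt hz
      have := hW z.toReal (le_trans (le_max_left _ _) hzR)
      simpa [psiExt, hz', dist_eq_norm] using this
  · -- finite point
    have hev : ∀ᶠ z in 𝓝 x, psiExt ψ z = ψ z.toReal := by
      filter_upwards [IsOpen.mem_nhds ((isClosed_singleton (x := (∞:ℝ≥0∞))).isOpen_compl) hx] with z hz
      simp only [mem_compl_iff, mem_singleton_iff] at hz
      simp [psiExt, hz]
    refine ContinuousAt.congr ?_ (EventuallyEq.symm hev)
    have h1 : Tendsto (fun z : ℝ≥0∞ => z.toReal) (𝓝 x) (𝓝[Ici 0] x.toReal) := by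
      rw [tendsto_nhdsWithin_iff]
      exact ⟨ENNReal.tendsto_toReal hx, Eventually.of_forall fun z => ENNReal.toReal_nonneg⟩
    exact Tendsto.comp (hg.continuousOn.continuousWithinAt (mem_Ici.2 ENNReal.toReal_nonneg)) h1

theorem isClosed_level (hg : IsGenerator ψ) (y : ℝ) :
    IsClosed {z : ℝ≥0∞ | psiExt ψ z = y} :=
  isClosed_singleton.preimage (continuous_psiExt hg)

theorem level_nonempty_of_Ioc (hg : IsGenerator ψ) {y : ℝ} (hy : y ∈ Ioc (0:ℝ) 1) :
    ∃ z : ℝ, 0 ≤ z ∧ ψ z = y := by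
  obtain ⟨W, hW⟩ := (hg.tendsto_atTop.eventually
    (eventually_lt_nhds hy.1)).exists_forall_of_atTop
  have hW0 : ψ (max W 0) < y := hW _ (le_max_left _ _)
  have hsub : Icc (ψ (max W 0)) (ψ 0) ⊆ ψ '' Icc 0 (max W 0) :=
    intermediate_value_Icc' (le_max_right _ _)
      (hg.continuousOn.mono (fun z hz => hz.1))
  have hymem : y ∈ Icc (ψ (max W 0)) (ψ 0) := ⟨le_of_lt hW0, by rw [hg.map_zero]; exact hy.2⟩
  obtain ⟨z, hz, hzy⟩ := hsub hymem
  exact ⟨z, hz.1, hzy⟩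

theorem level_nonempty (hg : IsGenerator ψ) {y : ℝ} (hy : y ∈ Icc (0:ℝ) 1) :
    {z : ℝ≥0∞ | psiExt ψ z = y}.Nonempty := by
  rcases eq_or_lt_of_le hy.1 with h0 | h0
  · exact ⟨∞, by simp [psiExt, ← h0]⟩
  · obtain ⟨z, hz0, hzy⟩ := level_nonempty_of_Ioc hg ⟨h0, hy.2⟩
    exact ⟨ENNReal.ofReal z, by simp [psiExt_ofReal ψ hz0, hzy]⟩

theorem psiExt_pseudoInv (hg : IsGenerator ψ) {y : ℝ} (hy : y ∈ Icc (0:ℝ) 1) :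
    psiExt ψ (pseudoInv ψ y) = y :=
  IsClosed.sInf_mem (level_nonempty hg hy) (isClosed_level hg y)

theorem pseudoInv_ne_top (hg : IsGenerator ψ) {y : ℝ} (hy : y ∈ Ioc (0:ℝ) 1) :
    pseudoInv ψ y ≠ ∞ := by
  obtain ⟨z, hz0, hzy⟩ := level_nonempty_of_Ioc hg hy
  have : pseudoInv ψ y ≤ ENNReal.ofReal z := sInf_le (by simp [psiExt_ofReal ψ hz0, hzy])
  exact ne_top_of_le_ne_top ENNReal.ofReal_ne_top this

theorem psi_pseudoInv (hg : IsGenerator ψ) {y : ℝ} (hy : y ∈ Ioc (0:ℝ) 1) :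
    ψ (pseudoInv ψ y).toReal = y := by
  have := psiExt_pseudoInv hg ⟨le_of_lt hy.1, hy.2⟩
  rwa [psiExt, if_neg (pseudoInv_ne_top hg hy)] at this

theorem psi_pseudoInv_zero (hg : IsGenerator ψ) (h : pseudoInv ψ 0 ≠ ∞) :
    ψ (pseudoInv ψ 0).toReal = 0 := by
  have := psiExt_pseudoInv hg (⟨le_refl _, zero_le_one⟩ : (0:ℝ) ∈ Icc (0:ℝ) 1)
  rwa [psiExt, if_neg h] at this

theorem pseudoInv_one (hg : IsGenerator ψ) : pseudoInv ψ 1 = 0 := by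
  refine le_antisymm (sInf_le ?_) (zero_le)
  show psiExt ψ 0 = 1
  have : psiExt ψ 0 = ψ 0 := by simp [psiExt]
  rw [this, hg.map_zero]

theorem pseudoInv_pos (hg : IsGenerator ψ) {y : ℝ} (hy0 : 0 ≤ y) (hy : y < 1) :
    pseudoInv ψ y ≠ 0 := by
  intro h
  have := psiExt_pseudoInv hg ⟨hy0, le_of_lt hy⟩
  rw [h] at this
  have h0 : psiExt ψ 0 = ψ 0 := by simp [psiExt]
  rw [h0, hg.map_zero] at this
  exact absurd this.symm (ne_of_lt hy)

/-- Galois direction 1. -/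
theorem le_psi_of_le_pseudoInv (hg : IsGenerator ψ) {y z : ℝ} (hy : y ∈ Icc (0:ℝ) 1)
    (hz : 0 ≤ z) (h : ENNReal.ofReal z ≤ pseudoInv ψ y) : y ≤ ψ z := by
  rcases eq_or_ne (pseudoInv ψ y) ∞ with htop | htop
  · have := psiExt_pseudoInv hg hy
    rw [htop] at this
    simp only [psiExt, if_pos rfl] at this
    rw [← this]
    exact (hg.mem_Icc z hz).1
  · have hw : z ≤ (pseudoInv ψ y).toReal := (ENNReal.ofReal_le_iff_le_toReal htop).1 h
    have hyw : ψ (pseudoInv ψ y).toReal = y := by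
      have := psiExt_pseudoInv hg hy
      rwa [psiExt, if_neg htop] at this
    rw [← hyw]
    exact hg.antitoneOn (mem_Ici.2 hz) (mem_Ici.2 (hz.trans hw)) hw

/-- Galois direction 2. -/
theorem ofReal_le_pseudoInv_of_le_psi (hg : IsGenerator ψ) {y z : ℝ} (hy : 0 < y)
    (hz : 0 ≤ z) (h : y ≤ ψ z) : ENNReal.ofReal z ≤ pseudoInv ψ y := by
  by_contra hc
  push_neg at hc
  have hy1 : y ∈ Icc (0:ℝ) 1 := ⟨le_of_lt hy, h.trans (hg.mem_Icc z hz).2⟩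
  have htop : pseudoInv ψ y ≠ ∞ := hc.ne_top
  have hw : (pseudoInv ψ y).toReal < z := by
    rcases ENNReal.lt_iff_exists_real_btwn.1 hc with ⟨r, hr0, h1, h2⟩
    have : (pseudoInv ψ y).toReal < r := by
      have := ENNReal.toReal_lt_toReal htop ENNReal.ofReal_ne_top |>.2 h1
      rwa [ENNReal.toReal_ofReal hr0] at this
    exact this.trans (by rwa [ENNReal.ofReal_lt_ofReal_iff_of_nonneg hr0] at h2)
  have hyw : ψ (pseudoInv ψ y).toReal = y := by
    have := psiExt_pseudoInv hg hy1
    rwa [psiExt, if_neg htop] at this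
  rcases le_or_gt (ENNReal.ofReal z) (pseudoInv ψ 0) with hle | hlt
  · have := hg.strictAnti ENNReal.toReal_nonneg hw hle
    rw [hyw] at this
    exact absurd h (not_le.2 this)
  · have htop0 : pseudoInv ψ 0 ≠ ∞ := hlt.ne_top
    have hw0 : (pseudoInv ψ 0).toReal ≤ z := by
      have := (ENNReal.toReal_le_toReal htop0 ENNReal.ofReal_ne_top).2 hlt.le
      rwa [ENNReal.toReal_ofReal hz] at this
    have h0 : ψ z ≤ ψ (pseudoInv ψ 0).toReal :=
      hg.antitoneOn (mem_Ici.2 ENNReal.toReal_nonneg) (mem_Ici.2 hz) hw0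
    rw [psi_pseudoInv_zero hg htop0] at h0
    exact absurd (hy.trans_le h) (not_lt.2 h0)

/-- `pseudoInv (ψ z) = min (ofReal z) (pseudoInv 0)`. -/
theorem pseudoInv_psi (hg : IsGenerator ψ) {z : ℝ} (hz : 0 ≤ z) :
    pseudoInv ψ (ψ z) = min (ENNReal.ofReal z) (pseudoInv ψ 0) := by
  rcases le_or_gt (ENNReal.ofReal z) (pseudoInv ψ 0) with hle | hlt
  · rw [min_eq_left hle]
    rcases lt_or_eq_of_le (hg.mem_Icc z hz).1 with hpos | heq
    · refine le_antisymm (sInf_le (by simp [psiExt_ofReal ψ hz])) ?_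
      exact ofReal_le_pseudoInv_of_le_psi hg hpos hz (le_refl _)
    · rw [← heq]
      refine le_antisymm ?_ hle
      exact sInf_le (by simp [psiExt_ofReal ψ hz, ← heq])
  · rw [min_eq_right hlt.le]
    have htop0 : pseudoInv ψ 0 ≠ ∞ := hlt.ne_top
    have hw0 : (pseudoInv ψ 0).toReal ≤ z := by
      have := (ENNReal.toReal_le_toReal htop0 ENNReal.ofReal_ne_top).2 hlt.le
      rwa [ENNReal.toReal_ofReal hz] at this
    have h0 : ψ z ≤ 0 := by
      have := hg.antitoneOn (mem_Ici.2 ENNReal.toReal_nonneg) (mem_Ici.2 hz) hw0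
      rwa [psi_pseudoInv_zero hg htop0] at this
    have : ψ z = 0 := le_antisymm h0 (hg.mem_Icc z hz).1
    rw [this]

theorem antitoneOn_pseudoInv (hg : IsGenerator ψ) :
    AntitoneOn (pseudoInv ψ) (Icc (0:ℝ) 1) := by
  intro y1 hy1 y2 hy2 h12
  rcases eq_or_ne (pseudoInv ψ y1) ∞ with htop | htop
  · rw [htop]; exact le_top
  · have hw : ψ (pseudoInv ψ y1).toReal = y1 := by
      have := psiExt_pseudoInv hg hy1
      rwa [psiExt, if_neg htop] at this
    have hsub : Icc (ψ (pseudoInv ψ y1).toReal) (ψ 0) ⊆ ψ '' Icc 0 (pseudoInv ψ y1).toReal :=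
      intermediate_value_Icc' ENNReal.toReal_nonneg (hg.continuousOn.mono (fun z hz => hz.1))
    have hymem : y2 ∈ Icc (ψ (pseudoInv ψ y1).toReal) (ψ 0) := by
      rw [hw, hg.map_zero]; exact ⟨h12, hy2.2⟩
    obtain ⟨z, hzmem, hzy⟩ := hsub hymem
    calc pseudoInv ψ y2 ≤ ENNReal.ofReal z := sInf_le (by simp [psiExt_ofReal ψ hzmem.1, hzy])
    _ ≤ pseudoInv ψ y1 := by
        rw [← ENNReal.ofReal_toReal htop]
        exact ENNReal.ofReal_le_ofReal hzmem.2

/-- clamped pseudo-inverse, globally antitone and measurable -/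
def cPI (ψ : ℝ → ℝ) (y : ℝ) : ℝ≥0∞ := pseudoInv ψ (max 0 (min 1 y))

theorem cPI_eq (hy : y ∈ Icc (0:ℝ) 1) : cPI ψ y = pseudoInv ψ y := by
  rw [cPI, min_eq_right hy.2, max_eq_right hy.1]

theorem antitone_cPI (hg : IsGenerator ψ) : Antitone (cPI ψ) := by
  intro y1 y2 h
  refine antitoneOn_pseudoInv hg ?_ ?_ ?_
  · exact ⟨le_max_left _ _, max_le (zero_le_one) (min_le_left _ _)⟩
  · exact ⟨le_max_left _ _, max_le (zero_le_one) (min_le_left _ _)⟩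
  · exact max_le_max (le_refl _) (min_le_min (le_refl _) h)

theorem measurable_cPI (hg : IsGenerator ψ) : Measurable (cPI ψ) :=
  (antitone_cPI hg).measurable

end KendallAux


namespace KendallAux

variable {d : ℕ} {ψ : ℝ → ℝ} {μ : Measure (Fin d → ℝ)}

/-- The basic "upper box" events. -/
def SB (ψ : ℝ → ℝ) (v : Fin d → ℝ≥0∞) : Set (Fin d → ℝ) :=
  {x | (∀ i, x i ∈ Icc (0:ℝ) 1) ∧ ∀ i, v i ≤ cPI ψ (x i)}

theorem measurableSet_cube :
    MeasurableSet {x : Fin d → ℝ | ∀ i, x i ∈ Icc (0:ℝ) 1} := by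
  have : {x : Fin d → ℝ | ∀ i, x i ∈ Icc (0:ℝ) 1}
      = ⋂ i, (fun x : Fin d → ℝ => x i) ⁻¹' (Icc 0 1) := by ext; simp
  rw [this]
  exact MeasurableSet.iInter fun i => measurableSet_Icc.preimage (measurable_pi_apply i)

theorem measurableSet_SB (hg : IsGenerator ψ) (v : Fin d → ℝ≥0∞) :
    MeasurableSet (SB ψ v) := by
  have : SB ψ v = {x : Fin d → ℝ | ∀ i, x i ∈ Icc (0:ℝ) 1} ∩
      ⋂ i, (fun x : Fin d → ℝ => x i) ⁻¹' (cPI ψ ⁻¹' (Ici (v i))) := by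
    ext x; simp [SB]
  rw [this]
  exact measurableSet_cube.inter <| MeasurableSet.iInter fun i =>
    ((measurableSet_Ici.preimage (measurable_cPI hg)).preimage (measurable_pi_apply i))

section Measures

variable (hg : IsGenerator ψ)
variable (hμ : ∀ x : Fin d → ℝ, (∀ i, x i ∈ Icc (0 : ℝ) 1) →
      μ (Set.univ.pi fun i => Icc 0 (x i)) = ENNReal.ofReal (archCopula d ψ x))

include hg hμ in
theorem face_null (i : Fin d) :
    μ {x | (∀ j, x j ∈ Icc (0:ℝ) 1) ∧ x i = 0} = 0 := by
  classical
  set y : Fin d → ℝ := Function.update (fun _ => (1:ℝ)) i 0 with hy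
  have hymem : ∀ j, y j ∈ Icc (0:ℝ) 1 := by
    intro j
    by_cases hj : j = i
    · subst hj; simp [hy, Function.update_self]
    · simp [hy, Function.update_of_ne hj]
  have hsum : (∑ j, pseudoInv ψ (y j)) = pseudoInv ψ 0 := by
    rw [Finset.sum_eq_single i]
    · simp [hy, Function.update_self]
    · intro b _ hb
      simp [hy, Function.update_of_ne hb, pseudoInv_one hg]
    · intro hi; exact absurd (Finset.mem_univ i) hi
  have harch : archCopula d ψ y = 0 := by
    rw [archCopula, hsum]
    exact psiExt_pseudoInv hg ⟨le_refl _, zero_le_one⟩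
  have hsub : {x : Fin d → ℝ | (∀ j, x j ∈ Icc (0:ℝ) 1) ∧ x i = 0}
      ⊆ Set.univ.pi fun j => Icc 0 (y j) := by
    intro x ⟨hx, hxi⟩ j _
    by_cases hj : j = i
    · subst hj; simp [hy, Function.update_self, hxi]
    · simp only [hy, Function.update_of_ne hj]; exact hx j
  refine le_antisymm ?_ (zero_le)
  calc μ _ ≤ μ (Set.univ.pi fun j => Icc 0 (y j)) := measure_mono hsub
  _ = 0 := by rw [hμ y hymem, harch]; simp

include hg hμ in
/-- The copula value at a grid corner. -/
theorem archCopula_grid (k : Fin d → ℕ) {h : ℝ} (hh : 0 ≤ h) :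
    archCopula d ψ (fun i => ψ ((k i : ℝ) * h)) = ψ (((∑ i, k i : ℕ) : ℝ) * h) := by
  have hkh : ∀ i, (0:ℝ) ≤ (k i : ℝ) * h := fun i => mul_nonneg (Nat.cast_nonneg _) hh
  have hPI : ∀ i, pseudoInv ψ (ψ ((k i : ℝ) * h))
      = min (ENNReal.ofReal ((k i : ℝ) * h)) (pseudoInv ψ 0) :=
    fun i => pseudoInv_psi hg (hkh i)
  rw [archCopula]
  by_cases hca : ∀ i, ENNReal.ofReal ((k i : ℝ) * h) ≤ pseudoInv ψ 0
  · have hsum : (∑ i, pseudoInv ψ (ψ ((k i : ℝ) * h)))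
        = ENNReal.ofReal (((∑ i, k i : ℕ) : ℝ) * h) := by
      have : ∀ i ∈ Finset.univ, pseudoInv ψ (ψ ((k i : ℝ) * h))
          = ENNReal.ofReal ((k i : ℝ) * h) := by
        intro i _; rw [hPI i, min_eq_left (hca i)]
      rw [Finset.sum_congr rfl this, ← ENNReal.ofReal_sum_of_nonneg (fun i _ => hkh i)]
      congr 1
      rw [Nat.cast_sum, Finset.sum_mul]
    rw [hsum, psiExt_ofReal ψ (mul_nonneg (Nat.cast_nonneg _) hh)]
  · push_neg at hca
    obtain ⟨i0, hi0⟩ := hca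
    have htop0 : pseudoInv ψ 0 ≠ ∞ := hi0.ne_top
    have hw0 : (pseudoInv ψ 0).toReal ≤ (k i0 : ℝ) * h := by
      have := (ENNReal.toReal_le_toReal htop0 ENNReal.ofReal_ne_top).2 hi0.le
      rwa [ENNReal.toReal_ofReal (hkh i0)] at this
    have hpsi0 : ∀ z : ℝ, (pseudoInv ψ 0).toReal ≤ z → ψ z = 0 := by
      intro z hz
      refine le_antisymm ?_ (hg.mem_Icc z (ENNReal.toReal_nonneg.trans hz)).1
      have := hg.antitoneOn (mem_Ici.2 ENNReal.toReal_nonneg)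
        (mem_Ici.2 (ENNReal.toReal_nonneg.trans hz)) hz
      rwa [psi_pseudoInv_zero hg htop0] at this
    have hrhs : ψ (((∑ i, k i : ℕ) : ℝ) * h) = 0 := by
      refine hpsi0 _ (hw0.trans ?_)
      refine mul_le_mul_of_nonneg_right ?_ hh
      exact_mod_cast Nat.cast_le.2 (Finset.single_le_sum (fun i _ => Nat.zero_le _)
        (Finset.mem_univ i0))
    rw [hrhs]
    have hge : pseudoInv ψ 0 ≤ ∑ i, pseudoInv ψ (ψ ((k i : ℝ) * h)) := by
      calc pseudoInv ψ 0 = min (ENNReal.ofReal ((k i0 : ℝ) * h)) (pseudoInv ψ 0) := by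
            rw [min_eq_right hi0.le]
      _ = pseudoInv ψ (ψ ((k i0 : ℝ) * h)) := (hPI i0).symm
      _ ≤ _ := Finset.single_le_sum (f := fun i => pseudoInv ψ (ψ ((k i : ℝ) * h))) (fun i _ => zero_le) (Finset.mem_univ i0)
    rcases eq_or_ne (∑ i, pseudoInv ψ (ψ ((k i : ℝ) * h))) ∞ with htop | htop
    · rw [htop]; simp [psiExt]
    · rw [psiExt, if_neg htop]
      refine hpsi0 _ ?_
      exact (ENNReal.toReal_le_toReal htop0 htop).2 hge

include hg hμ in
theorem SB_measure (k : Fin d → ℕ) {h : ℝ} (hh : 0 ≤ h) :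
    μ (SB ψ (fun i => ENNReal.ofReal ((k i : ℝ) * h)))
      = ENNReal.ofReal (ψ (((∑ i, k i : ℕ) : ℝ) * h)) := by
  classical
  set y : Fin d → ℝ := fun i => ψ ((k i : ℝ) * h) with hy
  have hkh : ∀ i, (0:ℝ) ≤ (k i : ℝ) * h := fun i => mul_nonneg (Nat.cast_nonneg _) hh
  have hymem : ∀ i, y i ∈ Icc (0:ℝ) 1 := fun i => hg.mem_Icc _ (hkh i)
  have hbox := hμ y hymem
  rw [archCopula_grid hg hμ k hh] at hbox
  -- SB ⊆ box
  have h1 : SB ψ (fun i => ENNReal.ofReal ((k i : ℝ) * h)) ⊆ Set.univ.pi fun i => Icc 0 (y i) := by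
    intro x ⟨hx, hv⟩ i _
    refine ⟨(hx i).1, ?_⟩
    have := hv i
    rw [cPI_eq (hx i)] at this
    exact le_psi_of_le_pseudoInv hg (hx i) (hkh i) this
  -- box ⊆ SB ∪ faces
  have h2 : (Set.univ.pi fun i => Icc 0 (y i)) ⊆
      SB ψ (fun i => ENNReal.ofReal ((k i : ℝ) * h)) ∪
        ⋃ i, {x | (∀ j, x j ∈ Icc (0:ℝ) 1) ∧ x i = 0} := by
    intro x hx
    have hcube : ∀ j, x j ∈ Icc (0:ℝ) 1 := by
      intro j
      have := hx j (mem_univ j)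
      exact ⟨this.1, this.2.trans (hymem j).2⟩
    by_cases hpos : ∀ i, 0 < x i
    · left
      refine ⟨hcube, fun i => ?_⟩
      rw [cPI_eq (hcube i)]
      exact ofReal_le_pseudoInv_of_le_psi hg (hpos i) (hkh i) (hx i (mem_univ i)).2
    · right
      push_neg at hpos
      obtain ⟨i, hi⟩ := hpos
      exact mem_iUnion.2 ⟨i, hcube, le_antisymm hi (hcube i).1⟩
  refine le_antisymm ?_ ?_
  · rw [← hbox]; exact measure_mono h1
  · rw [← hbox]
    calc μ (Set.univ.pi fun i => Icc 0 (y i))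
        ≤ μ (SB ψ (fun i => ENNReal.ofReal ((k i : ℝ) * h)))
          + μ (⋃ i, {x | (∀ j, x j ∈ Icc (0:ℝ) 1) ∧ x i = 0}) :=
          le_trans (measure_mono h2) (measure_union_le _ _)
    _ = μ (SB ψ (fun i => ENNReal.ofReal ((k i : ℝ) * h))) := by
          rw [measure_iUnion_null (fun i => face_null hg hμ i), add_zero]

end Measures

end KendallAux


namespace KendallAux

variable {d : ℕ} {ψ : ℝ → ℝ} {μ : Measure (Fin d → ℝ)}

/-- The event `{∑_{i<r} V_i = p, V_i ≥ c_i for i ≥ r}` (in grid units of `h`). -/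
def EvSet (ψ : ℝ → ℝ) (h : ℝ) (r p : ℕ) (c : Fin d → ℕ) : Set (Fin d → ℝ) :=
  {x | (∀ i, x i ∈ Icc (0:ℝ) 1) ∧
    (∀ i : Fin d, r ≤ (i:ℕ) → ENNReal.ofReal ((c i : ℝ) * h) ≤ cPI ψ (x i)) ∧
    ∃ k : Fin d → ℕ, (∀ i : Fin d, r ≤ (i:ℕ) → k i = 0) ∧ (∑ i, k i) = p ∧
      ∀ i, ENNReal.ofReal ((k i : ℝ) * h) ≤ cPI ψ (x i)}

def Ktail (c : Fin d → ℕ) (r : ℕ) : ℕ :=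
  ∑ i ∈ Finset.univ.filter (fun i : Fin d => r ≤ (i:ℕ)), c i

/-- `Adiff j m = (-1)^j Δ^j ψ(m h)`. -/
def Adiff (ψ : ℝ → ℝ) (h : ℝ) : ℕ → ℕ → ℝ
  | 0, m => ψ ((m : ℝ) * h)
  | (j+1), m => Adiff ψ h j m - Adiff ψ h j (m+1)

theorem measurableSet_constr (hg : IsGenerator ψ) (v : ℝ≥0∞) (i : Fin d) :
    MeasurableSet {x : Fin d → ℝ | v ≤ cPI ψ (x i)} :=
  (measurableSet_Ici.preimage (measurable_cPI hg)).preimage (measurable_pi_apply i)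

theorem measurableSet_EvSet (hg : IsGenerator ψ) (h : ℝ) (r p : ℕ) (c : Fin d → ℕ) :
    MeasurableSet (EvSet ψ h r p c) := by
  classical
  have heq : EvSet ψ h r p c = ⋃ (k : Fin d → ℕ),
      ({x : Fin d → ℝ | (∀ i : Fin d, r ≤ (i:ℕ) → k i = 0) ∧ (∑ i, k i) = p} ∩
        ({x | ∀ i, x i ∈ Icc (0:ℝ) 1} ∩
        ((⋂ i : Fin d, {x : Fin d → ℝ | r ≤ (i:ℕ) → ENNReal.ofReal ((c i : ℝ) * h) ≤ cPI ψ (x i)}) ∩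
        ⋂ i : Fin d, {x : Fin d → ℝ | ENNReal.ofReal ((k i : ℝ) * h) ≤ cPI ψ (x i)}))) := by
    ext x
    simp only [EvSet, mem_setOf_eq, mem_iUnion, mem_inter_iff, mem_iInter]
    tauto
  rw [heq]
  refine MeasurableSet.iUnion fun k => (MeasurableSet.const _).inter
    (measurableSet_cube.inter (MeasurableSet.inter ?_ ?_))
  · refine MeasurableSet.iInter fun i => ?_
    by_cases hri : r ≤ (i:ℕ)
    · simp only [hri, forall_true_left]
      exact measurableSet_constr hg _ i
    · simp only [hri, false_implies, setOf_true]
      exact MeasurableSet.univ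
  · exact MeasurableSet.iInter fun i => measurableSet_constr hg _ i

theorem EvSet_mono_c {h : ℝ} (hh : 0 ≤ h) {r p : ℕ} {c c' : Fin d → ℕ}
    (hcc : ∀ i, c i ≤ c' i) : EvSet ψ h r p c' ⊆ EvSet ψ h r p c := by
  rintro x ⟨hcube, htail, hk⟩
  refine ⟨hcube, fun i hi => le_trans ?_ (htail i hi), hk⟩
  exact ENNReal.ofReal_le_ofReal (mul_le_mul_of_nonneg_right (Nat.cast_le.2 (hcc i)) hh)

theorem EvSet_zero {h : ℝ} (r : ℕ) (c : Fin d → ℕ) :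
    EvSet ψ h r 0 c
      = SB ψ (fun i => ENNReal.ofReal (((if r ≤ (i:ℕ) then c i else 0 : ℕ) : ℝ) * h)) := by
  classical
  ext x
  constructor
  · rintro ⟨hcube, htail, _⟩
    refine ⟨hcube, fun i => ?_⟩
    by_cases hri : r ≤ (i:ℕ)
    · simpa [hri] using htail i hri
    · simp [hri]
  · rintro ⟨hcube, hv⟩
    refine ⟨hcube, fun i hi => by simpa [hi] using hv i, 0, by simp, by simp, by simp⟩

section Measures

variable (hg : IsGenerator ψ)
variable (hμ : ∀ x : Fin d → ℝ, (∀ i, x i ∈ Icc (0 : ℝ) 1) →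
      μ (Set.univ.pi fun i => Icc 0 (x i)) = ENNReal.ofReal (archCopula d ψ x))

include hg hμ in
theorem EvSet_zero_measure {h : ℝ} (hh : 0 ≤ h) (r : ℕ) (c : Fin d → ℕ) :
    μ (EvSet ψ h r 0 c) = ENNReal.ofReal (ψ ((Ktail c r : ℝ) * h)) := by
  classical
  rw [EvSet_zero, SB_measure hg hμ _ hh]
  congr 2
  rw [Ktail, Finset.sum_filter]

end Measures

theorem exists_reduce (k : Fin d → ℕ) (m : ℕ) (hm : m ≤ ∑ i, k i) :
    ∃ k' : Fin d → ℕ, (∀ i, k' i ≤ k i) ∧ ∑ i, k' i = m := by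
  classical
  induction m with
  | zero => exact ⟨0, fun i => Nat.zero_le _, by simp⟩
  | succ m ih =>
    obtain ⟨k', hk'le, hk'sum⟩ := ih (le_trans (Nat.le_succ m) hm)
    have hex : ∃ i, k' i < k i := by
      by_contra hc
      push_neg at hc
      have : ∑ i, k i ≤ ∑ i, k' i := Finset.sum_le_sum fun i _ => hc i
      omega
    obtain ⟨i, hi⟩ := hex
    refine ⟨Function.update k' i (k' i + 1), fun j => ?_, ?_⟩
    · by_cases hj : j = i
      · subst hj; rw [Function.update_self]; omega
      · rw [Function.update_of_ne hj]; exact hk'le j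
    · rw [Finset.sum_update_of_mem (Finset.mem_univ i), ← Finset.erase_eq]
      have h2 : ∑ j, k' j = k' i + ∑ j ∈ Finset.univ.erase i, k' j :=
        (Finset.add_sum_erase _ _ (Finset.mem_univ i)).symm
      omega

theorem Ktail_of_ge (c : Fin d → ℕ) {r : ℕ} (hr : d ≤ r) : Ktail c r = 0 := by
  rw [Ktail, Finset.filter_false_of_mem, Finset.sum_empty]
  intro i _
  have := i.isLt
  omega

theorem Ktail_update {r : ℕ} (hr : r < d) (c : Fin d → ℕ) (q : ℕ) :
    Ktail (Function.update c ⟨r, hr⟩ q) r = q + Ktail c (r + 1) := by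
  classical
  have hsplit : Finset.univ.filter (fun i : Fin d => r ≤ (i:ℕ))
      = insert (⟨r, hr⟩ : Fin d) (Finset.univ.filter (fun i : Fin d => r + 1 ≤ (i:ℕ))) := by
    ext i
    simp only [Finset.mem_filter, Finset.mem_univ, true_and, Finset.mem_insert]
    constructor
    · intro hi
      rcases eq_or_lt_of_le hi with heq | hlt
      · left; exact Fin.ext heq.symm
      · right; omega
    · rintro (rfl | hi)
      · exact le_refl r
      · omega
  have hnot : (⟨r, hr⟩ : Fin d) ∉ Finset.univ.filter (fun i : Fin d => r + 1 ≤ (i:ℕ)) := by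
    simp only [Finset.mem_filter, Finset.mem_univ, true_and]
    have : ((⟨r, hr⟩ : Fin d) : ℕ) = r := rfl
    omega
  rw [Ktail, hsplit, Finset.sum_insert hnot, Function.update_self]
  congr 1
  refine Finset.sum_congr rfl fun i hi => ?_
  have : i ≠ (⟨r, hr⟩ : Fin d) := by
    simp only [Finset.mem_filter] at hi
    intro heq
    rw [heq] at hi
    have h0 : ((⟨r, hr⟩ : Fin d) : ℕ) = r := rfl
    omega
  rw [Function.update_of_ne this]

theorem EvSet_decomp (hg : IsGenerator ψ) {h : ℝ} (hh : 0 < h) {r p : ℕ} (hr : r < d)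
    (hp : 1 ≤ p) (c : Fin d → ℕ) :
    EvSet ψ h (r+1) p c =
      (⋃ q ∈ Finset.range p,
        (EvSet ψ h r (p-q) (Function.update c ⟨r,hr⟩ q)
          \ EvSet ψ h r (p-q) (Function.update c ⟨r,hr⟩ (q+1))))
      ∪ EvSet ψ h r 0 (Function.update c ⟨r,hr⟩ p) := by
  classical
  set ir : Fin d := ⟨r, hr⟩ with hir
  have hirval : (ir : ℕ) = r := rfl
  have hne_of_ge : ∀ i : Fin d, r + 1 ≤ (i:ℕ) → i ≠ ir := by
    intro i hi heq
    rw [heq] at hi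
    omega
  ext x
  constructor
  · rintro ⟨hcube, htail, k, hsupp, hsum, hconstr⟩
    by_cases hca : ENNReal.ofReal ((p:ℝ) * h) ≤ cPI ψ (x ir)
    · right
      refine ⟨hcube, fun i hi => ?_, 0, by simp, by simp, by simp⟩
      by_cases hieq : i = ir
      · subst hieq; rwa [Function.update_self]
      · have : r + 1 ≤ (i:ℕ) := by
          rcases eq_or_lt_of_le hi with heq | hlt
          · exact absurd (Fin.ext heq.symm) hieq
          · omega
        rw [Function.update_of_ne hieq]
        exact htail i this
    · left
      have hkle : k ir ≤ p := by
        rw [← hsum]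
        exact Finset.single_le_sum (fun i _ => Nat.zero_le _) (Finset.mem_univ ir)
      have hkir : k ir ≤ p - 1 := by
        rcases eq_or_lt_of_le hkle with heq | hlt
        · exact absurd (heq ▸ hconstr ir) hca
        · omega
      set P : ℕ → Prop := fun q' => ENNReal.ofReal ((q':ℝ) * h) ≤ cPI ψ (x ir) with hP
      have hP0 : P 0 := by simp [hP]
      set q := Nat.findGreatest P (p-1) with hqdef
      have hq1 : P q := Nat.findGreatest_spec (Nat.zero_le _) hP0
      have hqle : q ≤ p - 1 := Nat.findGreatest_le _
      have hqsucc : ¬ P (q+1) := by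
        rcases lt_or_ge q (p-1) with hlt | hge
        · exact Nat.findGreatest_is_greatest (n := p - 1) (by omega) (by omega)
        · have : q + 1 = p := by omega
          rw [this]
          exact hca
      have hkq : k ir ≤ q := Nat.le_findGreatest hkir (hconstr ir)
      have hqp : q < p := by omega
      refine mem_iUnion.2 ⟨q, mem_iUnion.2 ⟨Finset.mem_range.2 hqp, ?_, ?_⟩⟩
      · -- positive part
        refine ⟨hcube, fun i hi => ?_, ?_⟩
        · by_cases hieq : i = ir
          · subst hieq; rwa [Function.update_self]
          · have : r + 1 ≤ (i:ℕ) := by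
              rcases eq_or_lt_of_le hi with heq | hlt
              · exact absurd (Fin.ext heq.symm) hieq
              · omega
            rw [Function.update_of_ne hieq]
            exact htail i this
        · -- witness
          set l : Fin d → ℕ := Function.update k ir 0 with hl
          have hsuppl : ∀ i : Fin d, r ≤ (i:ℕ) → l i = 0 := by
            intro i hi
            by_cases hieq : i = ir
            · subst hieq; rw [hl, Function.update_self]
            · have : r + 1 ≤ (i:ℕ) := by
                rcases eq_or_lt_of_le hi with heq | hlt
                · exact absurd (Fin.ext heq.symm) hieq
                · omega
              rw [hl, Function.update_of_ne hieq]
              exact hsupp i this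
          have hsuml : ∑ i, l i = p - k ir := by
            rw [hl, Finset.sum_update_of_mem (Finset.mem_univ ir), ← Finset.erase_eq]
            have h2 : ∑ j, k j = k ir + ∑ j ∈ Finset.univ.erase ir, k j :=
              (Finset.add_sum_erase _ _ (Finset.mem_univ ir)).symm
            omega
          have hred : p - q ≤ ∑ i, l i := by omega
          obtain ⟨k', hk'le, hk'sum⟩ := exists_reduce l (p - q) hred
          refine ⟨k', fun i hi => Nat.le_zero.1 ((hsuppl i hi) ▸ hk'le i), hk'sum, fun i => ?_⟩
          have hlk : l i ≤ k i := by
            by_cases hieq : i = ir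
            · subst hieq; rw [hl, Function.update_self]; exact Nat.zero_le _
            · rw [hl, Function.update_of_ne hieq]
          refine le_trans ?_ (hconstr i)
          exact ENNReal.ofReal_le_ofReal (mul_le_mul_of_nonneg_right
            (Nat.cast_le.2 ((hk'le i).trans hlk)) hh.le)
      · -- not in the negative part
        rintro ⟨_, htail', _⟩
        refine hqsucc ?_
        have h5 := htail' ir (le_of_eq hirval.symm)
        rw [Function.update_self] at h5
        show ENNReal.ofReal (((q+1 : ℕ):ℝ) * h) ≤ cPI ψ (x ir)
        push_cast at h5 ⊢
        exact h5
  · rintro (hx | hx)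
    · obtain ⟨q, hq⟩ := mem_iUnion.1 hx
      obtain ⟨hqp, hpiece⟩ := mem_iUnion.1 hq
      have hqp' : q < p := Finset.mem_range.1 hqp
      obtain ⟨⟨hcube, htail, k', hsupp', hsum', hconstr'⟩, _⟩ := hpiece
      refine ⟨hcube, fun i hi => ?_, ?_⟩
      · have hieq : i ≠ ir := hne_of_ge i hi
        have := htail i (by omega)
        rwa [Function.update_of_ne hieq] at this
      · refine ⟨Function.update k' ir q, fun i hi => ?_, ?_, fun i => ?_⟩
        · have hieq : i ≠ ir := hne_of_ge i hi
          rw [Function.update_of_ne hieq]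
          exact hsupp' i (by omega)
        · rw [Finset.sum_update_of_mem (Finset.mem_univ ir), ← Finset.erase_eq]
          have h2 : ∑ j, k' j = k' ir + ∑ j ∈ Finset.univ.erase ir, k' j :=
            (Finset.add_sum_erase _ _ (Finset.mem_univ ir)).symm
          have hk'ir : k' ir = 0 := hsupp' ir (le_of_eq hirval.symm)
          omega
        · by_cases hieq : i = ir
          · subst hieq
            rw [Function.update_self]
            have := htail ir (le_of_eq hirval.symm)
            rwa [Function.update_self] at this
          · rw [Function.update_of_ne hieq]
            exact hconstr' i
    · obtain ⟨hcube, htail, _⟩ := hx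
      refine ⟨hcube, fun i hi => ?_, ?_⟩
      · have hieq : i ≠ ir := hne_of_ge i hi
        have := htail i (by omega)
        rwa [Function.update_of_ne hieq] at this
      · refine ⟨fun i => if i = ir then p else 0, fun i hi => by simp [hne_of_ge i hi], ?_,
          fun i => ?_⟩
        · rw [Finset.sum_ite_eq' Finset.univ ir fun _ => p]
          simp
        · by_cases hieq : i = ir
          · subst hieq
            simp only [if_pos rfl]
            have := htail ir (le_of_eq hirval.symm)
            rwa [Function.update_self] at this
          · simp [hieq]

end KendallAux


namespace KendallAux

variable {d : ℕ} {ψ : ℝ → ℝ} {μ : Measure (Fin d → ℝ)}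

theorem Adiff_zero (ψ : ℝ → ℝ) (h : ℝ) (m : ℕ) : Adiff ψ h 0 m = ψ ((m:ℝ) * h) := rfl

theorem Adiff_succ (ψ : ℝ → ℝ) (h : ℝ) (j m : ℕ) :
    Adiff ψ h (j+1) m = Adiff ψ h j m - Adiff ψ h j (m+1) := rfl

theorem hockey {p : ℕ} (hp : 1 ≤ p) (j : ℕ) :
    ∑ q ∈ Finset.range p, ((p - q - 1 + j).choose j) = (p + j).choose (j + 1) := by
  have h1 : ∀ q ∈ Finset.range p, (p - q - 1 + j).choose j = (p - 1 - q + j).choose j := by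
    intro q _
    congr 2
    omega
  rw [Finset.sum_congr rfl h1, Finset.sum_range_reflect (fun i => (i + j).choose j) p]
  have h2 : p = p - 1 + 1 := by omega
  rw [h2, Nat.sum_range_add_choose (p - 1) j]
  congr 1
  omega

section CM

variable (hg : IsGenerator ψ)
variable (hμ : ∀ x : Fin d → ℝ, (∀ i, x i ∈ Icc (0 : ℝ) 1) →
      μ (Set.univ.pi fun i => Icc 0 (x i)) = ENNReal.ofReal (archCopula d ψ x))

/-- A point of a "piece" satisfies the `q`-th constraint but not the `q+1`-st. -/
theorem piece_prop {h : ℝ} (hh : 0 < h) {r p q : ℕ} (hr : r < d) {c : Fin d → ℕ}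
    {x : Fin d → ℝ}
    (hx : x ∈ EvSet ψ h r (p-q) (Function.update c ⟨r,hr⟩ q)
      \ EvSet ψ h r (p-q) (Function.update c ⟨r,hr⟩ (q+1))) :
    ENNReal.ofReal ((q:ℝ) * h) ≤ cPI ψ (x ⟨r,hr⟩) ∧
      ¬ ENNReal.ofReal (((q:ℝ) + 1) * h) ≤ cPI ψ (x ⟨r,hr⟩) := by
  classical
  set ir : Fin d := ⟨r, hr⟩ with hir
  obtain ⟨⟨hcube, htail, hk⟩, hneg⟩ := hx
  constructor
  · have := htail ir (le_refl r)
    rwa [Function.update_self] at this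
  · intro hc
    refine hneg ⟨hcube, fun i hi => ?_, hk⟩
    by_cases hieq : i = ir
    · subst hieq
      rw [Function.update_self]
      show ENNReal.ofReal (((q+1 : ℕ):ℝ) * h) ≤ cPI ψ (x ir)
      push_cast
      exact hc
    · rw [Function.update_of_ne hieq]
      have := htail i hi
      rwa [Function.update_of_ne hieq] at this

include hg hμ in
theorem CM [IsProbabilityMeasure μ] {h : ℝ} (hh : 0 < h) :
    ∀ r, r ≤ d → ∀ p, 1 ≤ p → ∀ c : Fin d → ℕ, (μ (EvSet ψ h r p c)).toReal
      = ∑ j ∈ Finset.range r, ((p - 1 + j).choose j : ℝ) * Adiff ψ h j (p + Ktail c r) := by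
  intro r
  induction r with
  | zero =>
    intro _ p hp c
    have hempty : EvSet ψ h 0 p c = ∅ := by
      ext x
      simp only [EvSet, mem_setOf_eq, mem_empty_iff_false, iff_false, not_and]
      intro _ _
      rintro ⟨k, hsupp, hsum, _⟩
      have hz : ∀ i, k i = 0 := fun i => hsupp i (Nat.zero_le _)
      rw [Finset.sum_congr rfl (fun i _ => hz i), Finset.sum_const_zero] at hsum
      omega
    rw [hempty]
    simp
  | succ r ih =>
    intro hrd p hp c
    classical
    have hr : r < d := by omega
    set ir : Fin d := ⟨r, hr⟩ with hirdef
    set K' : ℕ := Ktail c (r+1) with hK'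
    set pos : ℕ → Set (Fin d → ℝ) := fun q => EvSet ψ h r (p-q) (Function.update c ir q)
      with hpos
    set neg : ℕ → Set (Fin d → ℝ) := fun q => EvSet ψ h r (p-q) (Function.update c ir (q+1))
      with hneg
    set piece : ℕ → Set (Fin d → ℝ) := fun q => pos q \ neg q with hpiece
    set last : Set (Fin d → ℝ) := EvSet ψ h r 0 (Function.update c ir p) with hlast
    have hmpos : ∀ q, MeasurableSet (pos q) := fun q => measurableSet_EvSet hg _ _ _ _
    have hmneg : ∀ q, MeasurableSet (neg q) := fun q => measurableSet_EvSet hg _ _ _ _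
    have hmpiece : ∀ q, MeasurableSet (piece q) := fun q => (hmpos q).diff (hmneg q)
    have hmlast : MeasurableSet last := measurableSet_EvSet hg _ _ _ _
    have hsub : ∀ q, neg q ⊆ pos q := by
      intro q
      refine EvSet_mono_c hh.le fun i => ?_
      by_cases hieq : i = ir
      · subst hieq; rw [Function.update_self, Function.update_self]; omega
      · rw [Function.update_of_ne hieq, Function.update_of_ne hieq]
    -- pairwise disjointness
    have hPdisj : (↑(Finset.range p) : Set ℕ).PairwiseDisjoint piece := by
      intro q hq q' hq' hne
      have key : ∀ q1 q2 : ℕ, q1 < q2 → Disjoint (piece q1) (piece q2) := by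
        intro q1 q2 h12
        rw [Set.disjoint_left]
        intro x hx1 hx2
        obtain ⟨_, hnot⟩ := piece_prop hh hr hx1
        obtain ⟨hyes, _⟩ := piece_prop hh hr hx2
        refine hnot (le_trans ?_ hyes)
        apply ENNReal.ofReal_le_ofReal
        have : (q1:ℝ) + 1 ≤ (q2:ℝ) := by exact_mod_cast h12
        nlinarith
      rcases lt_or_gt_of_ne hne with h12 | h12
      · exact key _ _ h12
      · exact (key _ _ h12).symm
    have hdisjlast : Disjoint (⋃ q ∈ Finset.range p, piece q) last := by
      rw [Set.disjoint_left]
      intro x hx hxl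
      simp only [mem_iUnion] at hx
      obtain ⟨q, hq, hxq⟩ := hx
      have hq' : q < p := Finset.mem_range.1 hq
      obtain ⟨_, hnot⟩ := piece_prop hh hr hxq
      obtain ⟨_, htail, _⟩ := hxl
      have := htail ir (le_refl r)
      rw [Function.update_self] at this
      refine hnot (le_trans ?_ this)
      apply ENNReal.ofReal_le_ofReal
      have : (q:ℝ) + 1 ≤ (p:ℝ) := by exact_mod_cast hq'
      nlinarith
    -- decomposition of the measure
    have hdecomp := EvSet_decomp hg hh hr hp c
    have hmeasure : μ (EvSet ψ h (r+1) p c)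
        = ∑ q ∈ Finset.range p, μ (piece q) + μ last := by
      rw [hdecomp, measure_union hdisjlast hmlast,
        measure_biUnion_finset hPdisj (fun q _ => hmpiece q)]
    -- real-number computation
    have hval : (μ (EvSet ψ h (r+1) p c)).toReal
        = ∑ q ∈ Finset.range p, ((μ (pos q)).toReal - (μ (neg q)).toReal)
          + (μ last).toReal := by
      rw [hmeasure, ENNReal.toReal_add (by
            refine ne_of_lt (lt_of_le_of_lt (Finset.sum_le_sum fun q _ => measure_mono
              (diff_subset)) ?_)
            exact lt_of_le_of_lt (Finset.sum_le_sum fun q _ => measure_mono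
              (subset_univ _)) (by simp [measure_lt_top])) (measure_ne_top μ _),
        ENNReal.toReal_sum (fun q _ => measure_ne_top μ _)]
      congr 1
      refine Finset.sum_congr rfl fun q _ => ?_
      rw [hpiece]
      simp only
      rw [measure_diff (hsub q) (hmneg q).nullMeasurableSet (measure_ne_top μ _),
        ENNReal.toReal_sub_of_le (measure_mono (hsub q)) (measure_ne_top μ _)]
    -- apply IH
    have hposval : ∀ q, q < p → (μ (pos q)).toReal
        = ∑ j ∈ Finset.range r, (((p - q) - 1 + j).choose j : ℝ) * Adiff ψ h j (p + K') := by
      intro q hq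
      rw [hpos]
      simp only
      rw [ih (by omega) (p - q) (by omega) (Function.update c ir q)]
      have harg : (p - q) + Ktail (Function.update c ir q) r = p + K' := by
        rw [Ktail_update hr c q]
        omega
      rw [harg]
    have hnegval : ∀ q, q < p → (μ (neg q)).toReal
        = ∑ j ∈ Finset.range r, (((p - q) - 1 + j).choose j : ℝ) * Adiff ψ h j (p + K' + 1) := by
      intro q hq
      rw [hneg]
      simp only
      rw [ih (by omega) (p - q) (by omega) (Function.update c ir (q+1))]
      have harg : (p - q) + Ktail (Function.update c ir (q+1)) r = p + K' + 1 := by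
        rw [Ktail_update hr c (q+1)]
        omega
      rw [harg]
    have hlastval : (μ last).toReal = Adiff ψ h 0 (p + K') := by
      rw [hlast]
      rw [EvSet_zero_measure hg hμ hh.le r (Function.update c ir p)]
      have harg : Ktail (Function.update c ir p) r = p + K' := Ktail_update hr c p
      rw [harg, ENNReal.toReal_ofReal
        (hg.mem_Icc _ (mul_nonneg (Nat.cast_nonneg _) hh.le)).1]
      rfl
    rw [hval, hlastval]
    have hq1 : ∀ q ∈ Finset.range p, (μ (pos q)).toReal - (μ (neg q)).toReal
        = ∑ j ∈ Finset.range r, (((p - q) - 1 + j).choose j : ℝ) * Adiff ψ h (j+1) (p + K') := by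
      intro q hq
      have hq' : q < p := Finset.mem_range.1 hq
      rw [hposval q hq', hnegval q hq', ← Finset.sum_sub_distrib]
      refine Finset.sum_congr rfl fun j _ => ?_
      rw [Adiff_succ]
      ring
    rw [Finset.sum_congr rfl hq1, Finset.sum_comm]
    have hcoef : ∀ j, ∑ q ∈ Finset.range p, (((p - q) - 1 + j).choose j : ℝ)
        = ((p + j).choose (j+1) : ℝ) := by
      intro j
      rw [← Nat.cast_sum]
      exact_mod_cast congrArg (Nat.cast (R := ℝ)) (hockey hp j)
    have hstep : ∑ j ∈ Finset.range r, ∑ q ∈ Finset.range p,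
        (((p - q) - 1 + j).choose j : ℝ) * Adiff ψ h (j+1) (p + K')
        = ∑ j ∈ Finset.range r, ((p + j).choose (j+1) : ℝ) * Adiff ψ h (j+1) (p + K') := by
      refine Finset.sum_congr rfl fun j _ => ?_
      rw [← Finset.sum_mul, hcoef j]
    rw [hstep]
    -- reassemble the RHS
    have hKeq : Ktail c (r+1) = K' := rfl
    rw [Finset.sum_range_succ' (fun j => ((p - 1 + j).choose j : ℝ)
      * Adiff ψ h j (p + Ktail c (r+1))) r]
    rw [hKeq]
    congr 1
    · refine Finset.sum_congr rfl fun j _ => ?_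
      have : p - 1 + (j + 1) = p + j := by omega
      rw [this]
    · simp

end CM

end KendallAux


namespace KendallAux

/-- Iterated forward difference with step `h` (innermost recursion). -/
def fdiff (F : ℝ → ℝ) (h : ℝ) : ℕ → ℝ → ℝ
  | 0, a => F a
  | (j+1), a => fdiff (fun y => F (y + h) - F y) h j a

theorem fdiff_zero (F : ℝ → ℝ) (h a : ℝ) : fdiff F h 0 a = F a := rfl

theorem fdiff_succ_inner (F : ℝ → ℝ) (h : ℝ) (j : ℕ) (a : ℝ) :
    fdiff F h (j+1) a = fdiff (fun y => F (y + h) - F y) h j a := rfl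

theorem fdiff_succ_outer (F : ℝ → ℝ) (h : ℝ) (j : ℕ) (a : ℝ) :
    fdiff F h (j+1) a = fdiff F h j (a + h) - fdiff F h j a := by
  induction j generalizing F a with
  | zero => rfl
  | succ j ih =>
    rw [fdiff_succ_inner F h (j+1) a, ih, fdiff_succ_inner, fdiff_succ_inner]

theorem Adiff_eq_fdiff (ψ : ℝ → ℝ) (h : ℝ) (j m : ℕ) :
    Adiff ψ h j m = (-1:ℝ)^j * fdiff ψ h j ((m:ℝ) * h) := by
  induction j generalizing m with
  | zero => simp [Adiff_zero, fdiff_zero]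
  | succ j ih =>
    rw [Adiff_succ, ih m, ih (m+1), fdiff_succ_outer]
    have harg : ((m+1 : ℕ):ℝ) * h = (m:ℝ) * h + h := by push_cast; ring
    rw [harg, pow_succ]
    ring

/-- Derivatives of a difference of shifts. -/
theorem iter_deriv_shift {F : ℝ → ℝ} {h : ℝ} (hh : 0 < h) (k : ℕ)
    (hF : ∀ k' < k, ∀ z : ℝ, 0 < z → DifferentiableAt ℝ (deriv^[k'] F) z) :
    ∀ z : ℝ, 0 < z →
      deriv^[k] (fun y => F (y + h) - F y) z = deriv^[k] F (z + h) - deriv^[k] F z := by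
  induction k with
  | zero => intro z hz; simp
  | succ k ih =>
    intro z hz
    have hF' : ∀ k' < k, ∀ z : ℝ, 0 < z → DifferentiableAt ℝ (deriv^[k'] F) z :=
      fun k' hk' => hF k' (by omega)
    have hev : deriv^[k] (fun y => F (y + h) - F y)
        =ᶠ[𝓝 z] fun y => deriv^[k] F (y + h) - deriv^[k] F y := by
      filter_upwards [IsOpen.mem_nhds isOpen_Ioi hz] with y hy
      exact ih hF' y hy
    rw [Function.iterate_succ_apply', hev.deriv_eq]
    have hd1 : DifferentiableAt ℝ (fun y => deriv^[k] F (y + h)) z := by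
      have := DifferentiableAt.comp z (hF k (by omega) (z + h) (by linarith))
        ((differentiableAt_id.add_const h) : DifferentiableAt ℝ (fun y : ℝ => y + h) z)
      exact this
    have hd2 : DifferentiableAt ℝ (deriv^[k] F) z := hF k (by omega) z hz
    rw [deriv_fun_sub hd1 hd2, deriv_comp_add_const]
    simp [Function.iterate_succ_apply']

/-- Differentiability transfers to the shift-difference. -/
theorem G_diff {F : ℝ → ℝ} {h : ℝ} (hh : 0 < h) (k : ℕ)
    (hF : ∀ k' < k, ∀ z : ℝ, 0 < z → DifferentiableAt ℝ (deriv^[k'] F) z) :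
    ∀ k' < k, ∀ z : ℝ, 0 < z →
      DifferentiableAt ℝ (deriv^[k'] (fun y => F (y + h) - F y)) z := by
  intro k' hk' z hz
  have hev : deriv^[k'] (fun y => F (y + h) - F y)
      =ᶠ[𝓝 z] fun y => deriv^[k'] F (y + h) - deriv^[k'] F y := by
    filter_upwards [IsOpen.mem_nhds isOpen_Ioi hz] with y hy
    exact iter_deriv_shift hh k' (fun k'' hk'' => hF k'' (by omega)) y hy
  rw [EventuallyEq.differentiableAt_iff hev]
  have hd1 : DifferentiableAt ℝ (fun y => deriv^[k'] F (y + h)) z := by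
    have := DifferentiableAt.comp z (hF k' hk' (z + h) (by linarith))
      ((differentiableAt_id.add_const h) : DifferentiableAt ℝ (fun y : ℝ => y + h) z)
    exact this
  exact hd1.sub (hF k' hk' z hz)

/-- Iterated mean value theorem for finite differences. -/
theorem fdiff_mvt {h : ℝ} (hh : 0 < h) (j : ℕ) :
    ∀ (F : ℝ → ℝ), (∀ k < j, ∀ z : ℝ, 0 < z → DifferentiableAt ℝ (deriv^[k] F) z) →
    ∀ (a : ℝ), 0 < a →
    ∃ ξ, a ≤ ξ ∧ ξ ≤ a + j * h ∧ fdiff F h j a = h^j * deriv^[j] F ξ := by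
  induction j with
  | zero =>
    intro F _ a ha
    exact ⟨a, le_refl _, by simp, by simp [fdiff_zero]⟩
  | succ j ih =>
    intro F hF a ha
    have hG : ∀ k < j, ∀ z : ℝ, 0 < z →
        DifferentiableAt ℝ (deriv^[k] (fun y => F (y + h) - F y)) z :=
      fun k hk => G_diff hh (j+1) hF k (by omega)
    obtain ⟨ξ', h1, h2, h3⟩ := ih (fun y => F (y + h) - F y) hG a ha
    have hξ'pos : 0 < ξ' := lt_of_lt_of_le ha h1
    have hshift : deriv^[j] (fun y => F (y + h) - F y) ξ'
        = deriv^[j] F (ξ' + h) - deriv^[j] F ξ' :=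
      iter_deriv_shift hh j (fun k hk => hF k (by omega)) ξ' hξ'pos
    have hcont : ContinuousOn (deriv^[j] F) (Icc ξ' (ξ' + h)) := fun z hz =>
      ((hF j (by omega) z (lt_of_lt_of_le hξ'pos hz.1)).continuousAt).continuousWithinAt
    have hderiv : ∀ x ∈ Ioo ξ' (ξ' + h), HasDerivAt (deriv^[j] F) (deriv^[j+1] F x) x := by
      intro x hx
      have hxpos : 0 < x := hξ'pos.trans hx.1
      have hda := (hF j (by omega) x hxpos).hasDerivAt
      rw [Function.iterate_succ_apply']
      exact hda
    obtain ⟨ξ, hξmem, hξeq⟩ := exists_hasDerivAt_eq_slope (deriv^[j] F) (deriv^[j+1] F)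
      (by linarith : ξ' < ξ' + h) hcont hderiv
    refine ⟨ξ, by linarith [hξmem.1], ?_, ?_⟩
    · have := hξmem.2
      push_cast
      linarith
    · rw [fdiff_succ_inner, h3, hshift]
      have hmul : deriv^[j] F (ξ' + h) - deriv^[j] F ξ' = deriv^[j+1] F ξ * h := by
        rw [add_sub_cancel_left] at hξeq
        rw [hξeq]
        field_simp
      rw [hmul, pow_succ]
      ring

theorem choose_limit (j : ℕ) (a : ℝ) :
    Tendsto (fun n : ℕ => ((n + j).choose j : ℝ) * (a / n)^j) atTop
      (𝓝 (a^j / (j.factorial : ℝ))) := by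
  induction j with
  | zero => simpa using tendsto_const_nhds
  | succ j ih =>
    have hid : ∀ᶠ n : ℕ in atTop, (((n + j).choose j : ℝ) * (a / n)^j)
        * ((((n:ℝ) + j + 1) / n) * (a / (j+1)))
        = ((n + (j+1)).choose (j+1) : ℝ) * (a / n)^(j+1) := by
      filter_upwards [eventually_ge_atTop 1] with n hn
      have hn0 : (n:ℝ) ≠ 0 := by
        have : (0:ℝ) < n := by exact_mod_cast hn
        linarith
      have hch : ((n:ℝ) + j + 1) * ((n + j).choose j : ℝ)
          = ((n + j + 1).choose (j+1) : ℝ) * ((j:ℝ)+1) := by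
        exact_mod_cast congrArg (Nat.cast (R := ℝ)) (Nat.add_one_mul_choose_eq (n+j) j)
      have hj1 : ((j:ℝ)+1) ≠ 0 := by positivity
      have hnj : n + (j+1) = n + j + 1 := by omega
      rw [hnj, pow_succ]
      field_simp
      linear_combination (a^j * a * ((n:ℝ)⁻¹)^j) * hch
    have hfac : Tendsto (fun n : ℕ => (((n:ℝ) + j + 1) / n) * (a / (j+1))) atTop
        (𝓝 (a / (j+1))) := by
      have h1 : Tendsto (fun n : ℕ => ((n:ℝ) + j + 1) / n) atTop (𝓝 1) := by
        have h2 : ∀ᶠ n : ℕ in atTop, ((n:ℝ) + j + 1) / n = 1 + ((j:ℝ)+1) / n := by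
          filter_upwards [eventually_ge_atTop 1] with n hn
          have hn0 : (n:ℝ) ≠ 0 := by
            have : (0:ℝ) < n := by exact_mod_cast hn
            linarith
          field_simp
          ring
        rw [tendsto_congr' h2]
        have := (tendsto_const_div_atTop_nhds_zero_nat ((j:ℝ)+1)).const_add (1:ℝ)
        simpa using this
      have := h1.mul (tendsto_const_nhds (x := a / ((j:ℝ)+1)))
      simpa using this
    have hlim := ih.mul hfac
    rw [tendsto_congr' hid] at hlim
    have hfj : ((j.factorial : ℕ) : ℝ) ≠ 0 := Nat.cast_ne_zero.mpr j.factorial_ne_zero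
    have hval : a ^ j / (j.factorial : ℝ) * (a / ((j:ℝ)+1)) = a^(j+1)/((j+1).factorial : ℝ) := by
      rw [Nat.factorial_succ]
      push_cast
      field_simp
      ring
    rw [hval] at hlim
    exact hlim

end KendallAux


namespace KendallAux

theorem neg_one_pow_sq (n : ℕ) : (-1:ℝ)^n * (-1:ℝ)^n = 1 := by
  rw [← pow_add]
  exact Even.neg_one_pow ⟨n, by ring⟩

variable {d : ℕ} {ψ : ℝ → ℝ} {μ : Measure (Fin d → ℝ)}

theorem psi_iter_contAt (hd : 3 ≤ d) (hψ : IsdMonotoneGenerator d ψ) {k : ℕ} (hk : k ≤ d - 2)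
    {a : ℝ} (ha : 0 < a) : ContinuousAt (deriv^[k] ψ) a := by
  rcases lt_or_eq_of_le hk with hlt | heq
  · exact (hψ.differentiable k hlt a ha).continuousAt
  · subst heq
    have hcont : ContinuousAt (fun z => (-1:ℝ)^(d-2) * deriv^[d-2] ψ z) a :=
      (hψ.convexOn.continuousOn isOpen_Ioi).continuousAt (Ioi_mem_nhds ha)
    have h2 : ContinuousAt (fun z => (-1:ℝ)^(d-2) *
        ((-1:ℝ)^(d-2) * deriv^[d-2] ψ z)) a := continuousAt_const.mul hcont
    have heq2 : (fun z => (-1:ℝ)^(d-2) * ((-1:ℝ)^(d-2) * deriv^[d-2] ψ z))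
        = deriv^[d-2] ψ := by
      funext z
      rw [← mul_assoc, neg_one_pow_sq, one_mul]
    rwa [heq2] at h2

theorem measurableSet_Atop (hg : IsGenerator ψ) (b : ℝ) :
    MeasurableSet {x : Fin d → ℝ | (∀ i, x i ∈ Icc (0:ℝ) 1)
      ∧ ENNReal.ofReal b < ∑ i, cPI ψ (x i)} := by
  have hm : Measurable (fun x : Fin d → ℝ => ∑ i, cPI ψ (x i)) :=
    Finset.measurable_sum _ (fun i _ => (measurable_cPI hg).comp (measurable_pi_apply i))
  have heq : {x : Fin d → ℝ | (∀ i, x i ∈ Icc (0:ℝ) 1) ∧ ENNReal.ofReal b < ∑ i, cPI ψ (x i)}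
      = {x : Fin d → ℝ | ∀ i, x i ∈ Icc (0:ℝ) 1}
        ∩ (fun x : Fin d → ℝ => ∑ i, cPI ψ (x i)) ⁻¹' (Ioi (ENNReal.ofReal b)) := by
    ext x; simp [mem_setOf_eq]
  rw [heq]
  exact measurableSet_cube.inter (measurableSet_Ioi.preimage hm)

set_option maxHeartbeats 1000000 in
theorem ana (hd : 3 ≤ d) (hψ : IsdMonotoneGenerator d ψ) [IsProbabilityMeasure μ]
    (hμ : ∀ x : Fin d → ℝ, (∀ i, x i ∈ Icc (0 : ℝ) 1) →
      μ (Set.univ.pi fun i => Icc 0 (x i)) = ENNReal.ofReal (archCopula d ψ x))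
    {a : ℝ} (ha : 0 < a) :
    ∃ L : ℝ,
      (∀ y, 0 < y → y < a →
        ((-1:ℝ)^(d-2) * deriv^[d-2] ψ a - (-1:ℝ)^(d-2) * deriv^[d-2] ψ y) / (a - y) ≤ L) ∧
      (∀ z, a < z →
        L ≤ ((-1:ℝ)^(d-2) * deriv^[d-2] ψ z - (-1:ℝ)^(d-2) * deriv^[d-2] ψ a) / (z - a)) ∧
      (μ {x : Fin d → ℝ | (∀ i, x i ∈ Icc (0:ℝ) 1)
          ∧ ENNReal.ofReal a < ∑ i, cPI ψ (x i)}).toReal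
        = (∑ k ∈ Finset.range (d-1),
            deriv^[k] ψ a * ((-1:ℝ)^k / (k.factorial : ℝ)) * a^k)
          - L * a^(d-1) / (((d-1).factorial : ℕ) : ℝ) := by
  classical
  have hg : IsGenerator ψ := hψ.toIsGenerator
  set F2 : ℝ → ℝ := fun z => (-1:ℝ)^(d-2) * deriv^[d-2] ψ z with hF2def
  have hconv : ConvexOn ℝ (Ioi 0) F2 := hψ.convexOn
  set Atop : Set (Fin d → ℝ) := {x : Fin d → ℝ | (∀ i, x i ∈ Icc (0:ℝ) 1)
      ∧ ENNReal.ofReal a < ∑ i, cPI ψ (x i)} with hAtopdef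
  set P : ℝ := (μ Atop).toReal with hPdef
  set Sig : ℝ := ∑ k ∈ Finset.range (d-1),
      deriv^[k] ψ a * ((-1:ℝ)^k / (k.factorial : ℝ)) * a^k with hSigdef
  have hfacne : (((d-1).factorial : ℕ) : ℝ) ≠ 0 := Nat.cast_ne_zero.mpr (Nat.factorial_ne_zero _)
  have hane : a^(d-1) ≠ 0 := pow_ne_zero _ (ne_of_gt ha)
  set L : ℝ := (Sig - P) * (((d-1).factorial : ℕ) : ℝ) / a^(d-1) with hLdef
  -- Step A : the exact formula for the grid events
  have hform : ∀ n : ℕ, 1 ≤ n → (μ (EvSet ψ (a/n) d (n+1) (0 : Fin d → ℕ))).toReal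
      = ∑ j ∈ Finset.range d, ((n + j).choose j : ℝ) * Adiff ψ (a/n) j (n+1) := by
    intro n hn
    have hnpos : (0:ℝ) < n := by exact_mod_cast hn
    have hh : 0 < a/n := by positivity
    rw [CM hg hμ hh d (le_refl d) (n+1) (by omega) 0]
    refine Finset.sum_congr rfl fun j hj => ?_
    have h1 : n + 1 - 1 + j = n + j := by omega
    have h2 : Ktail (0 : Fin d → ℕ) d = 0 := by simp [Ktail]
    rw [h1, h2]
  -- Step B : sandwich
  have hupper : ∀ n : ℕ, 1 ≤ n → EvSet ψ (a/n) d (n+1) 0 ⊆ Atop := by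
    rintro n hn x ⟨hcube, _, k, _, hsum, hconstr⟩
    have hnpos : (0:ℝ) < n := by exact_mod_cast hn
    refine ⟨hcube, ?_⟩
    have hlt : a < ((n+1 : ℕ):ℝ) * (a/n) := by
      push_cast
      rw [add_mul, one_mul, mul_div_cancel₀ _ (ne_of_gt hnpos)]
      have : 0 < a/n := by positivity
      linarith
    calc ENNReal.ofReal a < ENNReal.ofReal (((n+1 : ℕ):ℝ) * (a/n)) := by
          rw [ENNReal.ofReal_lt_ofReal_iff (lt_trans ha hlt)]
          exact hlt
    _ = ∑ i, ENNReal.ofReal ((k i : ℝ) * (a/n)) := by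
          rw [← ENNReal.ofReal_sum_of_nonneg
            (fun i _ => mul_nonneg (Nat.cast_nonneg _) (by positivity))]
          congr 1
          rw [← Finset.sum_mul, ← Nat.cast_sum, hsum]
    _ ≤ ∑ i, cPI ψ (x i) := Finset.sum_le_sum fun i _ => hconstr i
  have hlower : ∀ n : ℕ, 1 ≤ n →
      {x : Fin d → ℝ | (∀ i, x i ∈ Icc (0:ℝ) 1)
        ∧ ENNReal.ofReal (a + ((d:ℝ)+1)*(a/n)) < ∑ i, cPI ψ (x i)}
      ⊆ EvSet ψ (a/n) d (n+1) 0 := by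
    rintro n hn x ⟨hcube, hgt⟩
    have hnpos : (0:ℝ) < n := by exact_mod_cast hn
    have hh : 0 < a/n := by positivity
    refine ⟨hcube, fun i hi => absurd i.isLt (by omega), ?_⟩
    by_cases hfin : ∀ i, cPI ψ (x i) ≠ ∞
    · set w : Fin d → ℝ := fun i => (cPI ψ (x i)).toReal with hwdef
      have hw0 : ∀ i, 0 ≤ w i := fun i => ENNReal.toReal_nonneg
      have hsumw : a + ((d:ℝ)+1)*(a/n) < ∑ i, w i := by
        have hsw : ∑ i, cPI ψ (x i) = ENNReal.ofReal (∑ i, w i) := by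
          rw [ENNReal.ofReal_sum_of_nonneg (fun i _ => hw0 i)]
          exact Finset.sum_congr rfl fun i _ => (ENNReal.ofReal_toReal (hfin i)).symm
        rw [hsw] at hgt
        exact (ENNReal.ofReal_lt_ofReal_iff_of_nonneg (by positivity)).1 hgt
      set l : Fin d → ℕ := fun i => ⌊w i / (a/n)⌋₊ with hldef
      have hl : ∀ i, (l i : ℝ) * (a/n) ≤ w i := by
        intro i
        have hfl := Nat.floor_le (a := w i / (a/n)) (by positivity)
        calc (l i : ℝ) * (a/n) ≤ (w i / (a/n)) * (a/n) :=
              mul_le_mul_of_nonneg_right hfl (le_of_lt hh)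
        _ = w i := by field_simp
      have hlsum : n + 1 ≤ ∑ i, l i := by
        by_contra hc
        push_neg at hc
        have hcR : ((∑ i, l i : ℕ) : ℝ) ≤ n := by
          have : (∑ i, l i) ≤ n := by omega
          exact_mod_cast this
        have hub : ∑ i, w i < ∑ i, ((l i : ℝ) + 1) * (a/n) := by
          have hne : (Finset.univ : Finset (Fin d)).Nonempty := by
            refine Finset.univ_nonempty_iff.2 ?_
            exact Fin.pos_iff_nonempty.1 (by omega)
          refine Finset.sum_lt_sum_of_nonempty hne fun i _ => ?_
          have hflt := Nat.lt_floor_add_one (w i / (a/n))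
          calc w i = (w i / (a/n)) * (a/n) := by field_simp
          _ < ((l i : ℝ) + 1) * (a/n) := by
              exact mul_lt_mul_of_pos_right hflt hh
        have hsum2 : ∑ i, ((l i : ℝ) + 1) * (a/n)
            = ((∑ i, l i : ℕ) : ℝ) * (a/n) + (d:ℝ) * (a/n) := by
          push_cast
          rw [← Finset.sum_mul, Finset.sum_add_distrib, Finset.sum_const, Finset.card_fin]
          push_cast
          ring
        rw [hsum2] at hub
        have : ((∑ i, l i : ℕ) : ℝ) * (a/n) ≤ (n:ℝ) * (a/n) :=
          mul_le_mul_of_nonneg_right hcR (le_of_lt hh)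
        have hna : (n:ℝ) * (a/n) = a := mul_div_cancel₀ _ (ne_of_gt hnpos)
        nlinarith
      obtain ⟨k, hkle, hksum⟩ := exists_reduce l (n+1) hlsum
      refine ⟨k, fun i hi => absurd i.isLt (by omega), hksum, fun i => ?_⟩
      calc ENNReal.ofReal ((k i : ℝ) * (a/n)) ≤ ENNReal.ofReal (w i) := by
            refine ENNReal.ofReal_le_ofReal (le_trans ?_ (hl i))
            exact mul_le_mul_of_nonneg_right (Nat.cast_le.2 (hkle i)) (le_of_lt hh)
      _ = cPI ψ (x i) := ENNReal.ofReal_toReal (hfin i)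
    · push_neg at hfin
      obtain ⟨i0, hi0⟩ := hfin
      refine ⟨fun i => if i = i0 then n+1 else 0,
        fun i hi => absurd i.isLt (by omega), ?_, fun i => ?_⟩
      · rw [Finset.sum_ite_eq' Finset.univ i0 fun _ => n+1]
        simp
      · by_cases hieq : i = i0
        · subst hieq
          rw [hi0]
          exact le_top
        · simp [hieq]
  -- Step C : convergence of the grid measures
  have htendP : Tendsto (fun n : ℕ => (μ (EvSet ψ (a/n) d (n+1) 0)).toReal) atTop (𝓝 P) := by
    set B : ℕ → Set (Fin d → ℝ) := fun m =>
      {x : Fin d → ℝ | (∀ i, x i ∈ Icc (0:ℝ) 1)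
        ∧ ENNReal.ofReal (a + ((d:ℝ)+1)*(a/(m+1))) < ∑ i, cPI ψ (x i)} with hBdef
    have hBsub : ∀ m, B m ⊆ Atop := by
      rintro m x ⟨hcube, hgt⟩
      refine ⟨hcube, lt_of_le_of_lt (ENNReal.ofReal_le_ofReal ?_) hgt⟩
      have : (0:ℝ) < (m:ℝ)+1 := by positivity
      have h2 : 0 < a/((m:ℝ)+1) := by positivity
      nlinarith
    have hBmono : Monotone B := by
      intro m m' hmm x hx
      obtain ⟨hcube, hgt⟩ := hx
      refine ⟨hcube, lt_of_le_of_lt (ENNReal.ofReal_le_ofReal ?_) hgt⟩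
      have hm1 : (0:ℝ) < (m:ℝ)+1 := by positivity
      have hm2 : (0:ℝ) < (m':ℝ)+1 := by positivity
      have hle : (m:ℝ)+1 ≤ (m':ℝ)+1 := by
        have : (m:ℝ) ≤ m' := by exact_mod_cast hmm
        linarith
      have := div_le_div_of_nonneg_left (le_of_lt ha) hm1 hle
      nlinarith
    have hBunion : ⋃ m, B m = Atop := by
      refine subset_antisymm (iUnion_subset hBsub) ?_
      rintro x ⟨hcube, hgt⟩
      rcases eq_or_ne (∑ i, cPI ψ (x i)) ∞ with htop | htop
      · exact mem_iUnion.2 ⟨0, hcube, by rw [htop]; exact ENNReal.ofReal_lt_top⟩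
      · have hta : a < (∑ i, cPI ψ (x i)).toReal := by
          have := ENNReal.toReal_lt_toReal ENNReal.ofReal_ne_top htop |>.2 hgt
          rwa [ENNReal.toReal_ofReal (le_of_lt ha)] at this
        set S := (∑ i, cPI ψ (x i)).toReal
        obtain ⟨m, hm⟩ := exists_nat_gt (((d:ℝ)+1) * a / (S - a))
        refine mem_iUnion.2 ⟨m, hcube, ?_⟩
        have hSa : 0 < S - a := by simp only [S]; linarith
        have hm1 : (0:ℝ) < (m:ℝ)+1 := by positivity
        have hkey : a + ((d:ℝ)+1)*(a/(m+1)) < S := by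
          have h3 : ((d:ℝ)+1) * a / (S - a) < (m:ℝ)+1 := by
            have : (m:ℝ) < (m:ℝ)+1 := by linarith
            linarith
          have h4 : ((d:ℝ)+1) * a < ((m:ℝ)+1) * (S - a) := by
            rw [div_lt_iff₀ hSa] at h3
            nlinarith
          have h5 : ((d:ℝ)+1)*(a/(m+1)) < S - a := by
            rw [mul_div_assoc', div_lt_iff₀ hm1]
            nlinarith
          linarith
        calc ENNReal.ofReal (a + ((d:ℝ)+1)*(a/(m+1)))
            < ENNReal.ofReal S := by
              rw [ENNReal.ofReal_lt_ofReal_iff (by simp only [S]; linarith)]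
              exact hkey
        _ = ∑ i, cPI ψ (x i) := ENNReal.ofReal_toReal htop
    have htendB : Tendsto (fun m => μ (B m)) atTop (𝓝 (μ Atop)) := by
      rw [← hBunion]
      exact tendsto_measure_iUnion_atTop hBmono
    have htendB' : Tendsto (fun m => (μ (B m)).toReal) atTop (𝓝 P) :=
      (ENNReal.tendsto_toReal (measure_ne_top μ Atop)).comp htendB
    have hcomp : Tendsto (fun n : ℕ => (μ (B (n-1))).toReal) atTop (𝓝 P) :=
      htendB'.comp (tendsto_sub_atTop_nat 1)
    refine tendsto_of_tendsto_of_tendsto_of_le_of_le'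
      (g := fun n : ℕ => (μ (B (n-1))).toReal)
      (h := fun n : ℕ => P) hcomp tendsto_const_nhds ?_ ?_
    · filter_upwards [eventually_ge_atTop 1] with n hn
      have hBn : B (n-1) ⊆ EvSet ψ (a/n) d (n+1) 0 := by
        have hidx : ((n-1 : ℕ):ℝ) + 1 = (n:ℝ) := by
          have : (n - 1) + 1 = n := by omega
          exact_mod_cast congrArg (Nat.cast (R := ℝ)) this
        intro x hx
        refine hlower n hn ?_
        obtain ⟨hcube, hgt⟩ := hx
        refine ⟨hcube, ?_⟩
        rwa [hidx] at hgt
      exact ENNReal.toReal_mono (measure_ne_top μ _) (measure_mono hBn)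
    · filter_upwards [eventually_ge_atTop 1] with n hn
      exact ENNReal.toReal_mono (measure_ne_top μ _) (measure_mono (hupper n hn))
  -- Step D : term-by-term limits for j ≤ d - 2
  have hterm : ∀ j, j ≤ d - 2 →
      Tendsto (fun n : ℕ => ((n + j).choose j : ℝ) * Adiff ψ (a/n) j (n+1)) atTop
        (𝓝 (deriv^[j] ψ a * ((-1:ℝ)^j / (j.factorial : ℝ)) * a^j)) := by
    intro j hj
    have hex : ∀ n : ℕ, ∃ ξ : ℝ, 1 ≤ n → (a + a/n ≤ ξ ∧ ξ ≤ a + a/n + j*(a/n) ∧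
        Adiff ψ (a/n) j (n+1) = (-1:ℝ)^j * ((a/n)^j * deriv^[j] ψ ξ)) := by
      intro n
      by_cases hn : 1 ≤ n
      · have hnpos : (0:ℝ) < n := by exact_mod_cast hn
        have hh : 0 < a/n := by positivity
        have harg : ((n+1 : ℕ):ℝ) * (a/n) = a + a/n := by
          push_cast
          field_simp
        obtain ⟨ξ, h1, h2, h3⟩ := fdiff_mvt hh j ψ
          (fun k hk z hz => hψ.differentiable k (by omega) z hz) (a + a/n) (by positivity)
        refine ⟨ξ, fun _ => ⟨h1, h2, ?_⟩⟩
        rw [Adiff_eq_fdiff, harg, h3]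
      · exact ⟨a, fun h => absurd h hn⟩
    choose ξ hξ using hex
    have hdiv0 : Tendsto (fun n : ℕ => a/n) atTop (𝓝 0) :=
      tendsto_const_div_atTop_nhds_zero_nat a
    have hξlim : Tendsto ξ atTop (𝓝 a) := by
      refine tendsto_of_tendsto_of_tendsto_of_le_of_le'
        (g := fun n : ℕ => a + a/n) (h := fun n : ℕ => a + a/n + j*(a/n)) ?_ ?_ ?_ ?_
      · simpa using tendsto_const_nhds.add hdiv0
      · have : Tendsto (fun n : ℕ => a + a/n + j*(a/n)) atTop (𝓝 (a + 0 + j*0)) :=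
          (tendsto_const_nhds.add hdiv0).add (tendsto_const_nhds.mul hdiv0)
        simpa using this
      · filter_upwards [eventually_ge_atTop 1] with n hn
        exact (hξ n hn).1
      · filter_upwards [eventually_ge_atTop 1] with n hn
        exact (hξ n hn).2.1
    have hcont := psi_iter_contAt hd hψ hj ha
    have hψlim : Tendsto (fun n => deriv^[j] ψ (ξ n)) atTop (𝓝 (deriv^[j] ψ a)) :=
      hcont.tendsto.comp hξlim
    have hchoose := choose_limit j a
    have hcomb : Tendsto (fun n : ℕ =>
        (((n + j).choose j : ℝ) * (a/n)^j) * ((-1:ℝ)^j * deriv^[j] ψ (ξ n))) atTop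
        (𝓝 ((a^j / (j.factorial : ℝ)) * ((-1:ℝ)^j * deriv^[j] ψ a))) :=
      hchoose.mul (tendsto_const_nhds.mul hψlim)
    have heve : ∀ᶠ n : ℕ in atTop,
        (((n + j).choose j : ℝ) * (a/n)^j) * ((-1:ℝ)^j * deriv^[j] ψ (ξ n))
        = ((n + j).choose j : ℝ) * Adiff ψ (a/n) j (n+1) := by
      filter_upwards [eventually_ge_atTop 1] with n hn
      rw [(hξ n hn).2.2]
      ring
    have hval : (a^j / (j.factorial : ℝ)) * ((-1:ℝ)^j * deriv^[j] ψ a)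
        = deriv^[j] ψ a * ((-1:ℝ)^j / (j.factorial : ℝ)) * a^j := by ring
    have hfin := (tendsto_congr' heve).1 hcomb
    rwa [hval] at hfin
  -- Step E : the top order term
  have hdm1 : d - 1 = (d - 2) + 1 := by omega
  have hFdiff : ∀ k < d-2, ∀ z : ℝ, 0 < z → DifferentiableAt ℝ (deriv^[k] ψ) z :=
    fun k hk z hz => hψ.differentiable k hk z hz
  have hexT : ∀ n : ℕ, ∃ ξ : ℝ, 1 ≤ n → (a + a/n ≤ ξ ∧ ξ ≤ a + a/n + ((d-2 : ℕ):ℝ)*(a/n) ∧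
      Adiff ψ (a/n) (d-1) (n+1) = (-1:ℝ)^(d-1) * ((a/n)^(d-2) *
        (deriv^[d-2] ψ (ξ + a/n) - deriv^[d-2] ψ ξ))) := by
    intro n
    by_cases hn : 1 ≤ n
    · have hnpos : (0:ℝ) < n := by exact_mod_cast hn
      have hh : 0 < a/n := by positivity
      have harg : ((n+1 : ℕ):ℝ) * (a/n) = a + a/n := by
        push_cast
        field_simp
      obtain ⟨ξ, h1, h2, h3⟩ := fdiff_mvt hh (d-2) (fun y => ψ (y + a/n) - ψ y)
        (G_diff hh (d-2) hFdiff) (a + a/n) (by positivity)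
      have hξpos : 0 < ξ := lt_of_lt_of_le (by positivity) h1
      have hshift : deriv^[d-2] (fun y => ψ (y + a/n) - ψ y) ξ
          = deriv^[d-2] ψ (ξ + a/n) - deriv^[d-2] ψ ξ :=
        iter_deriv_shift hh (d-2) hFdiff ξ hξpos
      refine ⟨ξ, fun _ => ⟨h1, h2, ?_⟩⟩
      rw [Adiff_eq_fdiff, harg, hdm1, fdiff_succ_inner, h3, hshift]
    · exact ⟨a, fun h => absurd h hn⟩
  choose ξT hξT using hexT
  have hdiv0 : Tendsto (fun n : ℕ => a/n) atTop (𝓝 0) :=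
    tendsto_const_div_atTop_nhds_zero_nat a
  have hξTlim : Tendsto ξT atTop (𝓝 a) := by
    refine tendsto_of_tendsto_of_tendsto_of_le_of_le'
      (g := fun n : ℕ => a + a/n)
      (h := fun n : ℕ => a + a/n + ((d-2 : ℕ):ℝ)*(a/n)) ?_ ?_ ?_ ?_
    · simpa using tendsto_const_nhds.add hdiv0
    · have : Tendsto (fun n : ℕ => a + a/n + ((d-2 : ℕ):ℝ)*(a/n)) atTop
          (𝓝 (a + 0 + ((d-2 : ℕ):ℝ)*0)) :=
        (tendsto_const_nhds.add hdiv0).add (tendsto_const_nhds.mul hdiv0)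
      simpa using this
    · filter_upwards [eventually_ge_atTop 1] with n hn
      exact (hξT n hn).1
    · filter_upwards [eventually_ge_atTop 1] with n hn
      exact (hξT n hn).2.1
  have hξTlim' : Tendsto (fun n => ξT n + a/n) atTop (𝓝 a) := by
    simpa using hξTlim.add hdiv0
  set sig : ℕ → ℝ := fun n => (F2 (ξT n + a/n) - F2 (ξT n)) / (a/n) with hsigdef
  have hTop_eq : ∀ n : ℕ, 1 ≤ n →
      ((n + (d-1)).choose (d-1) : ℝ) * Adiff ψ (a/n) (d-1) (n+1)
      = -((((n + (d-1)).choose (d-1) : ℝ)) * (a/n)^(d-1)) * sig n := by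
    intro n hn
    have hnpos : (0:ℝ) < n := by exact_mod_cast hn
    have hh : 0 < a/n := by positivity
    have hhne : a/n ≠ 0 := ne_of_gt hh
    obtain ⟨h1, h2, h3⟩ := hξT n hn
    rw [h3]
    simp only [hsigdef, hF2def]
    rw [hdm1, pow_succ, pow_succ]
    field_simp
  -- convergence of the top term
  have hT_tendsto : Tendsto (fun n : ℕ =>
      ((n + (d-1)).choose (d-1) : ℝ) * Adiff ψ (a/n) (d-1) (n+1)) atTop (𝓝 (P - Sig)) := by
    have hsplit : ∀ᶠ n : ℕ in atTop,
        ((n + (d-1)).choose (d-1) : ℝ) * Adiff ψ (a/n) (d-1) (n+1)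
        = (μ (EvSet ψ (a/n) d (n+1) 0)).toReal
          - ∑ j ∈ Finset.range (d-1), ((n + j).choose j : ℝ) * Adiff ψ (a/n) j (n+1) := by
      filter_upwards [eventually_ge_atTop 1] with n hn
      rw [hform n hn]
      have hsr : ∑ j ∈ Finset.range d, ((n + j).choose j : ℝ) * Adiff ψ (a/n) j (n+1)
          = (∑ j ∈ Finset.range (d-1), ((n + j).choose j : ℝ) * Adiff ψ (a/n) j (n+1))
            + ((n + (d-1)).choose (d-1) : ℝ) * Adiff ψ (a/n) (d-1) (n+1) := by
        rw [← Finset.sum_range_succ, show (d-1)+1 = d from by omega]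
      rw [hsr]
      ring
    have hsum_tendsto : Tendsto (fun n : ℕ =>
        ∑ j ∈ Finset.range (d-1), ((n + j).choose j : ℝ) * Adiff ψ (a/n) j (n+1)) atTop
        (𝓝 Sig) := by
      rw [hSigdef]
      refine tendsto_finset_sum _ fun j hj => hterm j ?_
      have := Finset.mem_range.1 hj
      omega
    exact (tendsto_congr' hsplit).2 (htendP.sub hsum_tendsto)
  have hCtend := choose_limit (d-1) a
  have hsig_tendsto : Tendsto sig atTop (𝓝 L) := by
    have hdenne : a^(d-1)/(((d-1).factorial : ℕ):ℝ) ≠ 0 := by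
      refine div_ne_zero hane hfacne
    have hquot : Tendsto (fun n : ℕ =>
        -(((n + (d-1)).choose (d-1) : ℝ) * Adiff ψ (a/n) (d-1) (n+1))
          / (((n + (d-1)).choose (d-1) : ℝ) * (a/n)^(d-1))) atTop
        (𝓝 (-(P - Sig) / (a^(d-1)/(((d-1).factorial : ℕ):ℝ)))) :=
      (hT_tendsto.neg).div hCtend hdenne
    have hval : -(P - Sig) / (a^(d-1)/(((d-1).factorial : ℕ):ℝ)) = L := by
      rw [hLdef]
      field_simp
      ring
    rw [hval] at hquot
    refine (tendsto_congr' ?_).2 hquot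
    filter_upwards [eventually_ge_atTop 1] with n hn
    have hnpos : (0:ℝ) < n := by exact_mod_cast hn
    have hh : 0 < a/n := by positivity
    have hCpos : (0:ℝ) < ((n + (d-1)).choose (d-1) : ℝ) := by
      exact_mod_cast Nat.choose_pos (by omega)
    rw [hTop_eq n hn]
    field_simp
  refine ⟨L, ?_, ?_, ?_⟩
  · -- lower slope bound
    intro y hy0 hya
    refine ge_of_tendsto hsig_tendsto ?_
    filter_upwards [eventually_ge_atTop 1] with n hn
    have hnpos : (0:ℝ) < n := by exact_mod_cast hn
    have hh : 0 < a/n := by positivity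
    obtain ⟨h1, h2, _⟩ := hξT n hn
    have hξa : a < ξT n := by linarith
    have s1 : (F2 a - F2 y)/(a - y) ≤ (F2 (ξT n) - F2 a)/(ξT n - a) :=
      hconv.slope_mono_adjacent (mem_Ioi.2 hy0) (mem_Ioi.2 (lt_trans ha hξa)) hya hξa
    have s2 : (F2 (ξT n) - F2 a)/(ξT n - a)
        ≤ (F2 (ξT n + a/n) - F2 (ξT n))/((ξT n + a/n) - ξT n) :=
      hconv.slope_mono_adjacent (mem_Ioi.2 ha) (mem_Ioi.2 (by linarith)) hξa (by linarith)
    rw [show ξT n + a/n - ξT n = a/n from by ring] at s2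
    have : (F2 a - F2 y)/(a - y) ≤ sig n := by
      simp only [hsigdef]
      linarith
    exact this
  · -- upper slope bound
    intro z hz
    have hF2cont : ContinuousAt F2 a :=
      (hconv.continuousOn isOpen_Ioi).continuousAt (Ioi_mem_nhds ha)
    have hρ : Tendsto (fun n : ℕ => (F2 z - F2 (ξT n + a/n))/(z - (ξT n + a/n))) atTop
        (𝓝 ((F2 z - F2 a)/(z - a))) := by
      have h1 : Tendsto (fun n : ℕ => F2 (ξT n + a/n)) atTop (𝓝 (F2 a)) :=
        hF2cont.tendsto.comp hξTlim'
      have h2 : Tendsto (fun n : ℕ => z - (ξT n + a/n)) atTop (𝓝 (z - a)) :=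
        tendsto_const_nhds.sub hξTlim'
      exact (tendsto_const_nhds.sub h1).div h2 (ne_of_gt (by linarith))
    refine le_of_tendsto_of_tendsto hsig_tendsto hρ ?_
    have hevlt : ∀ᶠ n : ℕ in atTop, ξT n + a/n < z := hξTlim'.eventually_lt_const hz
    filter_upwards [eventually_ge_atTop 1, hevlt] with n hn hlt
    have hnpos : (0:ℝ) < n := by exact_mod_cast hn
    have hh : 0 < a/n := by positivity
    obtain ⟨h1, h2, _⟩ := hξT n hn
    have hξpos : 0 < ξT n := by linarith [div_pos ha hnpos]
    have s3 : (F2 (ξT n + a/n) - F2 (ξT n))/((ξT n + a/n) - ξT n)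
        ≤ (F2 z - F2 (ξT n + a/n))/(z - (ξT n + a/n)) :=
      hconv.slope_mono_adjacent (mem_Ioi.2 hξpos) (mem_Ioi.2 (lt_trans ha hz))
        (by linarith) hlt
    rw [show ξT n + a/n - ξT n = a/n from by ring] at s3
    simpa only [hsigdef] using s3
  · -- the value identity
    rw [hLdef]
    field_simp
    ring


end KendallAux


namespace KendallAux

variable {d : ℕ} {ψ : ℝ → ℝ} {μ : Measure (Fin d → ℝ)}

theorem neg_one_pow_mul (hd : 3 ≤ d) : (-1:ℝ)^(d-2) * (-1:ℝ)^(d-1) = -1 := by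
  have h1 : d - 1 = (d-2) + 1 := by omega
  rw [h1, pow_succ, ← mul_assoc, neg_one_pow_sq, one_mul]

set_option maxHeartbeats 1000000 in
theorem glue (hd : 3 ≤ d) (hψ : IsdMonotoneGenerator d ψ) [IsProbabilityMeasure μ]
    (hμ : ∀ x : Fin d → ℝ, (∀ i, x i ∈ Icc (0 : ℝ) 1) →
      μ (Set.univ.pi fun i => Icc 0 (x i)) = ENNReal.ofReal (archCopula d ψ x))
    {s : ℝ} (hs : 0 < s) :
    (μ {x : Fin d → ℝ | (∀ i, x i ∈ Icc (0:ℝ) 1)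
        ∧ ENNReal.ofReal s ≤ ∑ i, cPI ψ (x i)}).toReal
      = leftDeriv (deriv^[d-2] ψ) s * ((-1:ℝ)^(d-1) / ((d-1).factorial : ℝ)) * s^(d-1)
        + ∑ k ∈ Finset.range (d-1),
            deriv^[k] ψ s * ((-1:ℝ)^k / (k.factorial : ℝ)) * s^k := by
  classical
  have hg : IsGenerator ψ := hψ.toIsGenerator
  set F2 : ℝ → ℝ := fun z => (-1:ℝ)^(d-2) * deriv^[d-2] ψ z with hF2def
  have hconv : ConvexOn ℝ (Ioi 0) F2 := hψ.convexOn
  set g : ℝ → ℝ := fun y => (F2 s - F2 y)/(s - y) with hgdef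
  -- the approximating radii
  set rm : ℕ → ℝ := fun m => s - s/(m+2) with hrmdef
  have hrm_pos : ∀ m, 0 < rm m := by
    intro m
    have h2 : (0:ℝ) < (m:ℝ)+2 := by positivity
    have : s/((m:ℝ)+2) ≤ s/2 := by
      apply div_le_div_of_nonneg_left (le_of_lt hs) (by norm_num)
      have : (0:ℝ) ≤ (m:ℝ) := Nat.cast_nonneg m
      linarith
    simp only [hrmdef]
    push_cast
    nlinarith
  have hrm_lt : ∀ m, rm m < s := by
    intro m
    have h2 : (0:ℝ) < (m:ℝ)+2 := by positivity
    have : 0 < s/((m:ℝ)+2) := by positivity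
    simp only [hrmdef]
    push_cast
    linarith
  have hrm_mono : Monotone rm := by
    intro m m' hmm
    simp only [hrmdef]
    have h2 : (0:ℝ) < (m:ℝ)+2 := by positivity
    have h2' : (0:ℝ) < (m':ℝ)+2 := by positivity
    have hle : (m:ℝ)+2 ≤ (m':ℝ)+2 := by
      have : (m:ℝ) ≤ (m':ℝ) := by exact_mod_cast hmm
      linarith
    have := div_le_div_of_nonneg_left (le_of_lt hs) h2 hle
    push_cast
    linarith
  have hrm_lim : Tendsto rm atTop (𝓝 s) := by
    have h1 : Tendsto (fun m : ℕ => s/((m:ℝ)+2)) atTop (𝓝 0) := by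
      have h0 := (tendsto_const_div_atTop_nhds_zero_nat s).comp (tendsto_add_atTop_nat 2)
      refine h0.congr fun m => ?_
      show s / ((m+2 : ℕ):ℝ) = s/((m:ℝ)+2)
      push_cast
      ring
    have h2 := (tendsto_const_nhds (x := s)).sub h1
    simpa using h2
  -- the intersection identity
  set Bm : ℕ → Set (Fin d → ℝ) := fun m =>
    {x : Fin d → ℝ | (∀ i, x i ∈ Icc (0:ℝ) 1)
      ∧ ENNReal.ofReal (rm m) < ∑ i, cPI ψ (x i)} with hBmdef
  have hInter : ⋂ m, Bm m = {x : Fin d → ℝ | (∀ i, x i ∈ Icc (0:ℝ) 1)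
      ∧ ENNReal.ofReal s ≤ ∑ i, cPI ψ (x i)} := by
    ext x
    simp only [mem_iInter, hBmdef, mem_setOf_eq]
    constructor
    · rintro hall
      refine ⟨(hall 0).1, ?_⟩
      by_contra hc
      push_neg at hc
      have hne : (∑ i, cPI ψ (x i)) ≠ ∞ := ne_top_of_lt (lt_of_lt_of_le hc le_top)
      have hlt : (∑ i, cPI ψ (x i)).toReal < s := by
        have := (ENNReal.toReal_lt_toReal hne ENNReal.ofReal_ne_top).2 hc
        rwa [ENNReal.toReal_ofReal (le_of_lt hs)] at this
      set T := (∑ i, cPI ψ (x i)).toReal with hTdef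
      have hTs : 0 < s - T := by linarith
      obtain ⟨m, hm⟩ := exists_nat_gt (s / (s - T))
      have hm2 : s / (s - T) < (m:ℝ) + 2 := by
        have : (m:ℝ) < (m:ℝ)+2 := by linarith
        linarith
      have hrmT : T < rm m := by
        have h2 : (0:ℝ) < (m:ℝ)+2 := by positivity
        have h3 : s < (s - T) * ((m:ℝ)+2) := by
          rw [div_lt_iff₀ hTs] at hm2
          nlinarith
        have h4 : s/((m:ℝ)+2) < s - T := by
          rw [div_lt_iff₀ h2]
          nlinarith
        simp only [hrmdef]
        push_cast
        linarith
      have := hall m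
      obtain ⟨_, hgt⟩ := this
      have hcontra : (∑ i, cPI ψ (x i)) < ENNReal.ofReal (rm m) := by
        have : (∑ i, cPI ψ (x i)) = ENNReal.ofReal T := (ENNReal.ofReal_toReal hne).symm
        rw [this]
        rw [ENNReal.ofReal_lt_ofReal_iff (hrm_pos m)]
        exact hrmT
      exact absurd hgt (not_lt.2 (le_of_lt hcontra))
    · rintro ⟨hcube, hge⟩ m
      refine ⟨hcube, lt_of_lt_of_le ?_ hge⟩
      rw [ENNReal.ofReal_lt_ofReal_iff hs]
      exact hrm_lt m
  -- convergence of measures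
  have htend : Tendsto (fun m => (μ (Bm m)).toReal) atTop
      (𝓝 ((μ {x : Fin d → ℝ | (∀ i, x i ∈ Icc (0:ℝ) 1)
        ∧ ENNReal.ofReal s ≤ ∑ i, cPI ψ (x i)}).toReal)) := by
    have hmeas : ∀ m, NullMeasurableSet (Bm m) μ :=
      fun m => (measurableSet_Atop hg (rm m)).nullMeasurableSet
    have hanti : Antitone Bm := by
      intro m m' hmm x hx
      obtain ⟨hcube, hgt⟩ := hx
      exact ⟨hcube, lt_of_le_of_lt (ENNReal.ofReal_le_ofReal (hrm_mono hmm)) hgt⟩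
    have h1 : Tendsto (fun m => μ (Bm m)) atTop (𝓝 (μ (⋂ m, Bm m))) :=
      tendsto_measure_iInter_atTop hmeas hanti ⟨0, measure_ne_top μ _⟩
    rw [hInter] at h1
    exact (ENNReal.tendsto_toReal (measure_ne_top μ _)).comp h1
  -- apply `ana` at each rm
  have hana := fun m => ana hd hψ hμ (hrm_pos m)
  choose Lm hlow hupp hval using hana
  -- the left derivative
  set Sstar : ℝ := sSup (g '' Ioo 0 s) with hSstardef
  have hgeq : ∀ y : ℝ, y ≠ s → g y = (F2 y - F2 s)/(y - s) := by
    intro y hy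
    simp only [hgdef]
    rw [← neg_sub (F2 y) (F2 s), ← neg_sub y s, neg_div_neg_eq]
  have hmono : MonotoneOn g (Ioo 0 s) := by
    intro y1 hy1 y2 hy2 h12
    rw [hgeq y1 (ne_of_lt hy1.2), hgeq y2 (ne_of_lt hy2.2)]
    exact hconv.secant_mono (mem_Ioi.2 hs) (mem_Ioi.2 hy1.1) (mem_Ioi.2 hy2.1)
      (ne_of_lt hy1.2) (ne_of_lt hy2.2) h12
  have hbdd : BddAbove (g '' Ioo 0 s) := by
    refine ⟨(F2 (s+1) - F2 s)/((s+1) - s), ?_⟩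
    rintro v ⟨y, hy, rfl⟩
    have h5 := hconv.slope_mono_adjacent (mem_Ioi.2 hy.1)
      (mem_Ioi.2 (by linarith : (0:ℝ) < s+1)) hy.2 (by linarith : s < s+1)
    simpa only [hgdef] using h5
  have hnonempty : (Ioo (0:ℝ) s).Nonempty := ⟨s/2, ⟨by positivity, by linarith⟩⟩
  have htendsSlope : Tendsto g (𝓝[<] s) (𝓝 Sstar) :=
    MonotoneOn.tendsto_nhdsWithin_Ioo_left hnonempty hmono hbdd
  have hHasD : HasDerivWithinAt F2 Sstar (Iio s) s := by
    rw [hasDerivWithinAt_iff_tendsto_slope, diff_singleton_eq_self (by simp)]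
    have hgs : slope F2 s = g := by
      funext y
      rcases eq_or_ne y s with rfl | hy
      · simp [slope_def_field, hgdef]
      · rw [slope_def_field, hgeq y hy]
    rwa [hgs]
  have hcancel : (fun z => (-1:ℝ)^(d-2) * F2 z) = deriv^[d-2] ψ := by
    funext z
    simp only [hF2def]
    rw [← mul_assoc, neg_one_pow_sq, one_mul]
  have hLeft : leftDeriv (deriv^[d-2] ψ) s = (-1:ℝ)^(d-2) * Sstar := by
    have hf : HasDerivWithinAt (fun z => (-1:ℝ)^(d-2) * F2 z) ((-1:ℝ)^(d-2) * Sstar)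
        (Iio s) s := hHasD.const_mul _
    rw [hcancel] at hf
    exact hf.derivWithin (uniqueDiffWithinAt_Iio s)
  -- convergence of Lm to Sstar
  have hLle : ∀ m, Lm m ≤ Sstar := by
    intro m
    have h1 := hupp m s (hrm_lt m)
    have h2 : ((-1:ℝ)^(d-2) * deriv^[d-2] ψ s - (-1:ℝ)^(d-2) * deriv^[d-2] ψ (rm m))
        / (s - rm m) = g (rm m) := by
      simp only [hgdef, hF2def]
    rw [h2] at h1
    exact h1.trans (le_csSup hbdd ⟨rm m, ⟨hrm_pos m, hrm_lt m⟩, rfl⟩)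
  have hF2cs : ContinuousAt F2 s :=
    (hconv.continuousOn isOpen_Ioi).continuousAt (Ioi_mem_nhds hs)
  have hLlim : Tendsto Lm atTop (𝓝 Sstar) := by
    rw [tendsto_order]
    constructor
    · intro b hb
      obtain ⟨v, ⟨y, hy, rfl⟩, hbv⟩ := exists_lt_of_lt_csSup (hnonempty.image g) hb
      have hslope_tend : Tendsto (fun m => (F2 (rm m) - F2 y)/(rm m - y)) atTop
          (𝓝 ((F2 s - F2 y)/(s - y))) := by
        have h1 : Tendsto (fun m => F2 (rm m)) atTop (𝓝 (F2 s)) :=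
          hF2cs.tendsto.comp hrm_lim
        exact (h1.sub tendsto_const_nhds).div (hrm_lim.sub tendsto_const_nhds)
          (ne_of_gt (by linarith [hy.2]))
      have hevgt : ∀ᶠ m in atTop, b < (F2 (rm m) - F2 y)/(rm m - y) := by
        refine hslope_tend.eventually_const_lt ?_
        simpa only [hgdef] using hbv
      have hevy : ∀ᶠ m in atTop, y < rm m := hrm_lim.eventually_const_lt hy.2
      filter_upwards [hevgt, hevy] with m hgt hym
      have hlow' := hlow m y hy.1 hym
      have h2 : ((-1:ℝ)^(d-2) * deriv^[d-2] ψ (rm m) - (-1:ℝ)^(d-2) * deriv^[d-2] ψ y)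
          / (rm m - y) = (F2 (rm m) - F2 y)/(rm m - y) := by
        simp only [hF2def]
      rw [h2] at hlow'
      exact lt_of_lt_of_le hgt hlow'
    · intro b hb
      exact Eventually.of_forall fun m => lt_of_le_of_lt (hLle m) hb
  -- limits of the sum
  have hSum_tend : Tendsto (fun m => ∑ k ∈ Finset.range (d-1),
      deriv^[k] ψ (rm m) * ((-1:ℝ)^k / (k.factorial : ℝ)) * (rm m)^k) atTop
      (𝓝 (∑ k ∈ Finset.range (d-1),
        deriv^[k] ψ s * ((-1:ℝ)^k / (k.factorial : ℝ)) * s^k)) := by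
    refine tendsto_finset_sum _ fun k hk => ?_
    have hk2 : k ≤ d - 2 := by
      have := Finset.mem_range.1 hk
      omega
    have hcont := (psi_iter_contAt hd hψ hk2 hs).tendsto.comp hrm_lim
    exact (hcont.mul tendsto_const_nhds).mul (hrm_lim.pow k)
  -- combine
  have hRHS_tend : Tendsto (fun m => (μ (Bm m)).toReal) atTop
      (𝓝 ((∑ k ∈ Finset.range (d-1),
        deriv^[k] ψ s * ((-1:ℝ)^k / (k.factorial : ℝ)) * s^k)
        - Sstar * s^(d-1) / ((d-1).factorial : ℝ))) := by
    have h1 : Tendsto (fun m => (∑ k ∈ Finset.range (d-1),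
        deriv^[k] ψ (rm m) * ((-1:ℝ)^k / (k.factorial : ℝ)) * (rm m)^k)
        - Lm m * (rm m)^(d-1) / ((d-1).factorial : ℝ)) atTop
        (𝓝 ((∑ k ∈ Finset.range (d-1),
          deriv^[k] ψ s * ((-1:ℝ)^k / (k.factorial : ℝ)) * s^k)
          - Sstar * s^(d-1) / ((d-1).factorial : ℝ))) := by
      refine hSum_tend.sub ?_
      exact (hLlim.mul (hrm_lim.pow (d-1))).div_const _
    refine (tendsto_congr ?_).2 h1
    intro m
    exact hval m
  have hfinal := tendsto_nhds_unique htend hRHS_tend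
  rw [hfinal, hLeft]
  have hpow := neg_one_pow_mul (d := d) hd
  have hkey : (-1:ℝ)^(d-2) * Sstar * ((-1:ℝ)^(d-1) / ((d-1).factorial : ℝ)) * s^(d-1)
      = - (Sstar * s^(d-1) / ((d-1).factorial : ℝ)) := by
    have hfacne : (((d-1).factorial : ℕ) : ℝ) ≠ 0 := Nat.cast_ne_zero.mpr (Nat.factorial_ne_zero _)
    field_simp
    linear_combination Sstar * hpow
  rw [hkey]
  ring

end KendallAux


namespace KendallAux

variable {d : ℕ} {ψ : ℝ → ℝ} {μ : Measure (Fin d → ℝ)}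

theorem kendall_eq_t (hg : IsGenerator ψ) {t : ℝ} (ht : t ∈ Ioo (0:ℝ) 1) :
    {x : Fin d → ℝ | (∀ i, x i ∈ Icc (0:ℝ) 1) ∧ archCopula d ψ x ≤ t}
    = {x : Fin d → ℝ | (∀ i, x i ∈ Icc (0:ℝ) 1)
        ∧ ENNReal.ofReal (pseudoInv ψ t).toReal ≤ ∑ i, cPI ψ (x i)} := by
  have hne := pseudoInv_ne_top hg ⟨ht.1, le_of_lt ht.2⟩
  have hpsis : ψ (pseudoInv ψ t).toReal = t := psi_pseudoInv hg ⟨ht.1, le_of_lt ht.2⟩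
  have hofs : ENNReal.ofReal (pseudoInv ψ t).toReal = pseudoInv ψ t :=
    ENNReal.ofReal_toReal hne
  ext x
  simp only [mem_setOf_eq, and_congr_right_iff]
  intro hcube
  have hsum : archCopula d ψ x = psiExt ψ (∑ i, cPI ψ (x i)) := by
    rw [archCopula]
    congr 1
    exact Finset.sum_congr rfl fun i _ => (cPI_eq (hcube i)).symm
  rw [hsum]
  constructor
  · intro hle
    by_contra hc
    push_neg at hc
    have hSne : (∑ i, cPI ψ (x i)) ≠ ∞ := ne_top_of_lt hc
    have hlt : (∑ i, cPI ψ (x i)).toReal < (pseudoInv ψ t).toReal := by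
      have := (ENNReal.toReal_lt_toReal hSne ENNReal.ofReal_ne_top).2 hc
      rwa [ENNReal.toReal_ofReal ENNReal.toReal_nonneg] at this
    have hle0 : ENNReal.ofReal (pseudoInv ψ t).toReal ≤ pseudoInv ψ 0 := by
      rw [hofs]
      exact antitoneOn_pseudoInv hg ⟨le_refl (0:ℝ), zero_le_one⟩
        ⟨le_of_lt ht.1, le_of_lt ht.2⟩ (le_of_lt ht.1)
    have hstr := hg.strictAnti (ENNReal.toReal_nonneg :
      (0:ℝ) ≤ (∑ i, cPI ψ (x i)).toReal) hlt hle0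
    rw [hpsis] at hstr
    rw [psiExt, if_neg hSne] at hle
    linarith
  · intro hge
    rcases eq_or_ne (∑ i, cPI ψ (x i)) ∞ with hS | hS
    · rw [hS]
      show psiExt ψ ⊤ ≤ t
      rw [psiExt, if_pos rfl]
      linarith [ht.1]
    · rw [psiExt, if_neg hS]
      have hsle : (pseudoInv ψ t).toReal ≤ (∑ i, cPI ψ (x i)).toReal :=
        (ENNReal.ofReal_le_iff_le_toReal hS).1 hge
      calc ψ (∑ i, cPI ψ (x i)).toReal ≤ ψ (pseudoInv ψ t).toReal :=
            hg.antitoneOn (mem_Ici.2 ENNReal.toReal_nonneg)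
              (mem_Ici.2 (ENNReal.toReal_nonneg.trans hsle)) hsle
      _ = t := hpsis

theorem kendall_eq_zero_nonstrict (hg : IsGenerator ψ) (h0 : pseudoInv ψ 0 ≠ ∞) :
    {x : Fin d → ℝ | (∀ i, x i ∈ Icc (0:ℝ) 1) ∧ archCopula d ψ x ≤ 0}
    = {x : Fin d → ℝ | (∀ i, x i ∈ Icc (0:ℝ) 1)
        ∧ ENNReal.ofReal (pseudoInv ψ 0).toReal ≤ ∑ i, cPI ψ (x i)} := by
  have hpsis : ψ (pseudoInv ψ 0).toReal = 0 := psi_pseudoInv_zero hg h0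
  have hofs : ENNReal.ofReal (pseudoInv ψ 0).toReal = pseudoInv ψ 0 :=
    ENNReal.ofReal_toReal h0
  ext x
  simp only [mem_setOf_eq, and_congr_right_iff]
  intro hcube
  have hsum : archCopula d ψ x = psiExt ψ (∑ i, cPI ψ (x i)) := by
    rw [archCopula]
    congr 1
    exact Finset.sum_congr rfl fun i _ => (cPI_eq (hcube i)).symm
  rw [hsum]
  constructor
  · intro hle
    have hmem : psiExt ψ (∑ i, cPI ψ (x i)) = 0 :=
      le_antisymm hle (psiExt_nonneg hg _)
    rw [hofs]
    exact sInf_le hmem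
  · intro hge
    rcases eq_or_ne (∑ i, cPI ψ (x i)) ∞ with hS | hS
    · rw [hS]
      simp [psiExt]
    · rw [psiExt, if_neg hS]
      have hsle : (pseudoInv ψ 0).toReal ≤ (∑ i, cPI ψ (x i)).toReal :=
        (ENNReal.ofReal_le_iff_le_toReal hS).1 hge
      calc ψ (∑ i, cPI ψ (x i)).toReal ≤ ψ (pseudoInv ψ 0).toReal :=
            hg.antitoneOn (mem_Ici.2 ENNReal.toReal_nonneg)
              (mem_Ici.2 (ENNReal.toReal_nonneg.trans hsle)) hsle
      _ = 0 := hpsis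

theorem kendall_zero_strict (hg : IsGenerator ψ)
    (hμ : ∀ x : Fin d → ℝ, (∀ i, x i ∈ Icc (0 : ℝ) 1) →
      μ (Set.univ.pi fun i => Icc 0 (x i)) = ENNReal.ofReal (archCopula d ψ x))
    (hstrict : IsStrictGenerator ψ) :
    μ {x : Fin d → ℝ | (∀ i, x i ∈ Icc (0:ℝ) 1) ∧ archCopula d ψ x ≤ 0} = 0 := by
  have hsub : {x : Fin d → ℝ | (∀ i, x i ∈ Icc (0:ℝ) 1) ∧ archCopula d ψ x ≤ 0}
      ⊆ ⋃ i : Fin d, {x : Fin d → ℝ | (∀ j, x j ∈ Icc (0:ℝ) 1) ∧ x i = 0} := by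
    rintro x ⟨hcube, hle⟩
    have heq : archCopula d ψ x = 0 := by
      refine le_antisymm hle ?_
      rw [archCopula]
      exact psiExt_nonneg hg _
    rw [archCopula] at heq
    have htop : (∑ i, pseudoInv ψ (x i)) = ∞ := by
      by_contra hS
      rw [psiExt, if_neg hS] at heq
      exact absurd heq (ne_of_gt (hstrict _ ENNReal.toReal_nonneg))
    obtain ⟨i, _, hi⟩ := ENNReal.sum_eq_top.1 htop
    refine mem_iUnion.2 ⟨i, hcube, ?_⟩
    by_contra hxi
    have hxpos : 0 < x i := lt_of_le_of_ne (hcube i).1 (Ne.symm hxi)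
    exact (pseudoInv_ne_top hg ⟨hxpos, (hcube i).2⟩) hi
  refine measure_mono_null hsub ?_
  exact measure_iUnion_null fun i => face_null hg hμ i

theorem sum_zero_nonstrict (hd : 3 ≤ d) (hψ : IsdMonotoneGenerator d ψ)
    (h0 : pseudoInv ψ 0 ≠ ∞) :
    ∀ k, k ≤ d - 2 → deriv^[k] ψ (pseudoInv ψ 0).toReal = 0 := by
  have hg := hψ.toIsGenerator
  set s0 : ℝ := (pseudoInv ψ 0).toReal with hs0def
  have hpsis0 : ψ s0 = 0 := psi_pseudoInv_zero hg h0
  have hs0pos : 0 < s0 :=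
    ENNReal.toReal_pos (pseudoInv_pos hg (le_refl (0:ℝ)) zero_lt_one) h0
  have hzero : ∀ z, s0 ≤ z → ψ z = 0 := by
    intro z hz
    refine le_antisymm ?_ (hg.mem_Icc z (le_of_lt (lt_of_lt_of_le hs0pos hz))).1
    rw [← hpsis0]
    exact hg.antitoneOn (mem_Ici.2 (le_of_lt hs0pos))
      (mem_Ici.2 (le_of_lt (lt_of_lt_of_le hs0pos hz))) hz
  have hA : ∀ k, ∀ z, s0 < z → deriv^[k] ψ z = 0 := by
    intro k
    induction k with
    | zero => exact fun z hz => hzero z (le_of_lt hz)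
    | succ k ih =>
      intro z hz
      rw [Function.iterate_succ_apply']
      have hev : deriv^[k] ψ =ᶠ[𝓝 z] fun _ => (0:ℝ) := by
        filter_upwards [IsOpen.mem_nhds isOpen_Ioi hz] with y hy
        exact ih y hy
      rw [hev.deriv_eq, deriv_const]
  intro k
  induction k with
  | zero => intro _; exact hpsis0
  | succ k ih =>
    intro hk1
    have hkB : deriv^[k] ψ s0 = 0 := ih (by omega)
    have hdiff := hψ.differentiable k (by omega) s0 hs0pos
    have hud : UniqueDiffWithinAt ℝ (Ici s0) s0 :=
      uniqueDiffOn_Ici s0 s0 Set.self_mem_Ici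
    have h1 : HasDerivWithinAt (deriv^[k] ψ) (deriv^[k+1] ψ s0) (Ici s0) s0 := by
      rw [Function.iterate_succ_apply']
      exact hdiff.hasDerivAt.hasDerivWithinAt
    have h2 : HasDerivWithinAt (deriv^[k] ψ) 0 (Ici s0) s0 := by
      refine (hasDerivWithinAt_const s0 (Ici s0) (0:ℝ)).congr ?_ hkB
      intro y hy
      rcases eq_or_lt_of_le (mem_Ici.1 hy) with heq | hlt
      · rw [← heq]; exact hkB
      · exact hA k y hlt
    have := h1.derivWithin hud
    rw [h2.derivWithin hud] at this
    exact this.symm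

end KendallAux


open KendallAux in
/-- For a `d`-monotone generator `ψ` with copula `C = C_ψ`, for every
`t ∈ (0,1)`:
`F_K^d(t) = D⁻ψ^(d-2)(φ(t)) · ((-1)^(d-1)/(d-1)!) · φ(t)^(d-1)
            + ∑_{k=0}^{d-2} ψ^(k)(φ(t)) · ((-1)^k/k!) · φ(t)^k`.
Moreover `F_K^d(0) = 0` if `ψ` is strict, and
`F_K^d(0) = D⁻ψ^(d-2)(φ(0)) · ((-1)^(d-1)/(d-1)!) · φ(0)^(d-1)` otherwise. -/
theorem archCopula_kendall_formula
    (d : ℕ) (hd : 3 ≤ d) (ψ : ℝ → ℝ) (hψ : IsdMonotoneGenerator d ψ)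
    (μ : Measure (Fin d → ℝ)) (hprob : IsProbabilityMeasure μ)
    (hμ : ∀ x : Fin d → ℝ, (∀ i, x i ∈ Icc (0 : ℝ) 1) →
      μ (Set.univ.pi fun i => Icc 0 (x i)) = ENNReal.ofReal (archCopula d ψ x)) :
    (∀ t ∈ Ioo (0 : ℝ) 1,
      kendallDF d ψ μ t =
        leftDeriv (deriv^[d - 2] ψ) (pseudoInv ψ t).toReal *
            ((-1 : ℝ) ^ (d - 1) / (Nat.factorial (d - 1))) *
            (pseudoInv ψ t).toReal ^ (d - 1) +
          ∑ k ∈ Finset.range (d - 1),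
            deriv^[k] ψ (pseudoInv ψ t).toReal *
              ((-1 : ℝ) ^ k / (Nat.factorial k)) * (pseudoInv ψ t).toReal ^ k) ∧
    (IsStrictGenerator ψ → kendallDF d ψ μ 0 = 0) ∧
    (pseudoInv ψ 0 ≠ ∞ →
      kendallDF d ψ μ 0 =
        leftDeriv (deriv^[d - 2] ψ) (pseudoInv ψ 0).toReal *
          ((-1 : ℝ) ^ (d - 1) / (Nat.factorial (d - 1))) *
          (pseudoInv ψ 0).toReal ^ (d - 1)) := by
  haveI := hprob
  have hg := hψ.toIsGenerator
  refine ⟨?_, ?_, ?_⟩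
  · intro t ht
    have hne := pseudoInv_ne_top hg ⟨ht.1, le_of_lt ht.2⟩
    have hspos : 0 < (pseudoInv ψ t).toReal :=
      ENNReal.toReal_pos (pseudoInv_pos hg (le_of_lt ht.1) ht.2) hne
    rw [kendallDF, kendall_eq_t hg ht, glue hd hψ hμ hspos]
  · intro hstrict
    rw [kendallDF, kendall_zero_strict hg hμ hstrict]
    simp
  · intro h0
    have hs0pos : 0 < (pseudoInv ψ 0).toReal :=
      ENNReal.toReal_pos (pseudoInv_pos hg (le_refl (0:ℝ)) zero_lt_one) h0
    rw [kendallDF, kendall_eq_zero_nonstrict hg h0, glue hd hψ hμ hs0pos]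
    have hzsum : ∑ k ∈ Finset.range (d-1),
        deriv^[k] ψ (pseudoInv ψ 0).toReal * ((-1:ℝ)^k / (k.factorial : ℝ))
          * (pseudoInv ψ 0).toReal ^ k = 0 := by
      refine Finset.sum_eq_zero fun k hk => ?_
      rw [sum_zero_nonstrict hd hψ h0 k (by
        have := Finset.mem_range.1 hk
        omega)]
      ring
    rw [hzsum, add_zero]
end
end

section
/- Let ψ, ψ_1, ψ_2, … be Archimedean generators with pseudo-inverses φ, φ_1, φ_2, …. Then (φ_n)_{n∈ℕ} converges pointwise to φ on (0,1] if and only if (ψ_n)_{n∈ℕ} converges to ψ uniformly on [0,∞). -/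
open MeasureTheory Set Filter Topology
open scoped ENNReal NNReal Classical

noncomputable section

private lemma gen_exists_inv {ψ : ℝ → ℝ} (hψ : IsGenerator ψ) {y : ℝ}
    (hy0 : 0 < y) (hy1 : y ≤ 1) :
    ∃ r : ℝ, 0 ≤ r ∧ ψ r = y ∧ pseudoInv ψ y = ENNReal.ofReal r ∧
      ∀ w : ℝ, 0 ≤ w → ψ w = y → r ≤ w := by
  -- the real level set
  set T : Set ℝ := {w : ℝ | 0 ≤ w ∧ ψ w = y} with hT
  have hTne : T.Nonempty := by
    obtain ⟨z, hz0, hzy⟩ : ∃ z : ℝ, 0 ≤ z ∧ ψ z < y := by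
      have h1 : ∀ᶠ z in atTop, ψ z < y := hψ.tendsto_atTop.eventually_lt_const hy0
      have h2 : ∀ᶠ z : ℝ in atTop, 0 ≤ z := eventually_ge_atTop 0
      obtain ⟨z, hz1, hz2⟩ := (h2.and h1).exists
      exact ⟨z, hz1, hz2⟩
    have hIVT := intermediate_value_Icc' hz0 (hψ.continuousOn.mono (Icc_subset_Ici_self))
    have hmem : y ∈ Icc (ψ z) (ψ 0) := ⟨hzy.le, by rw [hψ.map_zero]; exact hy1⟩
    obtain ⟨w, hw, hwy⟩ := hIVT hmem
    exact ⟨w, hw.1, hwy⟩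
  have hTbdd : BddBelow T := ⟨0, fun w hw => hw.1⟩
  have hTclosed : IsClosed T := by
    have : T = Ici 0 ∩ ψ ⁻¹' {y} := by
      ext w; simp [hT, Set.mem_setOf_eq, and_comm]
    rw [this]
    exact hψ.continuousOn.preimage_isClosed_of_isClosed isClosed_Ici isClosed_singleton
  set r := sInf T with hr
  have hrT : r ∈ T := hTclosed.csInf_mem hTne hTbdd
  refine ⟨r, hrT.1, hrT.2, ?_, fun w hw0 hwy => csInf_le hTbdd ⟨hw0, hwy⟩⟩
  apply le_antisymm
  · apply sInf_le
    show psiExt ψ (ENNReal.ofReal r) = y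
    rw [psiExt, if_neg ENNReal.ofReal_ne_top, ENNReal.toReal_ofReal hrT.1]
    exact hrT.2
  · apply le_sInf
    intro b hb
    rcases eq_or_ne b ∞ with hb' | hb'
    · simp [hb']
    · have hbT : b.toReal ∈ T := by
        refine ⟨ENNReal.toReal_nonneg, ?_⟩
        have : psiExt ψ b = y := hb
        rwa [psiExt, if_neg hb'] at this
      have : r ≤ b.toReal := csInf_le hTbdd hbT
      calc ENNReal.ofReal r ≤ ENNReal.ofReal b.toReal := ENNReal.ofReal_le_ofReal this
        _ = b := ENNReal.ofReal_toReal hb'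

private lemma gen_strict_gt {ψ : ℝ → ℝ} (hψ : IsGenerator ψ) {y r w : ℝ}
    (hrψ : ψ r = y) (hrmin : ∀ w : ℝ, 0 ≤ w → ψ w = y → r ≤ w)
    (hw0 : 0 ≤ w) (hwr : w < r) : y < ψ w := by
  have hr0 : (0 : ℝ) ≤ r := le_trans hw0 hwr.le
  have h1 : ψ r ≤ ψ w := hψ.antitoneOn hw0 hr0 hwr.le
  rw [hrψ] at h1
  rcases h1.lt_or_eq with h | h
  · exact h
  · exact absurd (hrmin w hw0 h.symm) (not_le.2 hwr)

private lemma gen_right_strict {ψ : ℝ → ℝ} (hψ : IsGenerator ψ) {y r e : ℝ}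
    (hy0 : 0 < y) (hr0 : 0 ≤ r) (hrψ : ψ r = y) (he : 0 < e) : ψ (r + e) < y := by
  by_cases hle : ENNReal.ofReal (r + e) ≤ pseudoInv ψ 0
  · have := hψ.strictAnti hr0 (lt_add_of_pos_right r he) hle
    rwa [hrψ] at this
  · push_neg at hle
    rw [pseudoInv, sInf_lt_iff] at hle
    obtain ⟨s, hs, hslt⟩ := hle
    have hsne : s ≠ ∞ := ne_top_of_lt hslt
    have hsψ : ψ s.toReal = 0 := by
      have : psiExt ψ s = 0 := hs
      rwa [psiExt, if_neg hsne] at this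
    have hre0 : (0 : ℝ) ≤ r + e := by linarith
    have hstr : s.toReal ≤ r + e := by
      have h2 := (ENNReal.toReal_le_toReal hsne ENNReal.ofReal_ne_top).2 hslt.le
      rwa [ENNReal.toReal_ofReal hre0] at h2
    have h3 : ψ (r + e) ≤ ψ s.toReal := hψ.antitoneOn ENNReal.toReal_nonneg hre0 hstr
    rw [hsψ] at h3
    linarith

/-- For Archimedean generators `ψ, ψ₁, ψ₂, …` with pseudo-inverses
`φ, φ₁, φ₂, …`, the sequence `(φₙ)` converges pointwise to `φ` on `(0,1]` if and only if
`(ψₙ)` converges to `ψ` uniformly on `[0,∞)`. -/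
theorem pseudoInv_conv_iff_generator_uniform_conv
    (ψ : ℝ → ℝ) (Ψ : ℕ → ℝ → ℝ)
    (hψ : IsGenerator ψ) (hΨ : ∀ n, IsGenerator (Ψ n)) :
    (∀ y ∈ Ioc (0 : ℝ) 1,
        Tendsto (fun n => pseudoInv (Ψ n) y) atTop (𝓝 (pseudoInv ψ y))) ↔
      TendstoUniformlyOn (fun n => Ψ n) ψ atTop (Ici 0) := by
  constructor
  · -- pointwise inverse convergence → uniform convergence
    intro hpt
    rw [Metric.tendstoUniformlyOn_iff]
    intro ε hε
    -- choose the grid size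
    obtain ⟨k₀, hk₀⟩ := exists_nat_gt (2 / ε)
    set k : ℕ := max k₀ 2 with hk
    have hk2 : 2 ≤ k := le_max_right _ _
    have hkpos : (0 : ℝ) < k := by
      have : (2 : ℝ) ≤ k := by exact_mod_cast hk2
      linarith
    have hkε : 2 / (k : ℝ) < ε := by
      have h1 : 2 / ε < (k : ℝ) := lt_of_lt_of_le hk₀ (by exact_mod_cast le_max_left k₀ 2)
      rw [div_lt_iff₀ hε] at h1
      rw [div_lt_iff₀ hkpos]
      linarith
    set m : ℕ := k - 1 with hm
    have hm1 : 1 ≤ m := by omega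
    have hmk : m < k := by omega
    set Y : ℕ → ℝ := fun j => 1 - (j : ℝ) / k with hY
    clear_value k m Y
    have hYpos : ∀ j ≤ m, 0 < Y j := by
      intro j hj
      have hjk : (j : ℝ) < k := by exact_mod_cast lt_of_le_of_lt hj hmk
      have : (j : ℝ) / k < 1 := (div_lt_one hkpos).2 hjk
      simp only [hY]; linarith
    have hYle1 : ∀ j : ℕ, Y j ≤ 1 := by
      intro j
      have : (0 : ℝ) ≤ (j : ℝ) / k := by positivity
      simp only [hY]; linarith
    have hYstrict : ∀ j : ℕ, Y (j + 1) < Y j := by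
      intro j
      have h1 : (j : ℝ) / k < ((j : ℝ) + 1) / k := by gcongr <;> linarith
      simp only [hY]
      push_cast
      linarith
    -- the limit pseudo-inverse grid points
    have hzE : ∀ j, j ≤ m → ∃ r : ℝ, 0 ≤ r ∧ ψ r = Y j ∧
        pseudoInv ψ (Y j) = ENNReal.ofReal r ∧ ∀ w : ℝ, 0 ≤ w → ψ w = Y j → r ≤ w :=
      fun j hj => gen_exists_inv hψ (hYpos j hj) (hYle1 j)
    choose! z hz0 hzψ hzinv _hzmin using hzE
    have hRE : ∀ n, ∀ j, j ≤ m → ∃ r : ℝ, 0 ≤ r ∧ Ψ n r = Y j ∧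
        pseudoInv (Ψ n) (Y j) = ENNReal.ofReal r ∧ ∀ w : ℝ, 0 ≤ w → Ψ n w = Y j → r ≤ w :=
      fun n j hj => gen_exists_inv (hΨ n) (hYpos j hj) (hYle1 j)
    choose! R hR0 hRψ hRinv _hRmin using hRE
    -- z 0 = 0
    have hz00 : z 0 = 0 := by
      have hY0 : Y 0 = 1 := by simp [hY]
      have h1 : pseudoInv ψ (Y 0) = ENNReal.ofReal (z 0) := hzinv 0 (Nat.zero_le m)
      have h2 : pseudoInv ψ (Y 0) ≤ 0 := by
        apply sInf_le
        show psiExt ψ 0 = Y 0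
        rw [psiExt, if_neg (by simp : (0 : ℝ≥0∞) ≠ ∞), hY0]
        simpa using hψ.map_zero
      rw [h1] at h2
      have h3 : ENNReal.ofReal (z 0) = 0 := le_antisymm h2 zero_le
      have h4 : z 0 ≤ 0 := ENNReal.ofReal_eq_zero.1 h3
      linarith [hz0 0 (Nat.zero_le m)]
    -- strict monotonicity of the grid
    have hzlt : ∀ j, j < m → z j < z (j + 1) := by
      intro j hj
      by_contra hc
      push_neg at hc
      have h1 : ψ (z j) ≤ ψ (z (j + 1)) :=
        hψ.antitoneOn (hz0 (j + 1) hj) (hz0 j hj.le) hc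
      rw [hzψ j hj.le, hzψ (j + 1) hj] at h1
      exact absurd h1 (not_le.2 (hYstrict j))
    -- convergence of the approximating grid points
    have hTend : ∀ j, j ≤ m → Tendsto (fun n => R n j) atTop (𝓝 (z j)) := by
      intro j hj
      have h1 := hpt (Y j) ⟨hYpos j hj, hYle1 j⟩
      rw [hzinv j hj] at h1
      have h3 := (ENNReal.tendsto_toReal ENNReal.ofReal_ne_top).comp h1
      rw [ENNReal.toReal_ofReal (hz0 j hj)] at h3
      apply h3.congr
      intro n
      simp only [Function.comp_apply]
      rw [hRinv n j hj, ENNReal.toReal_ofReal (hR0 n j hj)]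
    -- eventually the approximating grid points interlace
    have hev : ∀ᶠ n in atTop, ∀ j ∈ Finset.range m,
        (R n j < z (j + 1) ∧ z j < R n (j + 1)) := by
      rw [eventually_all_finset]
      intro j hj
      rw [Finset.mem_range] at hj
      have h1 : ∀ᶠ n in atTop, R n j < z (j + 1) :=
        (hTend j hj.le).eventually_lt_const (hzlt j hj)
      have h2 : ∀ᶠ n in atTop, z j < R n (j + 1) :=
        (hTend (j + 1) hj).eventually_const_lt (hzlt j hj)
      exact h1.and h2
    filter_upwards [hev] with n hn x hx
    have hx0 : (0 : ℝ) ≤ x := hx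
    have hn' : ∀ j, j < m → R n j < z (j + 1) ∧ z j < R n (j + 1) :=
      fun j hj => hn j (Finset.mem_range.2 hj)
    -- locate x in the grid
    obtain ⟨j, hjm, hjx, hjmax⟩ :
        ∃ j, j ≤ m ∧ z j ≤ x ∧ (j < m → x < z (j + 1)) := by
      refine ⟨Nat.findGreatest (fun i => z i ≤ x) m, Nat.findGreatest_le m,
        Nat.findGreatest_spec (P := fun i => z i ≤ x) (Nat.zero_le m) (show z 0 ≤ x by rw [hz00]; exact hx0), ?_⟩
      intro hjlt
      by_contra hc
      push_neg at hc
      exact Nat.findGreatest_is_greatest (Nat.lt_succ_of_le le_rfl)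
        (Nat.succ_le_of_lt hjlt) hc
    have hψxle : ψ x ≤ Y j := by
      have := hψ.antitoneOn (hz0 j hjm) hx0 hjx
      rwa [hzψ j hjm] at this
    have hψx0 : 0 ≤ ψ x := (hψ.mem_Icc x hx0).1
    have hΨx0 : 0 ≤ Ψ n x := ((hΨ n).mem_Icc x hx0).1
    have hΨx1 : Ψ n x ≤ 1 := ((hΨ n).mem_Icc x hx0).2
    -- upper bound : Ψ n x - ψ x ≤ 2/k
    have hub : Ψ n x - ψ x ≤ 2 / k := by
      rcases Nat.eq_zero_or_pos j with hj0 | hj1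
      · -- j = 0 < m
        have hx1 : x < z 1 := by
          have := hjmax (by omega)
          rwa [hj0] at this
        have h1 : Y 1 ≤ ψ x := by
          have := hψ.antitoneOn hx0 (hz0 1 hm1) hx1.le
          rwa [hzψ 1 hm1] at this
        have h2 : Y 1 = 1 - 1 / k := by norm_num [hY]
        have h4 : 1 / (k : ℝ) ≤ 2 / k := by gcongr <;> norm_num
        linarith
      · -- 1 ≤ j
        have hj1m : j - 1 < m := by omega
        have hj1s : j - 1 + 1 = j := by omega
        have hcond := (hn' (j - 1) hj1m).1
        rw [hj1s] at hcond
        have hRx : R n (j - 1) ≤ x := le_trans hcond.le hjx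
        have hup : Ψ n x ≤ Y (j - 1) := by
          have := (hΨ n).antitoneOn (hR0 n (j - 1) hj1m.le) hx0 hRx
          rwa [hRψ n (j - 1) hj1m.le] at this
        have hcastj : ((j - 1 : ℕ) : ℝ) = (j : ℝ) - 1 := by
          have h1 : (1 : ℕ) ≤ j := hj1
          push_cast [Nat.cast_sub h1]
          ring
        by_cases hjm' : j < m
        · have hxz : x < z (j + 1) := hjmax hjm'
          have hlow : Y (j + 1) ≤ ψ x := by
            have := hψ.antitoneOn hx0 (hz0 (j + 1) hjm') hxz.le
            rwa [hzψ (j + 1) hjm'] at this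
          have hdiff : Y (j - 1) - Y (j + 1) = 2 / k := by
            simp only [hY, hcastj]
            push_cast
            field_simp
            try ring
          linarith
        · -- j = m
          have hYj1 : Y (j - 1) = 2 / k := by
            have hje : j = m := le_antisymm hjm (not_lt.1 hjm')
            simp only [hY, hcastj]
            have h1 : (j : ℝ) = (k : ℝ) - 1 := by
              rw [hje, hm]
              push_cast [Nat.cast_sub (by omega : 1 ≤ k)]
              ring
            rw [h1]
            field_simp
            try ring
          linarith
    -- lower bound : ψ x - Ψ n x ≤ 2/k
    have hlb : ψ x - Ψ n x ≤ 2 / k := by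
      by_cases hcase : j + 2 ≤ m
      · have hxz : x < z (j + 1) := hjmax (by omega)
        have hcond := (hn' (j + 1) (by omega)).2
        have hxR : x ≤ R n (j + 2) := (lt_trans hxz hcond).le
        have h1 : Y (j + 2) ≤ Ψ n x := by
          have := (hΨ n).antitoneOn hx0 (hR0 n (j + 2) hcase) hxR
          rwa [hRψ n (j + 2) hcase] at this
        have hdiff : Y j - Y (j + 2) = 2 / k := by
          simp only [hY]
          push_cast
          field_simp
          try ring
        linarith
      · -- j ≥ m - 1
        have hjge : k ≤ j + 2 := by omega
        have hYj : Y j ≤ 2 / k := by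
          simp only [hY]
          have h1 : (k : ℝ) ≤ (j : ℝ) + 2 := by exact_mod_cast hjge
          rw [sub_le_iff_le_add, ← add_div, le_div_iff₀ hkpos]
          nlinarith
        linarith
    rw [Real.dist_eq]
    have habs : |ψ x - Ψ n x| ≤ 2 / k :=
      abs_sub_le_iff.2 ⟨by linarith, by linarith⟩
    linarith
  · -- uniform convergence → pointwise inverse convergence
    intro hU y hy
    obtain ⟨r, hr0, hrψ, hrinv, hrmin⟩ := gen_exists_inv hψ hy.1 hy.2
    have hRE : ∀ n, ∃ ρ : ℝ, 0 ≤ ρ ∧ Ψ n ρ = y ∧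
        pseudoInv (Ψ n) y = ENNReal.ofReal ρ ∧ ∀ w : ℝ, 0 ≤ w → Ψ n w = y → ρ ≤ w :=
      fun n => gen_exists_inv (hΨ n) hy.1 hy.2
    choose R hR0 hRψ hRinv hRmin using hRE
    rw [hrinv]
    have hfun : (fun n => pseudoInv (Ψ n) y) = fun n => ENNReal.ofReal (R n) :=
      funext fun n => hRinv n
    rw [hfun]
    apply ENNReal.tendsto_ofReal
    rw [Metric.tendsto_atTop]
    intro e he
    have he2 : (0 : ℝ) < e / 2 := by linarith
    -- upper control
    have hδ₁ : ψ (r + e / 2) < y := gen_right_strict hψ hy.1 hr0 hrψ he2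
    have hre0 : (0 : ℝ) ≤ r + e / 2 := by linarith
    have hev₁ : ∀ᶠ n in atTop, Ψ n (r + e / 2) < y := by
      have h1 := Metric.tendstoUniformlyOn_iff.1 hU (y - ψ (r + e / 2)) (by linarith)
      filter_upwards [h1] with n hn
      have h2 := hn (r + e / 2) hre0
      rw [Real.dist_eq] at h2
      have h3 := abs_lt.1 h2
      linarith [h3.1, h3.2]
    have hub : ∀ᶠ n in atTop, R n ≤ r + e / 2 := by
      filter_upwards [hev₁] with n h₁
      by_contra hc
      push_neg at hc
      have h3 : y < Ψ n (r + e / 2) :=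
        gen_strict_gt (hΨ n) (hRψ n) (hRmin n) hre0 hc
      linarith
    have hgood : ∀ᶠ n in atTop, dist (R n) r < e := by
      by_cases hre : r ≤ e / 2
      · filter_upwards [hub] with n h₁
        rw [Real.dist_eq, abs_lt]
        constructor <;> [linarith [hR0 n]; linarith]
      · push_neg at hre
        have hw0 : (0 : ℝ) ≤ r - e / 2 := by linarith
        have hδ₂ : y < ψ (r - e / 2) :=
          gen_strict_gt hψ hrψ hrmin hw0 (by linarith)
        have hev₂ : ∀ᶠ n in atTop, y < Ψ n (r - e / 2) := by
          have h1 := Metric.tendstoUniformlyOn_iff.1 hU (ψ (r - e / 2) - y) (by linarith)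
          filter_upwards [h1] with n hn
          have h2 := hn (r - e / 2) hw0
          rw [Real.dist_eq] at h2
          have h3 := abs_lt.1 h2
          linarith [h3.1, h3.2]
        have hlbn : ∀ᶠ n in atTop, r - e / 2 ≤ R n := by
          filter_upwards [hev₂] with n h₂
          by_contra hc
          push_neg at hc
          have h3 : Ψ n (r - e / 2) ≤ Ψ n (R n) :=
            (hΨ n).antitoneOn (hR0 n) hw0 hc.le
          rw [hRψ n] at h3
          linarith
        filter_upwards [hub, hlbn] with n h₁ h₂
        rw [Real.dist_eq, abs_lt]
        constructor <;> linarith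
    exact eventually_atTop.1 hgood
end
end

section
/- Let d ≥ 3, let ψ be a d-monotone Archimedean generator and let γ be its Williamson measure, i.e. the unique Borel probability measure on [0,∞) with γ({0}) = 0 and ψ = W_d γ on (0,∞). Then for every z > 0: γ([0,z]) = ∑_{k=0}^{d−2} ((−1)^k ψ^{(k)}(1/z) / k!) · z^{−k} + ((−1)^{d−1} D^−ψ^{(d−2)}(1/z) / (d−1)!) · z^{−(d−1)}, where ψ^{(0)} := ψ and D^−ψ^{(d−2)} denotes the left-hand derivative of ψ^{(d−2)}. -/
open MeasureTheory Set Filter Topology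
open scoped ENNReal NNReal Classical

noncomputable section

/-- The Williamson transform `(W_d γ)(z) = ∫ (1 - tz)₊^(d-1) dγ(t)`. -/
def williamson (d : ℕ) (γ : Measure ℝ) (z : ℝ) : ℝ :=
  ∫ t, max (1 - t * z) 0 ^ (d - 1) ∂γ

/-- The class `P_{W_d}`: Borel probability measures on `[0,∞)` with `γ({0}) = 0` and
`∫_{[0,1]} (1-t)^(d-1) dγ(t) = 1/2`. -/
def memPW (d : ℕ) (γ : Measure ℝ) : Prop :=
  IsProbabilityMeasure γ ∧ γ (Iio 0) = 0 ∧ γ {0} = 0 ∧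
    ∫ t in Icc (0 : ℝ) 1, (1 - t) ^ (d - 1) ∂γ = 1 / 2

/-- `|a^m - b^m| ≤ m * |a-b|` for `a, b ∈ [0,1]`. -/
lemma wmc_abs_pow_sub_pow {a b : ℝ} (ha0 : 0 ≤ a) (ha1 : a ≤ 1) (hb0 : 0 ≤ b)
    (hb1 : b ≤ 1) (m : ℕ) : |a ^ m - b ^ m| ≤ m * |a - b| := by
  induction m with
  | zero => simp
  | succ m ih =>
    have h1 : a ^ (m+1) - b ^ (m+1) = a * (a ^ m - b ^ m) + b ^ m * (a - b) := by ring
    have h2 : |a * (a ^ m - b ^ m)| ≤ m * |a - b| := by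
      rw [abs_mul]
      calc |a| * |a ^ m - b ^ m| ≤ 1 * (m * |a - b|) := by
            apply mul_le_mul (by rwa [abs_of_nonneg ha0]) ih (abs_nonneg _) zero_le_one
        _ = m * |a - b| := by ring
    have h3 : |b ^ m * (a - b)| ≤ |a - b| := by
      rw [abs_mul]
      calc |b ^ m| * |a - b| ≤ 1 * |a - b| := by
            apply mul_le_mul_of_nonneg_right _ (abs_nonneg _)
            rw [abs_of_nonneg (pow_nonneg hb0 m)]
            exact pow_le_one₀ hb0 hb1
        _ = |a - b| := one_mul _
    calc |a ^ (m+1) - b ^ (m+1)| ≤ |a * (a ^ m - b ^ m)| + |b ^ m * (a - b)| := by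
          rw [h1]; exact abs_add_le _ _
      _ ≤ m * |a - b| + |a - b| := add_le_add h2 h3
      _ = (m + 1 : ℕ) * |a - b| := by push_cast; ring

/-- Pointwise derivative of `y ↦ (1 - t y)₊ ^ n` for `n ≥ 2`. -/
lemma wmc_hasDerivAt_maxpow (n : ℕ) (hn : 2 ≤ n) (t x : ℝ) :
    HasDerivAt (fun y : ℝ => max (1 - t * y) 0 ^ n)
      (-(n * t * max (1 - t * x) 0 ^ (n - 1))) x := by
  have hc : ContinuousAt (fun y : ℝ => 1 - t * y) x := by fun_prop
  rcases lt_trichotomy (1 - t * x) 0 with h | h | h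
  · have hev : ∀ᶠ y in 𝓝 x, max (1 - t * y) 0 ^ n = 0 := by
      filter_upwards [hc (Iio_mem_nhds h)] with y hy
      rw [max_eq_right (le_of_lt hy), zero_pow (by omega)]
    have : HasDerivAt (fun _ : ℝ => (0:ℝ)) 0 x := hasDerivAt_const x 0
    have h2 := this.congr_of_eventuallyEq (hev.mono fun y hy => hy)
    refine h2.congr_deriv ?_
    rw [max_eq_right h.le, zero_pow (by omega)]; ring
  · -- 1 - t*x = 0
    rw [hasDerivAt_iff_isLittleO]
    have hval : max (1 - t * x) 0 = 0 := by rw [max_eq_right h.le]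
    rw [show -(↑n * t * max (1 - t * x) 0 ^ (n - 1)) = 0 by
      rw [hval, zero_pow (by omega)]; ring]
    have key : ∀ y : ℝ, ‖max (1 - t * y) 0 ^ n‖ ≤ (|t| * |y - x|) ^ n := by
      intro y
      rw [Real.norm_eq_abs, abs_pow, abs_of_nonneg (le_max_right _ _)]
      apply pow_le_pow_left₀ (le_max_right _ _)
      have : 1 - t * y = t * (x - y) := by
        have : t * x = 1 := by linarith
        linarith [this]
      rw [this]
      refine max_le ?_ (by positivity)
      calc t * (x - y) ≤ |t * (x - y)| := le_abs_self _
        _ = |t| * |y - x| := by rw [abs_mul, abs_sub_comm]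
    rw [Asymptotics.isLittleO_iff]
    intro c hc'
    have htend : Tendsto (fun y : ℝ => |t| ^ n * |y - x| ^ (n - 1)) (𝓝 x) (𝓝 0) := by
      have habs : Tendsto (fun y : ℝ => |y - x|) (𝓝 x) (𝓝 0) := by
        have hca : ContinuousAt (fun y : ℝ => |y - x|) x := by fun_prop
        simpa using hca.tendsto
      have h2 : Tendsto (fun y : ℝ => |y - x| ^ (n-1)) (𝓝 x) (𝓝 0) := by
        simpa [zero_pow (show n - 1 ≠ 0 by omega)] using habs.pow (n-1)
      simpa using h2.const_mul (|t| ^ n)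
    filter_upwards [htend.eventually_le_const hc'] with y hy
    calc ‖max (1 - t * y) 0 ^ n - max (1 - t * x) 0 ^ n - (y - x) • (0:ℝ)‖
        = ‖max (1 - t * y) 0 ^ n‖ := by rw [hval, zero_pow (by omega)]; simp
      _ ≤ (|t| * |y - x|) ^ n := key y
      _ = |t| ^ n * |y - x| ^ (n-1) * |y - x| := by
          obtain ⟨m, rfl⟩ : ∃ m, n = m + 1 := ⟨n - 1, by omega⟩
          simp only [Nat.add_sub_cancel, mul_pow, pow_succ]; ring
      _ ≤ c * |y - x| := by
          apply mul_le_mul_of_nonneg_right _ (abs_nonneg _)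
          convert hy using 2 <;> omega
      _ = c * ‖y - x‖ := by rw [Real.norm_eq_abs]
  · have hev : ∀ᶠ y in 𝓝 x, (1 - t * y) ^ n = max (1 - t * y) 0 ^ n := by
      filter_upwards [hc (Ioi_mem_nhds h)] with y hy
      rw [max_eq_left (le_of_lt hy)]
    have hlin : HasDerivAt (fun y : ℝ => 1 - t * y) (-t) x := by
      simpa using ((hasDerivAt_id x).const_mul t).const_sub 1
    have h2 := hlin.pow n
    have h3 := h2.congr_of_eventuallyEq (hev.mono fun y hy => hy.symm)
    refine h3.congr_deriv ?_
    rw [max_eq_left h.le]; ring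


/-- Uniform bound for difference quotients of the integrand. -/
lemma wmc_slope_bound (k m : ℕ) {x y t : ℝ} (hx : 0 < x) (ht : 0 ≤ t)
    (hy1 : x / 2 < y) (hy2 : y < 2 * x) (hne : y ≠ x) :
    |(y - x)⁻¹ * (t ^ k * max (1 - t * y) 0 ^ m - t ^ k * max (1 - t * x) 0 ^ m)|
      ≤ m * (2 / x) ^ (k + 1) := by
  have hy0 : 0 < y := lt_trans (by positivity) hy1
  by_cases hT : t ≤ 2 / x
  · -- Lipschitz bound
    have hmax1 : ∀ w : ℝ, 0 < w → max (1 - t * w) 0 ≤ 1 := by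
      intro w hw
      apply max_le _ zero_le_one
      nlinarith
    have hmaxd : |max (1 - t * y) 0 ^ m - max (1 - t * x) 0 ^ m| ≤ m * (t * |y - x|) := by
      calc |max (1 - t * y) 0 ^ m - max (1 - t * x) 0 ^ m|
          ≤ m * |max (1 - t * y) 0 - max (1 - t * x) 0| :=
            wmc_abs_pow_sub_pow (le_max_right _ _) (hmax1 y hy0) (le_max_right _ _)
              (hmax1 x hx) m
        _ ≤ m * (t * |y - x|) := by
            apply mul_le_mul_of_nonneg_left _ (Nat.cast_nonneg m)
            calc |max (1 - t * y) 0 - max (1 - t * x) 0| ≤ |(1 - t * y) - (1 - t * x)| :=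
                  abs_max_sub_max_le_abs _ _ _
              _ = t * |y - x| := by
                  rw [show (1 - t * y) - (1 - t * x) = t * (x - y) by ring, abs_mul,
                    abs_of_nonneg ht, abs_sub_comm]
    rw [abs_mul, ← mul_sub, abs_mul, abs_pow, abs_of_nonneg ht]
    calc |(y - x)⁻¹| * (t ^ k * |max (1 - t * y) 0 ^ m - max (1 - t * x) 0 ^ m|)
        ≤ |(y - x)⁻¹| * (t ^ k * (m * (t * |y - x|))) := by
          apply mul_le_mul_of_nonneg_left _ (abs_nonneg _)
          exact mul_le_mul_of_nonneg_left hmaxd (by positivity)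
      _ = m * (t ^ (k+1)) * (|(y-x)⁻¹| * |y - x|) := by rw [pow_succ]; ring
      _ = m * t ^ (k+1) := by
          rw [abs_inv, inv_mul_cancel₀ (by simp [sub_ne_zero.mpr hne])]; ring
      _ ≤ m * (2 / x) ^ (k+1) := by
          apply mul_le_mul_of_nonneg_left _ (Nat.cast_nonneg m)
          exact pow_le_pow_left₀ ht hT _
  · -- both maxes vanish
    push_neg at hT
    have h1 : 1 - t * x < 0 := by
      have : 2 / x * x = 2 := by field_simp
      nlinarith
    have h2 : 1 - t * y < 0 := by
      have e : 2 / x * (x / 2) = 1 := by field_simp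
      have e1 := mul_lt_mul_of_pos_right hT hy0
      have e2 := mul_lt_mul_of_pos_left hy1 (show (0:ℝ) < 2 / x by positivity)
      nlinarith
    rw [max_eq_right h1.le, max_eq_right h2.le]
    simp only [sub_self, mul_zero, abs_zero]
    positivity


lemma wmc_ae_nonneg (γ : Measure ℝ) (hneg : γ (Iio 0) = 0) : ∀ᵐ t ∂γ, 0 ≤ t := by
  rw [ae_iff]
  convert hneg using 2
  ext t; simp [not_le, Iio]

lemma wmc_integrable (k m : ℕ) (hm : 1 ≤ m) (γ : Measure ℝ) [IsFiniteMeasure γ]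
    (hneg : γ (Iio 0) = 0) {x : ℝ} (hx : 0 < x) :
    Integrable (fun t => t ^ k * max (1 - t * x) 0 ^ m) γ := by
  apply Integrable.mono' (integrable_const ((1/x) ^ k))
  · exact (Continuous.aestronglyMeasurable (by fun_prop))
  · filter_upwards [wmc_ae_nonneg γ hneg] with t ht
    rw [Real.norm_eq_abs, abs_mul, abs_pow, abs_pow, abs_of_nonneg ht,
      abs_of_nonneg (le_max_right _ _)]
    by_cases h : t * x ≤ 1
    · have h1 : t ≤ 1 / x := by rw [le_div_iff₀ hx]; exact h
      have h2 : max (1 - t * x) 0 ≤ 1 := max_le (by nlinarith) zero_le_one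
      calc t ^ k * max (1 - t * x) 0 ^ m ≤ (1/x) ^ k * 1 := by
            apply mul_le_mul (pow_le_pow_left₀ ht h1 k)
              (pow_le_one₀ (le_max_right _ _) h2) (by positivity) (by positivity)
        _ = (1/x) ^ k := mul_one _
    · push_neg at h
      rw [max_eq_right (by linarith), zero_pow (by omega), mul_zero]
      positivity

lemma wmc_integrable_ind (n : ℕ) (γ : Measure ℝ) [IsFiniteMeasure γ]
    (hneg : γ (Iio 0) = 0) {x : ℝ} (hx : 0 < x) :
    Integrable (fun t => if t * x ≤ 1 then t ^ n else 0) γ := by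
  have heq : (fun t : ℝ => if t * x ≤ 1 then t ^ n else 0)
      = (Iic (1/x)).indicator (fun t => t ^ n) := by
    funext t
    by_cases h : t * x ≤ 1
    · rw [if_pos h, indicator_of_mem (by simp only [mem_Iic]; rw [le_div_iff₀ hx]; exact h)]
    · rw [if_neg h, indicator_of_notMem (by simp only [mem_Iic]; rw [le_div_iff₀ hx]; exact h)]
  apply Integrable.mono' (integrable_const ((1/x) ^ n))
  · rw [heq]
    exact ((measurable_id.pow_const n).indicator measurableSet_Iic).aestronglyMeasurable
  · filter_upwards [wmc_ae_nonneg γ hneg] with t ht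
    by_cases h : t * x ≤ 1
    · have h1 : t ≤ 1 / x := by rw [le_div_iff₀ hx]; exact h
      simp only [h, if_true, Real.norm_eq_abs, abs_pow, abs_of_nonneg ht]
      exact pow_le_pow_left₀ ht h1 n
    · simp only [h, if_false, norm_zero]; positivity


lemma wmc_hasDerivAt_int (m k : ℕ) (hm2 : 2 ≤ m) (γ : Measure ℝ) [IsFiniteMeasure γ]
    (hneg : γ (Iio 0) = 0) {x : ℝ} (hx : 0 < x) :
    HasDerivAt (fun y => ∫ t, t ^ k * max (1 - t * y) 0 ^ m ∂γ)
      (-(m : ℝ) * ∫ t, t ^ (k+1) * max (1 - t * x) 0 ^ (m - 1) ∂γ) x := by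
  rw [hasDerivAt_iff_tendsto_slope]
  have hmem : ∀ᶠ y in 𝓝[≠] x, y ∈ Ioo (x/2) (2*x) ∧ y ≠ x := by
    have h1 : Ioo (x/2) (2*x) ∈ 𝓝 x := Ioo_mem_nhds (by linarith) (by linarith)
    exact ((eventually_of_mem h1 fun y hy => hy).filter_mono nhdsWithin_le_nhds).and
      self_mem_nhdsWithin
  have main : Tendsto
      (fun y => ∫ t, (y - x)⁻¹ *
        (t ^ k * max (1 - t * y) 0 ^ m - t ^ k * max (1 - t * x) 0 ^ m) ∂γ)
      (𝓝[≠] x)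
      (𝓝 (∫ t, t ^ k * (-((m : ℝ) * t * max (1 - t * x) 0 ^ (m - 1))) ∂γ)) := by
    apply tendsto_integral_filter_of_dominated_convergence
      (bound := fun _ => (m : ℝ) * (2/x) ^ (k+1))
    · apply Eventually.of_forall
      intro y
      exact Continuous.aestronglyMeasurable (by fun_prop)
    · filter_upwards [hmem] with y ⟨hy, hyne⟩
      filter_upwards [wmc_ae_nonneg γ hneg] with t ht
      exact wmc_slope_bound k m hx ht hy.1 hy.2 hyne
    · exact integrable_const _
    · apply Eventually.of_forall
      intro t
      have hD := ((wmc_hasDerivAt_maxpow m hm2 t x).const_mul (t ^ k))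
      have := hasDerivAt_iff_tendsto_slope.mp hD
      apply this.congr
      intro y
      rw [slope_def_field, div_eq_inv_mul]
  have heq : ∀ᶠ y in 𝓝[≠] x,
      (∫ t, (y - x)⁻¹ *
        (t ^ k * max (1 - t * y) 0 ^ m - t ^ k * max (1 - t * x) 0 ^ m) ∂γ)
      = slope (fun y => ∫ t, t ^ k * max (1 - t * y) 0 ^ m ∂γ) x y := by
    filter_upwards [hmem] with y ⟨hy, hyne⟩
    have hy0 : 0 < y := lt_trans (by positivity) hy.1
    rw [slope_def_field, div_eq_inv_mul, ← integral_sub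
      (wmc_integrable k m (by omega) γ hneg hy0) (wmc_integrable k m (by omega) γ hneg hx),
      integral_const_mul]
  have hval : (∫ t, t ^ k * (-((m : ℝ) * t * max (1 - t * x) 0 ^ (m - 1))) ∂γ)
      = -(m : ℝ) * ∫ t, t ^ (k+1) * max (1 - t * x) 0 ^ (m - 1) ∂γ := by
    rw [← integral_const_mul]
    congr 1
    funext t
    rw [pow_succ]
    ring
  rw [← hval]
  exact main.congr' heq


lemma wmc_hasDerivWithinAt_int (k : ℕ) (γ : Measure ℝ) [IsFiniteMeasure γ]
    (hneg : γ (Iio 0) = 0) {x : ℝ} (hx : 0 < x) :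
    HasDerivWithinAt (fun y => ∫ t, t ^ k * max (1 - t * y) 0 ^ 1 ∂γ)
      (-(∫ t, (if t * x ≤ 1 then t ^ (k+1) else 0) ∂γ)) (Iio x) x := by
  rw [hasDerivWithinAt_iff_tendsto_slope, Set.diff_singleton_eq_self (by simp)]
  have hmem : ∀ᶠ y in 𝓝[Iio x] x, y ∈ Ioo (x/2) x := by
    have h1 : Ioi (x/2) ∈ 𝓝 x := Ioi_mem_nhds (by linarith)
    filter_upwards [mem_nhdsWithin_of_mem_nhds h1, self_mem_nhdsWithin] with y h2 h3
    exact ⟨h2, h3⟩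
  have main : Tendsto
      (fun y => ∫ t, (y - x)⁻¹ *
        (t ^ k * max (1 - t * y) 0 ^ 1 - t ^ k * max (1 - t * x) 0 ^ 1) ∂γ)
      (𝓝[Iio x] x)
      (𝓝 (∫ t, -(if t * x ≤ 1 then t ^ (k+1) else (0:ℝ)) ∂γ)) := by
    apply tendsto_integral_filter_of_dominated_convergence
      (bound := fun _ => (1:ℝ) * (2/x) ^ (k+1))
    · exact Eventually.of_forall fun y => Continuous.aestronglyMeasurable (by fun_prop)
    · filter_upwards [hmem] with y hy
      filter_upwards [wmc_ae_nonneg γ hneg] with t ht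
      have hb := wmc_slope_bound k 1 hx ht hy.1 (by nlinarith [hy.2]) (ne_of_lt hy.2)
      rw [Real.norm_eq_abs]
      simpa [abs_mul] using hb
    · exact integrable_const _
    · apply Eventually.of_forall
      intro t
      rcases lt_trichotomy (t * x) 1 with h | h | h
      · rw [if_pos h.le]
        apply Tendsto.congr' _ tendsto_const_nhds
        have hc : ContinuousAt (fun y : ℝ => 1 - t * y) x := by fun_prop
        have h2 : ∀ᶠ y in 𝓝[Iio x] x, 0 < 1 - t * y := by
          have := hc (Ioi_mem_nhds (show (0:ℝ) < 1 - t * x by linarith))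
          exact (eventually_iff.mpr this).filter_mono nhdsWithin_le_nhds
        filter_upwards [h2, self_mem_nhdsWithin] with y hy1 (hy2 : y ∈ Iio x)
        have hyx : y - x ≠ 0 := sub_ne_zero.mpr (ne_of_lt hy2)
        rw [max_eq_left hy1.le, max_eq_left (by linarith), pow_one, pow_one]
        field_simp
        ring
      · rw [if_pos h.le]
        apply Tendsto.congr' _ tendsto_const_nhds
        have ht0 : 0 < t := by nlinarith
        filter_upwards [self_mem_nhdsWithin] with y (hy2 : y ∈ Iio x)
        have hyx : y - x ≠ 0 := sub_ne_zero.mpr (ne_of_lt hy2)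
        have hpos : 0 < 1 - t * y := by
          have : t * y < t * x := by exact mul_lt_mul_of_pos_left hy2 ht0
          linarith
        rw [max_eq_left hpos.le, max_eq_right (by linarith), pow_one, pow_one]
        have hrw : (1:ℝ) - t * y = t * (x - y) := by
          have : t * x = 1 := h
          linarith [mul_sub t x y]
        rw [hrw]
        field_simp
        ring
      · rw [if_neg (not_le.mpr h)]
        apply Tendsto.congr' _ tendsto_const_nhds
        have hc : ContinuousAt (fun y : ℝ => 1 - t * y) x := by fun_prop
        have h2 : ∀ᶠ y in 𝓝[Iio x] x, 1 - t * y < 0 := by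
          have := hc (Iio_mem_nhds (show 1 - t * x < 0 by linarith))
          exact (eventually_iff.mpr this).filter_mono nhdsWithin_le_nhds
        filter_upwards [h2] with y hy1
        rw [max_eq_right hy1.le, max_eq_right (by linarith : 1 - t * x ≤ 0)]
        simp
  have heq : ∀ᶠ y in 𝓝[Iio x] x,
      (∫ t, (y - x)⁻¹ *
        (t ^ k * max (1 - t * y) 0 ^ 1 - t ^ k * max (1 - t * x) 0 ^ 1) ∂γ)
      = slope (fun y => ∫ t, t ^ k * max (1 - t * y) 0 ^ 1 ∂γ) x y := by
    filter_upwards [hmem] with y hy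
    have hy0 : 0 < y := lt_trans (by positivity) hy.1
    rw [slope_def_field, div_eq_inv_mul, ← integral_sub
      (wmc_integrable k 1 le_rfl γ hneg hy0) (wmc_integrable k 1 le_rfl γ hneg hx),
      integral_const_mul]
  rw [show -(∫ t, (if t * x ≤ 1 then t ^ (k+1) else (0:ℝ)) ∂γ)
      = ∫ t, -(if t * x ≤ 1 then t ^ (k+1) else (0:ℝ)) ∂γ by rw [integral_neg]]
  exact main.congr' heq


lemma wmc_sum_eq (d : ℕ) (hd : 3 ≤ d) (γ : Measure ℝ) [IsFiniteMeasure γ]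
    (hneg : γ (Iio 0) = 0) {x : ℝ} (hx : 0 < x) :
    (γ (Iic (1/x))).toReal =
      (∑ k ∈ Finset.range (d-1),
        ((d-1).choose k : ℝ) * (∫ t, t ^ k * max (1 - t * x) 0 ^ (d-1-k) ∂γ) * x ^ k)
      + (∫ t, (if t * x ≤ 1 then t ^ (d-1) else (0:ℝ)) ∂γ) * x ^ (d-1) := by
  have hterm : ∀ k ∈ Finset.range (d-1),
      ((d-1).choose k : ℝ) * (∫ t, t ^ k * max (1 - t * x) 0 ^ (d-1-k) ∂γ) * x ^ k
      = ∫ t, ((d-1).choose k : ℝ) * x ^ k * (t ^ k * max (1 - t * x) 0 ^ (d-1-k)) ∂γ := by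
    intro k _
    rw [integral_const_mul]
    ring
  rw [Finset.sum_congr rfl hterm]
  have hint : ∀ k ∈ Finset.range (d-1),
      Integrable (fun t => ((d-1).choose k : ℝ) * x ^ k *
        (t ^ k * max (1 - t * x) 0 ^ (d-1-k))) γ := by
    intro k hk
    rw [Finset.mem_range] at hk
    exact (wmc_integrable k (d-1-k) (by omega) γ hneg hx).const_mul _
  rw [← integral_finset_sum _ hint]
  have hlast : (∫ t, (if t * x ≤ 1 then t ^ (d-1) else (0:ℝ)) ∂γ) * x ^ (d-1)
      = ∫ t, x ^ (d-1) * (if t * x ≤ 1 then t ^ (d-1) else (0:ℝ)) ∂γ := by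
    rw [integral_const_mul]; ring
  rw [hlast, ← integral_add (integrable_finset_sum _ hint)
    ((wmc_integrable_ind (d-1) γ hneg hx).const_mul _)]
  have hcongr : ∀ᵐ t ∂γ,
      (∑ k ∈ Finset.range (d-1), ((d-1).choose k : ℝ) * x ^ k *
        (t ^ k * max (1 - t * x) 0 ^ (d-1-k)))
      + x ^ (d-1) * (if t * x ≤ 1 then t ^ (d-1) else (0:ℝ))
      = (Iic (1/x)).indicator (fun _ => (1:ℝ)) t := by
    filter_upwards [wmc_ae_nonneg γ hneg] with t ht
    by_cases h : t * x ≤ 1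
    · have hmax : max (1 - t * x) 0 = 1 - t * x := max_eq_left (by linarith)
      have hmem : t ∈ Iic (1/x) := by
        simp only [mem_Iic]; rw [le_div_iff₀ hx]; exact h
      rw [indicator_of_mem hmem, if_pos h, hmax]
      have key := add_pow (t * x) (1 - t * x) (d-1)
      rw [add_sub_cancel, one_pow] at key
      rw [show (d-1) + 1 = (d-1-1) + 1 + 1 by omega] at key
      rw [show Finset.range ((d-1-1) + 1 + 1) = Finset.range ((d-1) + 1) by congr 1; omega,
        Finset.sum_range_succ] at key
      rw [show (d-1) - (d-1) = 0 by omega, pow_zero, Nat.choose_self] at key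
      calc (∑ k ∈ Finset.range (d-1), ((d-1).choose k : ℝ) * x ^ k *
            (t ^ k * (1 - t * x) ^ (d-1-k)))
          + x ^ (d-1) * t ^ (d-1)
          = (∑ k ∈ Finset.range (d-1), (t*x) ^ k * (1 - t * x) ^ (d-1-k) *
              ((d-1).choose k : ℝ)) + (t*x) ^ (d-1) * 1 * ((1:ℕ) : ℝ) := by
            congr 1
            · exact Finset.sum_congr rfl fun k _ => by rw [mul_pow]; ring
            · push_cast; rw [mul_pow]; ring
        _ = 1 := key.symm
    · push_neg at h
      have hmax : max (1 - t * x) 0 = 0 := max_eq_right (by linarith)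
      have hmem : t ∉ Iic (1/x) := by
        simp only [mem_Iic, not_le]; rw [div_lt_iff₀ hx]; linarith
      rw [indicator_of_notMem hmem, if_neg (not_le.mpr h), hmax]
      rw [Finset.sum_eq_zero, mul_zero, add_zero]
      intro k hk
      rw [Finset.mem_range] at hk
      rw [zero_pow (by omega)]
      ring
  rw [integral_congr_ae hcongr, integral_indicator_const (1:ℝ) measurableSet_Iic,
    smul_eq_mul, mul_one, measureReal_def]


/-- If `ψ` is a `d`-monotone generator with Williamson measure `γ`,
then for every `z > 0`:
`γ([0,z]) = ∑_{k=0}^{d-2} ((-1)^k ψ^(k)(1/z)/k!) z^{-k}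
            + ((-1)^(d-1) D⁻ψ^(d-2)(1/z)/(d-1)!) z^{-(d-1)}`. -/
theorem williamson_measure_cdf
    (d : ℕ) (hd : 3 ≤ d) (ψ : ℝ → ℝ) (hψ : IsdMonotoneGenerator d ψ)
    (γ : Measure ℝ) (hprob : IsProbabilityMeasure γ)
    (hneg : γ (Iio 0) = 0) (h0 : γ {0} = 0)
    (hW : ∀ z : ℝ, 0 < z → ψ z = williamson d γ z) :
    ∀ z : ℝ, 0 < z →
      (γ (Icc 0 z)).toReal =
        (∑ k ∈ Finset.range (d - 1),
          (-1 : ℝ) ^ k * deriv^[k] ψ (1 / z) / (Nat.factorial k) * (1 / z) ^ k) +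
        (-1 : ℝ) ^ (d - 1) * leftDeriv (deriv^[d - 2] ψ) (1 / z) /
          (Nat.factorial (d - 1)) * (1 / z) ^ (d - 1) := by
  haveI := hprob
  -- Derivative formula for `deriv^[k] ψ` on `(0, ∞)`.
  have key : ∀ k : ℕ, k ≤ d - 2 → ∀ x : ℝ, 0 < x → deriv^[k] ψ x =
      ((-1:ℝ) ^ k * ((d-1).descFactorial k : ℝ)) *
        ∫ t, t ^ k * max (1 - t * x) 0 ^ (d-1-k) ∂γ := by
    intro k
    induction k with
    | zero =>
      intro _ x hx
      simp only [Function.iterate_zero, id_eq, pow_zero, Nat.descFactorial_zero,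
        Nat.cast_one, one_mul, Nat.sub_zero]
      rw [hW x hx, williamson]
    | succ k ih =>
      intro hk x hx
      have hk' : k ≤ d - 2 := by omega
      rw [Function.iterate_succ_apply']
      have hev : deriv^[k] ψ =ᶠ[𝓝 x] fun y => ((-1:ℝ) ^ k * ((d-1).descFactorial k : ℝ)) *
          ∫ t, t ^ k * max (1 - t * y) 0 ^ (d-1-k) ∂γ := by
        filter_upwards [isOpen_Ioi.mem_nhds (mem_Ioi.mpr hx)] with y hy
        exact ih hk' y hy
      rw [hev.deriv_eq]
      have hD := (wmc_hasDerivAt_int (d-1-k) k (by omega) γ hneg hx).const_mul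
        ((-1:ℝ) ^ k * ((d-1).descFactorial k : ℝ))
      rw [hD.deriv]
      rw [show d - 1 - k - 1 = d - 1 - (k+1) by omega, Nat.descFactorial_succ]
      generalize hm : d - 1 - k = m
      push_cast
      ring
  -- Left derivative formula.
  have hld : ∀ x : ℝ, 0 < x → leftDeriv (deriv^[d-2] ψ) x =
      ((-1:ℝ) ^ (d-2) * ((d-1).descFactorial (d-2) : ℝ)) *
        (-(∫ t, (if t * x ≤ 1 then t ^ (d-1) else (0:ℝ)) ∂γ)) := by
    intro x hx
    have hev : deriv^[d-2] ψ =ᶠ[𝓝 x] fun y => ((-1:ℝ) ^ (d-2) *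
        ((d-1).descFactorial (d-2) : ℝ)) * ∫ t, t ^ (d-2) * max (1 - t * y) 0 ^ 1 ∂γ := by
      filter_upwards [isOpen_Ioi.mem_nhds (mem_Ioi.mpr hx)] with y hy
      rw [key (d-2) le_rfl y hy, show d - 1 - (d-2) = 1 by omega]
    rw [leftDeriv, (hev.filter_mono nhdsWithin_le_nhds).derivWithin_eq hev.self_of_nhds]
    have hD := ((wmc_hasDerivWithinAt_int (d-2) γ hneg hx).const_mul
      ((-1:ℝ) ^ (d-2) * ((d-1).descFactorial (d-2) : ℝ)))
    rw [hD.derivWithin (uniqueDiffWithinAt_Iio x), show d - 2 + 1 = d - 1 by omega]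
  -- Assemble.
  intro z hz
  have h1z : 0 < 1/z := by positivity
  have hIcc : γ (Icc 0 z) = γ (Iic z) := by
    apply le_antisymm (measure_mono Icc_subset_Iic_self)
    calc γ (Iic z) ≤ γ (Iio 0 ∪ Icc 0 z) := by
          apply measure_mono
          intro t ht
          rcases lt_or_ge t 0 with h | h
          · exact Or.inl h
          · exact Or.inr ⟨h, ht⟩
      _ ≤ γ (Iio 0) + γ (Icc 0 z) := measure_union_le _ _
      _ = γ (Icc 0 z) := by rw [hneg, zero_add]
  have hsum := wmc_sum_eq d hd γ hneg h1z
  rw [one_div_one_div] at hsum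
  rw [hIcc, hsum]
  congr 1
  · apply Finset.sum_congr rfl
    intro k hk
    rw [Finset.mem_range] at hk
    rw [key k (by omega) (1/z) h1z, Nat.descFactorial_eq_factorial_mul_choose]
    generalize (∫ t, t ^ k * max (1 - t * (1/z)) 0 ^ (d-1-k) ∂γ) = I
    have hfac : (k.factorial : ℝ) ≠ 0 := by positivity
    have hsq : (-1:ℝ) ^ k * (-1:ℝ) ^ k = 1 := by rw [← mul_pow]; norm_num
    rw [div_mul_eq_mul_div, eq_div_iff hfac, Nat.cast_mul]
    linear_combination (-((k.factorial:ℝ) * ((d-1).choose k : ℝ) * I * (1/z) ^ k)) * hsq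
  · rw [hld (1/z) h1z, Nat.descFactorial_eq_factorial_mul_choose,
      show (d-1).choose (d-2) = d - 1 by
        rw [show d - 2 = (d-1) - 1 by omega, ← Nat.choose_symm (by omega), 
          show (d-1) - ((d-1)-1) = 1 by omega, Nat.choose_one_right]]
    generalize (∫ t, (if t * (1/z) ≤ 1 then t ^ (d-1) else (0:ℝ)) ∂γ) = J
    have hfs : (d-1).factorial = (d-1) * (d-2).factorial := by
      rw [show d-1 = (d-2)+1 by omega, Nat.factorial_succ]
    have hfac : ((d-1).factorial : ℝ) ≠ 0 := by positivity
    have hpow : (-1:ℝ) ^ (d-1) = (-1:ℝ) ^ (d-2) * (-1) := by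
      rw [show d-1 = (d-2)+1 by omega, pow_succ]
    have hsq : (-1:ℝ) ^ (d-2) * (-1:ℝ) ^ (d-2) = 1 := by rw [← mul_pow]; norm_num
    rw [hpow, div_mul_eq_mul_div, eq_div_iff hfac, Nat.cast_mul, hfs, Nat.cast_mul]
    linear_combination (-(((d-1:ℕ):ℝ) * ((d-2).factorial : ℝ) * J * (1/z) ^ (d-1))) * hsq
end
end

section
/- Let d ≥ 3, let ψ be a d-monotone Archimedean generator and let γ be its Williamson measure. Then for every z > 0: (−1)^{d−2} D^−ψ^{(d−2)}(z) = −(d−1)! · ∫_{(0,1/z]} t^{d−1} dγ(t); in particular (−1)^{d−2} D^−ψ^{(d−2)}(z) ≤ 0, i.e. (−1)^{d−1} D^−ψ^{(d−2)}(z) = (d−1)! · ∫_{(0,1/z]} t^{d−1} dγ(t) ≥ 0. -/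
open MeasureTheory Set Filter Topology
open scoped ENNReal NNReal Classical

noncomputable section

open Metric

lemma posBound (k m : ℕ) (hm : 1 ≤ m) {t x : ℝ} (ht : 0 ≤ t) (hx : 0 < x) :
    t ^ k * max (1 - t * x) 0 ^ m ≤ (1 / x) ^ k := by
  rcases le_or_gt (t * x) 1 with h | h
  · have h1 : t ≤ 1 / x := (le_div_iff₀ hx).mpr h
    have h2 : max (1 - t * x) 0 ≤ 1 :=
      max_le (by nlinarith [mul_nonneg ht hx.le]) zero_le_one
    calc t ^ k * max (1 - t * x) 0 ^ m
        ≤ (1/x)^k * 1 := by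
          apply mul_le_mul (pow_le_pow_left₀ ht h1 k)
            (pow_le_one₀ (le_max_right _ _) h2)
            (pow_nonneg (le_max_right _ _) m) (pow_nonneg (by positivity) k)
      _ = (1/x)^k := mul_one _
  · have hmax : max (1 - t * x) 0 = 0 := max_eq_right (by linarith)
    rw [hmax, zero_pow (by omega), mul_zero]
    positivity

lemma integrableAux (γ : Measure ℝ) [IsFiniteMeasure γ] (hae : ∀ᵐ t ∂γ, (0:ℝ) < t)
    (k m : ℕ) (hm : 1 ≤ m) {x : ℝ} (hx : 0 < x) :
    Integrable (fun t => t ^ k * max (1 - t * x) 0 ^ m) γ := by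
  apply Integrable.mono' (integrable_const ((1/x)^k))
    ((by continuity : Continuous fun t : ℝ => t ^ k * max (1 - t*x) 0 ^ m).aestronglyMeasurable)
  filter_upwards [hae] with t ht
  rw [Real.norm_eq_abs, abs_of_nonneg (mul_nonneg (pow_nonneg ht.le _) (pow_nonneg (le_max_right _ _) _))]
  exact posBound k m hm ht.le hx

lemma hasDerivAt_maxPow (m : ℕ) (hm : 2 ≤ m) (u : ℝ) :
    HasDerivAt (fun u : ℝ => max u 0 ^ m) ((m : ℝ) * max u 0 ^ (m - 1)) u := by
  rcases lt_trichotomy u 0 with h | rfl | h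
  · have hev : (fun u : ℝ => max u 0 ^ m) =ᶠ[𝓝 u] fun _ => (0:ℝ) := by
      filter_upwards [Iio_mem_nhds h] with v hv
      rw [max_eq_right (le_of_lt hv), zero_pow (by omega)]
    have h0 : max u 0 = 0 := max_eq_right h.le
    rw [h0, zero_pow (by omega), mul_zero]
    exact (hasDerivAt_const u (0:ℝ)).congr_of_eventuallyEq hev
  · have key : HasDerivAt (fun u : ℝ => max u 0 ^ m) 0 0 := by
      rw [hasDerivAt_iff_tendsto_slope]
      refine squeeze_zero_norm (a := fun h : ℝ => |h| ^ (m - 1)) ?_ ?_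
      · intro v
        rcases le_or_gt v 0 with hv | hv
        · simp [slope_fun_def_field, max_eq_right hv, zero_pow (by omega : m ≠ 0)]
        · simp only [slope_fun_def_field, Real.norm_eq_abs, sub_zero,
            max_eq_right (le_refl (0:ℝ)), zero_pow (by omega : m ≠ 0),
            max_eq_left hv.le]
          rw [abs_div, abs_pow, div_le_iff₀ (abs_pos.mpr hv.ne'), ← pow_succ,
            (by omega : m - 1 + 1 = m)]
      · have : Tendsto (fun h : ℝ => |h| ^ (m-1)) (𝓝 0) (𝓝 (|(0:ℝ)| ^ (m-1))) :=
          ((continuous_abs.pow (m-1)).tendsto 0)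
        simpa [zero_pow (by omega : m - 1 ≠ 0)] using this.mono_left nhdsWithin_le_nhds
    simpa [zero_pow (by omega : m - 1 ≠ 0)] using key
  · have hev : (fun u : ℝ => max u 0 ^ m) =ᶠ[𝓝 u] fun v => v ^ m := by
      filter_upwards [Ioi_mem_nhds h] with v hv
      rw [max_eq_left (le_of_lt hv)]
    rw [max_eq_left h.le]
    exact (hasDerivAt_pow m u).congr_of_eventuallyEq hev

lemma hasDerivAt_integralAux (γ : Measure ℝ) [IsProbabilityMeasure γ] (hae : ∀ᵐ t ∂γ, (0:ℝ) < t)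
    (k m : ℕ) (hm : 2 ≤ m) {z : ℝ} (hz : 0 < z) :
    HasDerivAt (fun x => ∫ t, t ^ k * max (1 - t * x) 0 ^ m ∂γ)
      (-((m : ℝ) * ∫ t, t ^ (k+1) * max (1 - t * z) 0 ^ (m-1) ∂γ)) z := by
  have key := hasDerivAt_integral_of_dominated_loc_of_deriv_le (μ := γ)
    (F := fun x t => t ^ k * max (1 - t * x) 0 ^ m)
    (F' := fun x t => t ^ k * ((m : ℝ) * max (1 - t * x) 0 ^ (m - 1) * -t))
    (x₀ := z) (bound := fun _ => (m : ℝ) * (2/z) ^ (k+1)) (s := ball z (z/2)) (ball_mem_nhds z (half_pos hz))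
    (Filter.Eventually.of_forall (fun x =>
      ((by continuity : Continuous fun t : ℝ => t ^ k * max (1 - t * x) 0 ^ m)).aestronglyMeasurable))
    (integrableAux γ hae k m (by omega) hz)
    ((by continuity : Continuous fun t : ℝ =>
      t ^ k * ((m : ℝ) * max (1 - t * z) 0 ^ (m - 1) * -t)).aestronglyMeasurable)
    ?_ (integrable_const _) ?_
  · have heq : ∫ t, t ^ k * ((m : ℝ) * max (1 - t * z) 0 ^ (m - 1) * -t) ∂γ
        = -((m : ℝ) * ∫ t, t ^ (k+1) * max (1 - t * z) 0 ^ (m-1) ∂γ) := by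
      rw [← MeasureTheory.integral_const_mul, ← integral_neg]
      apply integral_congr_ae (Filter.Eventually.of_forall fun t => ?_)
      rw [pow_succ]; ring
    rw [← heq]
    exact key.2
  · filter_upwards [hae] with t ht x hx
    have hx' : z/2 < x := by
      have := abs_lt.mp (mem_ball_iff_norm.mp hx)
      linarith [this.1]
    have hx0 : 0 < x := lt_trans (half_pos hz) hx'
    have hb : t ^ (k+1) * max (1 - t * x) 0 ^ (m-1) ≤ (1/x) ^ (k+1) :=
      posBound (k+1) (m-1) (by omega) ht.le hx0
    have h2 : (1/x : ℝ) ^ (k+1) ≤ (2/z) ^ (k+1) := by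
      apply pow_le_pow_left₀ (by positivity)
      rw [div_le_div_iff₀ hx0 hz]
      linarith
    have hnn : (0:ℝ) ≤ t ^ (k+1) * max (1 - t * x) 0 ^ (m-1) :=
      mul_nonneg (pow_nonneg ht.le _) (pow_nonneg (le_max_right _ _) _)
    rw [Real.norm_eq_abs]
    have : t ^ k * ((m : ℝ) * max (1 - t * x) 0 ^ (m - 1) * -t)
        = -((m:ℝ) * (t ^ (k+1) * max (1 - t * x) 0 ^ (m-1))) := by rw [pow_succ]; ring
    rw [this, abs_neg, abs_of_nonneg (by positivity)]
    exact mul_le_mul_of_nonneg_left (le_trans hb h2) (by positivity)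
  · apply Filter.Eventually.of_forall
    intro t x _
    have hinner : HasDerivAt (fun x : ℝ => 1 - t * x) (-t) x := by
      simpa using ((hasDerivAt_id x).const_mul t).const_sub 1
    have houter := hasDerivAt_maxPow m hm (1 - t * x)
    exact ((houter.comp x hinner)).const_mul (t ^ k)

lemma derivIter (d : ℕ) (hd : 3 ≤ d) (ψ : ℝ → ℝ) (γ : Measure ℝ) [IsProbabilityMeasure γ]
    (hae : ∀ᵐ t ∂γ, (0:ℝ) < t)
    (hW : ∀ z : ℝ, 0 < z → ψ z = williamson d γ z) :
    ∀ k, k ≤ d - 2 → ∀ z : ℝ, 0 < z →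
      deriv^[k] ψ z = (-1)^k * ((d-1).descFactorial k : ℝ) *
        ∫ t, t ^ k * max (1 - t * z) 0 ^ (d - 1 - k) ∂γ := by
  intro k
  induction k with
  | zero =>
    intro _ z hz
    simp only [Function.iterate_zero, id_eq, pow_zero, one_mul, Nat.descFactorial_zero,
      Nat.cast_one, Nat.sub_zero]
    rw [hW z hz, williamson]
  | succ k ih =>
    intro hk z hz
    have hk' : k ≤ d - 2 := by omega
    have hm : 2 ≤ d - 1 - k := by omega
    have hev : deriv^[k] ψ =ᶠ[𝓝 z] fun x => (-1)^k * ((d-1).descFactorial k : ℝ) *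
        ∫ t, t ^ k * max (1 - t * x) 0 ^ (d-1-k) ∂γ := by
      filter_upwards [Ioi_mem_nhds hz] with x hx
      exact ih hk' x hx
    rw [Function.iterate_succ_apply', hev.deriv_eq]
    have hder := (hasDerivAt_integralAux γ hae k (d-1-k) hm hz).const_mul
      ((-1:ℝ)^k * ((d-1).descFactorial k : ℝ))
    rw [hder.deriv]
    have he1 : (d-1-k) - 1 = d - 1 - (k+1) := by omega
    rw [he1]
    have hcoef : ((d-1).descFactorial (k+1) : ℝ) = ((d-1-k : ℕ) : ℝ) * ((d-1).descFactorial k : ℝ) := by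
      rw [Nat.descFactorial_succ]; push_cast; ring
    rw [hcoef, pow_succ]
    ring

set_option maxHeartbeats 1000000 in
lemma mainAux (d : ℕ) (hd : 3 ≤ d) (ψ : ℝ → ℝ)
    (γ : Measure ℝ) (hprob : IsProbabilityMeasure γ)
    (hneg : γ (Iio 0) = 0) (h0 : γ {0} = 0)
    (hW : ∀ z : ℝ, 0 < z → ψ z = williamson d γ z) :
    ∀ z : ℝ, 0 < z →
      (-1 : ℝ) ^ (d - 2) * derivWithin (deriv^[d - 2] ψ) (Iio z) z =
        -(Nat.factorial (d - 1)) * ∫ t in Ioc (0 : ℝ) (1 / z), t ^ (d - 1) ∂γ ∧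
      0 ≤ (-1 : ℝ) ^ (d - 1) * derivWithin (deriv^[d - 2] ψ) (Iio z) z := by
  haveI := hprob
  have hae : ∀ᵐ t ∂γ, (0:ℝ) < t := by
    rw [ae_iff]
    have hs : {t : ℝ | ¬ 0 < t} = Iic 0 := by ext t; simp [not_lt]
    have h1 : γ (Iic 0) = 0 := by
      rw [← Iio_union_right]
      exact le_antisymm (le_trans (measure_union_le _ _) (by simp [hneg, h0])) zero_le
    rw [hs]; exact h1
  intro z hz
  set c : ℝ := (-1)^(d-2) * ((d-1).descFactorial (d-2) : ℝ) with hc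
  set J : ℝ → ℝ := fun x => ∫ t, t ^ (d-2) * max (1 - t * x) 0 ^ 1 ∂γ with hJdef
  have hone : d - 1 - (d-2) = 1 := by omega
  have hIter : ∀ x : ℝ, 0 < x → deriv^[d-2] ψ x = c * J x := by
    intro x hx
    have h := derivIter d hd ψ γ hae hW (d-2) le_rfl x hx
    rw [hone] at h
    exact h
  set l := 𝓝[Iio z \ {z}] z with hl
  have hmem : Ioo (z/2) z ∈ l := by
    apply mem_nhdsWithin.mpr ⟨Ioi (z/2), isOpen_Ioi, by simpa using half_lt_self hz, ?_⟩
    rintro w ⟨hw1, hw2, _⟩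
    exact ⟨hw1, hw2⟩
  set f : ℝ → ℝ := fun t => -((Ioc (0:ℝ) (1/z)).indicator (fun t => t ^ (d-1)) t) with hf
  have hDCT : Tendsto (fun x => ∫ t, t^(d-2) * ((max (1 - t*x) 0 - max (1 - t*z) 0) / (x - z)) ∂γ)
      l (𝓝 (∫ t, f t ∂γ)) := by
    apply tendsto_integral_filter_of_dominated_convergence (bound := fun _ => (2/z)^(d-1))
    · exact Eventually.of_forall fun x => Continuous.aestronglyMeasurable (by continuity)
    · filter_upwards [hmem] with x hx
      filter_upwards [hae] with t ht
      have hx0 : 0 < x := lt_trans (half_pos hz) hx.1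
      rcases le_or_gt (t * x) 1 with h | h
      · have hd1 : |max (1 - t*x) 0 - max (1 - t*z) 0| ≤ |(1 - t*x) - (1 - t*z)| :=
          abs_max_sub_max_le_abs _ _ _
        have hd2 : |(1 - t*x) - (1 - t*z)| = t * |x - z| := by
          rw [(by ring : (1 - t*x) - (1 - t*z) = t * (z - x)), abs_mul, abs_of_pos ht, abs_sub_comm]
        have hxz : 0 < |x - z| := abs_pos.mpr (sub_ne_zero.mpr (ne_of_lt hx.2))
        have ht2z : t ≤ 2 / z := by
          rw [le_div_iff₀ hz]
          nlinarith [hx.1, hx.2]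
        rw [Real.norm_eq_abs, abs_mul, abs_div, abs_pow, abs_of_nonneg ht.le]
        calc t ^ (d-2) * (|max (1 - t*x) 0 - max (1 - t*z) 0| / |x - z|)
            ≤ t ^ (d-2) * ((t * |x - z|) / |x - z|) := by
              gcongr
              exact le_trans hd1 (le_of_eq hd2)
          _ = t ^ (d-2) * t := by
              rw [mul_div_assoc, div_self hxz.ne', mul_one]
          _ = t ^ (d-1) := by rw [← pow_succ, (by omega : d - 2 + 1 = d - 1)]
          _ ≤ (2/z) ^ (d-1) := pow_le_pow_left₀ ht.le ht2z _
      · have hm1 : max (1 - t*x) 0 = 0 := max_eq_right (by linarith)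
        have hm2 : max (1 - t*z) 0 = 0 := max_eq_right (by nlinarith [hx.2])
        rw [hm1, hm2]
        simp only [sub_zero, sub_self, zero_div, mul_zero, norm_zero]
        positivity
    · exact integrable_const _
    · filter_upwards [hae] with t ht
      rcases le_or_gt (t * z) 1 with h | h
      · have hfx : ∀ x ∈ Iio z \ {z},
            t^(d-2) * ((max (1 - t*x) 0 - max (1 - t*z) 0)/(x - z)) = f t := by
          intro x hx
          have hxz : x < z := hx.1
          have h1 : t * x < 1 := lt_of_lt_of_le (by nlinarith) h
          have hne : x - z ≠ 0 := sub_ne_zero.mpr (ne_of_lt hxz)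
          rw [max_eq_left (by linarith), max_eq_left (by linarith),
            (by field_simp; ring : ((1 - t*x) - (1 - t*z))/(x - z) = -t)]
          simp only [hf]
          rw [indicator_of_mem (Set.mem_Ioc.mpr ⟨ht, (le_div_iff₀ hz).mpr h⟩)]
          rw [(by omega : d - 1 = (d-2)+1), pow_succ]
          ring
        apply Tendsto.congr' ?_ tendsto_const_nhds
        filter_upwards [self_mem_nhdsWithin] with x hx using (hfx x hx).symm
      · have hmemx : Ioi (1/t) ∈ l := by
          apply nhdsWithin_le_nhds (Ioi_mem_nhds ?_)
          rw [div_lt_iff₀ ht]; linarith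
        have hnot : t ∉ Ioc (0:ℝ) (1/z) := by
          intro hmem'
          have := (le_div_iff₀ hz).mp hmem'.2
          linarith
        have hf0 : f t = 0 := by
          simp only [hf]
          rw [indicator_of_notMem hnot, neg_zero]
        rw [hf0]
        apply Tendsto.congr' ?_ tendsto_const_nhds
        filter_upwards [hmemx] with x hx
        have htx : 1 < t * x := by
          have := (div_lt_iff₀ ht).mp hx
          nlinarith
        rw [max_eq_right (by linarith), max_eq_right (by linarith)]
        simp
  have hslope : (fun x => ∫ t, t^(d-2) * ((max (1 - t*x) 0 - max (1 - t*z) 0)/(x - z)) ∂γ)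
      =ᶠ[l] slope J z := by
    filter_upwards [hmem] with x hx
    have hx0 : 0 < x := lt_trans (half_pos hz) hx.1
    have hne : x - z ≠ 0 := sub_ne_zero.mpr (ne_of_lt hx.2)
    have h1 : Integrable (fun t => t^(d-2) * max (1 - t*x) 0 ^ 1) γ :=
      integrableAux γ hae _ _ le_rfl hx0
    have h2 : Integrable (fun t => t^(d-2) * max (1 - t*z) 0 ^ 1) γ :=
      integrableAux γ hae _ _ le_rfl hz
    simp only [slope_fun_def_field, hJdef]
    rw [← integral_sub h1 h2, ← integral_div]
    apply integral_congr_ae (Eventually.of_forall fun t => ?_)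
    rw [pow_one, pow_one]
    ring
  have hJ : HasDerivWithinAt J (∫ t, f t ∂γ) (Iio z) z := by
    rw [hasDerivWithinAt_iff_tendsto_slope]
    exact hDCT.congr' hslope
  have hfint : ∫ t, f t ∂γ = -∫ t in Ioc (0:ℝ) (1/z), t^(d-1) ∂γ := by
    simp only [hf]
    rw [integral_neg, integral_indicator measurableSet_Ioc]
  have hGev : deriv^[d-2] ψ =ᶠ[𝓝[Iio z] z] (fun x => c * J x) := by
    filter_upwards [mem_nhdsWithin_of_mem_nhds (Ioi_mem_nhds hz)] with x hx
    exact hIter x hx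
  have hval : deriv^[d-2] ψ z = c * J z := hIter z hz
  have hld : derivWithin (deriv^[d-2] ψ) (Iio z) z = c * (∫ t, f t ∂γ) := by
    rw [hGev.derivWithin_eq hval]
    exact (hJ.const_mul c).derivWithin (uniqueDiffWithinAt_Iio z)
  have hdesc : ((d-1).descFactorial (d-2) : ℝ) = (Nat.factorial (d-1) : ℝ) := by
    congr 1
    rw [Nat.descFactorial_eq_div (by omega), (by omega : d - 1 - (d-2) = 1),
      Nat.factorial_one, Nat.div_one]
  have hsq : (-1:ℝ)^(d-2) * (-1)^(d-2) = 1 := by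
    rw [← pow_add]
    exact Even.neg_one_pow ⟨d-2, rfl⟩
  set S := ∫ t in Ioc (0:ℝ) (1/z), t^(d-1) ∂γ with hS
  have hSnn : 0 ≤ S := setIntegral_nonneg measurableSet_Ioc fun t ht => pow_nonneg ht.1.le _
  have hmain : (-1 : ℝ) ^ (d - 2) * derivWithin (deriv^[d - 2] ψ) (Iio z) z
      = -(Nat.factorial (d - 1)) * S := by
    rw [hld, hfint, hc, hdesc]
    calc (-1:ℝ)^(d-2) * ((-1)^(d-2) * (Nat.factorial (d-1) : ℝ) * (-S))
        = ((-1:ℝ)^(d-2) * (-1)^(d-2)) * ((Nat.factorial (d-1) : ℝ) * (-S)) := by ring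
      _ = -(Nat.factorial (d - 1)) * S := by rw [hsq]; ring
  refine ⟨hmain, ?_⟩
  have hstep : (-1:ℝ)^(d-1) = -(-1:ℝ)^(d-2) := by
    rw [(by omega : d - 1 = (d-2)+1), pow_succ]; ring
  rw [hstep]
  have hfin : -(-1:ℝ)^(d-2) * derivWithin (deriv^[d - 2] ψ) (Iio z) z
      = (Nat.factorial (d-1) : ℝ) * S := by
    rw [neg_mul, hmain]; ring
  rw [hfin]
  positivity

/-- If `ψ` is a `d`-monotone generator with Williamson measure `γ`,
then for every `z > 0`:
`(-1)^(d-2) D⁻ψ^(d-2)(z) = -(d-1)! ∫_{(0,1/z]} t^(d-1) dγ(t)`,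
and in particular `(-1)^(d-1) D⁻ψ^(d-2)(z) ≥ 0`. -/
theorem leftDeriv_eq_williamson_integral
    (d : ℕ) (hd : 3 ≤ d) (ψ : ℝ → ℝ) (hψ : IsdMonotoneGenerator d ψ)
    (γ : Measure ℝ) (hprob : IsProbabilityMeasure γ)
    (hneg : γ (Iio 0) = 0) (h0 : γ {0} = 0)
    (hW : ∀ z : ℝ, 0 < z → ψ z = williamson d γ z) :
    ∀ z : ℝ, 0 < z →
      (-1 : ℝ) ^ (d - 2) * leftDeriv (deriv^[d - 2] ψ) z =
        -(Nat.factorial (d - 1)) * ∫ t in Ioc (0 : ℝ) (1 / z), t ^ (d - 1) ∂γ ∧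
      0 ≤ (-1 : ℝ) ^ (d - 1) * leftDeriv (deriv^[d - 2] ψ) z := by
  intro z hz
  simp only [leftDeriv]
  exact mainAux d hd ψ γ hprob hneg h0 hW z hz
end
end
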